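/- arXiv:1302.0160 — 4 statements merged into one kernel-verified Lean document; each statement's English description precedes it below -/
import Mathlib

section
/- Let X be a Banach space with a monotone unconditional basis {e_i}_{i∈I}: there are biorthogonal functionals {e_i^*} ⊂ X*, for each finite σ ⊂ I the projection P_σ(x) = Σ_{i∈σ} e_i^*(x) e_i satisfies ‖P_σ(x)‖ ≤ ‖x‖ for all x, and for every x ∈ X the net (P_σ(x))_{σ finite} converges in norm to x. Suppose S_X = ⋃_{n=1}^∞ S_n in such a way that the numbers b_n = inf{ sup{‖P_σ(x)‖ : σ ⊂ I, card(σ) = n} : x ∈ S_n } are strictly positive and converge to 1. Then X admits an equivalent polyhedral norm supporting a boundary having property (*). -/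
open NormedSpace Filter Set Topology Pointwise

noncomputable section

/-- `g` is a weak-* limit point of `F`: every weak-* neighbourhood of `g`
contains infinitely many points of `F`. -/
def IsWeakStarLimitPoint {X : Type*} [NormedAddCommGroup X] [NormedSpace ℝ X]
    (F : Set (StrongDual ℝ X)) (g : StrongDual ℝ X) : Prop :=
  ∀ U : Set (WeakDual ℝ X), IsOpen U → StrongDual.toWeakDual g ∈ U →
    {f : StrongDual ℝ X | f ∈ F ∧ StrongDual.toWeakDual f ∈ U}.Infinite

/-- Property (*) of a set of functionals. -/
def PropertyStar {X : Type*} [NormedAddCommGroup X] [NormedSpace ℝ X]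
    (F : Set (StrongDual ℝ X)) : Prop :=
  ∀ g : StrongDual ℝ X, IsWeakStarLimitPoint F g →
    ∀ x : X, sSup ((fun f : StrongDual ℝ X => f x) '' F) = 1 → g x < 1

/-- `F` is a relative boundary. -/
def IsRelativeBoundary {X : Type*} [NormedAddCommGroup X] [NormedSpace ℝ X]
    (F : Set (StrongDual ℝ X)) : Prop :=
  ∀ x : X, sSup ((fun f : StrongDual ℝ X => f x) '' F) = 1 → ∃ f ∈ F, f x = 1

/-- `B` is a boundary for the norm `ν`: every element of `B` lies in the
`ν`-dual unit ball, and every `ν`-unit vector attains the value 1 at some member of `B`. -/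
def IsBoundaryFor {X : Type*} [NormedAddCommGroup X] [NormedSpace ℝ X]
    (ν : X → ℝ) (B : Set (StrongDual ℝ X)) : Prop :=
  (∀ f ∈ B, ∀ x : X, f x ≤ ν x) ∧ ∀ x : X, ν x = 1 → ∃ f ∈ B, f x = 1

/-- `ν` is an equivalent norm on `X`. -/
def IsEquivNorm {X : Type*} [NormedAddCommGroup X] [NormedSpace ℝ X]
    (ν : Seminorm ℝ X) : Prop :=
  ∃ c C : ℝ, 0 < c ∧ ∀ x : X, c * ‖x‖ ≤ ν x ∧ ν x ≤ C * ‖x‖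

/-- A norm (given as a function) is polyhedral if the unit ball of every
finite-dimensional subspace is a polytope, i.e. the convex hull of finitely many points. -/
def IsPolyhedralNorm {X : Type*} [NormedAddCommGroup X] [NormedSpace ℝ X]
    (ν : X → ℝ) : Prop :=
  ∀ Y : Subspace ℝ X, FiniteDimensional ℝ Y →
    ∃ T : Set X, T.Finite ∧ {x : X | x ∈ Y ∧ ν x ≤ 1} = convexHull ℝ T

/-- `E ⊆ X*` is weak-* locally relatively norm-compact. -/
def IsWeakStarLRC {X : Type*} [NormedAddCommGroup X] [NormedSpace ℝ X]
    (E : Set (StrongDual ℝ X)) : Prop :=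
  ∀ y ∈ E, ∃ U : Set (WeakDual ℝ X), IsOpen U ∧ StrongDual.toWeakDual y ∈ U ∧
    IsCompact (closure (E ∩ (fun f : StrongDual ℝ X => StrongDual.toWeakDual f) ⁻¹' U))

/-- `E` is a countable union of weak-* LRC sets. -/
def IsSigmaWeakStarLRC {X : Type*} [NormedAddCommGroup X] [NormedSpace ℝ X]
    (E : Set (StrongDual ℝ X)) : Prop :=
  ∃ E' : ℕ → Set (StrongDual ℝ X), E = ⋃ n, E' n ∧ ∀ n, IsWeakStarLRC (E' n)

/-- `E` is a countable union of weak-*-compact sets. -/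
def IsWeakStarSigmaCompact {X : Type*} [NormedAddCommGroup X] [NormedSpace ℝ X]
    (E : Set (StrongDual ℝ X)) : Prop :=
  ∃ C : ℕ → Set (WeakDual ℝ X), (∀ n, IsCompact (C n)) ∧
    (fun f : StrongDual ℝ X => StrongDual.toWeakDual f) '' E = ⋃ n, C n

section AuxPoly

variable {X : Type*} [NormedAddCommGroup X] [NormedSpace ℝ X]

lemma aux_compact (Y : Submodule ℝ X) (hfd : FiniteDimensional ℝ Y) {s : Set X}
    (h1 : s ⊆ (Y : Set X)) (h2 : IsClosed s) (h3 : Bornology.IsBounded s) : IsCompact s := by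
  haveI := hfd
  haveI : ProperSpace Y := FiniteDimensional.proper ℝ Y
  obtain ⟨R, hR⟩ := h3.subset_closedBall (0 : X)
  have hval : s = Subtype.val '' ((Subtype.val : Y → X) ⁻¹' s) := by
    rw [Set.image_preimage_eq_inter_range, Subtype.range_coe]
    exact (Set.inter_eq_left.2 h1).symm
  rw [hval]
  refine IsCompact.image ?_ continuous_subtype_val
  refine (isCompact_closedBall (0 : Y) R).of_isClosed_subset
    (h2.preimage continuous_subtype_val) ?_
  intro y hy
  have := hR hy
  simp only [Metric.mem_closedBall, dist_zero_right] at this ⊢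
  exact this

lemma aux_net (Y : Submodule ℝ X) (hfd : FiniteDimensional ℝ Y) {η : ℝ} (hη : 0 < η) :
    ∃ G : Finset (StrongDual ℝ X), (0 : StrongDual ℝ X) ∈ G ∧ (∀ g ∈ G, ‖g‖ ≤ 1) ∧ (∀ g ∈ G, -g ∈ G) ∧
      ∀ y ∈ Y, ∃ g ∈ G, (1 - η) * ‖y‖ ≤ g y := by
  classical
  haveI := hfd
  set A : Set X := Metric.sphere (0 : X) 1 ∩ (Y : Set X) with hA
  have hAcomp : IsCompact A :=
    aux_compact Y hfd Set.inter_subset_right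
      (Metric.isClosed_sphere.inter (Submodule.closed_of_finiteDimensional Y))
      (Metric.isBounded_sphere.subset Set.inter_subset_left)
  have hgex : ∀ z : X, ∃ g : StrongDual ℝ X, z ∈ A → ‖g‖ = 1 ∧ g z = ‖z‖ := by
    intro z
    by_cases hz : z ∈ A
    · have hz0 : z ≠ 0 := by
        intro h
        have := hz.1
        simp [h] at this
      obtain ⟨g, hg1, hg2⟩ := exists_dual_vector ℝ z (norm_ne_zero_iff.2 hz0)
      exact ⟨g, fun _ => ⟨hg1, by simpa using hg2⟩⟩
    · exact ⟨0, fun h => absurd h hz⟩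
  choose g hg using hgex
  have hcov : ∀ z ∈ A, {w : X | 1 - η / 2 < g z w} ∈ 𝓝 z := by
    intro z hz
    have hopen : IsOpen {w : X | 1 - η / 2 < g z w} :=
      isOpen_lt continuous_const (g z).continuous
    refine hopen.mem_nhds ?_
    have h2 := (hg z hz).2
    have hz1 : ‖z‖ = 1 := by
      have := hz.1; simpa [mem_sphere_iff_norm] using this
    simp only [Set.mem_setOf_eq, h2, hz1]
    linarith
  obtain ⟨t, htA, htcov⟩ := hAcomp.elim_nhds_subcover _ hcov
  set G0 : Finset (StrongDual ℝ X) := t.image g with hG0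
  refine ⟨insert 0 (G0 ∪ G0.image Neg.neg), Finset.mem_insert_self _ _, ?_, ?_, ?_⟩
  · intro h hh
    rcases Finset.mem_insert.1 hh with rfl | hh
    · simp
    rcases Finset.mem_union.1 hh with hh | hh
    · obtain ⟨z, hz, rfl⟩ := Finset.mem_image.1 hh
      exact le_of_eq (hg z (htA z hz)).1
    · obtain ⟨g', hg', rfl⟩ := Finset.mem_image.1 hh
      obtain ⟨z, hz, rfl⟩ := Finset.mem_image.1 hg'
      rw [norm_neg]
      exact le_of_eq (hg z (htA z hz)).1
  · intro h hh
    rcases Finset.mem_insert.1 hh with rfl | hh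
    · simp
    rcases Finset.mem_union.1 hh with hh | hh
    · exact Finset.mem_insert_of_mem (Finset.mem_union_right _
        (Finset.mem_image_of_mem _ hh))
    · obtain ⟨g', hg', rfl⟩ := Finset.mem_image.1 hh
      rw [neg_neg]
      exact Finset.mem_insert_of_mem (Finset.mem_union_left _ hg')
  · intro y hy
    by_cases hy0 : y = 0
    · exact ⟨0, Finset.mem_insert_self _ _, by simp [hy0]⟩
    · set z : X := ‖y‖⁻¹ • y with hzdef
      have hyn : (0:ℝ) < ‖y‖ := norm_pos_iff.2 hy0
      have hzA : z ∈ A := by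
        constructor
        · simp only [mem_sphere_iff_norm, sub_zero, hzdef, norm_smul, norm_inv, norm_norm]
          field_simp
        · exact Y.smul_mem _ hy
      obtain ⟨z₀, hz₀t, hzU⟩ := Set.mem_iUnion₂.1 (htcov hzA)
      have hgz : 1 - η / 2 < g z₀ z := hzU
      refine ⟨g z₀, Finset.mem_insert_of_mem (Finset.mem_union_left _
        (Finset.mem_image_of_mem _ hz₀t)), ?_⟩
      have hyz : y = ‖y‖ • z := by
        rw [hzdef, smul_smul, mul_inv_cancel₀ (ne_of_gt hyn), one_smul]
      have : g z₀ y = ‖y‖ * g z₀ z := by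
        conv_lhs => rw [hyz]
        simp
      rw [this]
      have h1 : (1 - η) * ‖y‖ ≤ (1 - η/2) * ‖y‖ := by nlinarith
      calc (1 - η) * ‖y‖ ≤ (1 - η/2) * ‖y‖ := h1
        _ ≤ ‖y‖ * g z₀ z := by nlinarith

lemma aux_polytope (Y : Submodule ℝ X) (hfd : FiniteDimensional ℝ Y) (F : Finset (StrongDual ℝ X))
    (hbdd : Bornology.IsBounded {y : X | y ∈ Y ∧ ∀ f ∈ F, f y ≤ 1}) :
    ∃ T : Set X, T.Finite ∧ {y : X | y ∈ Y ∧ ∀ f ∈ F, f y ≤ 1} = convexHull ℝ T := by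
  classical
  haveI := hfd
  set K : Set X := {y : X | y ∈ Y ∧ ∀ f ∈ F, f y ≤ 1} with hKdef
  have hKclosed : IsClosed K := by
    have : K = (Y : Set X) ∩ ⋂ f ∈ F, {y : X | f y ≤ 1} := by
      ext y; simp [hKdef, Set.mem_iInter]
    rw [this]
    refine (Submodule.closed_of_finiteDimensional Y).inter ?_
    exact isClosed_biInter fun f _ => isClosed_le f.continuous continuous_const
  have hKcomp : IsCompact K := aux_compact Y hfd (fun y hy => hy.1) hKclosed hbdd
  have hKconv : Convex ℝ K := by
    intro a ha b hb s t hs ht hst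
    refine ⟨Y.add_mem (Y.smul_mem _ ha.1) (Y.smul_mem _ hb.1), ?_⟩
    intro f hf
    have := ha.2 f hf; have := hb.2 f hf
    simp only [map_add, map_smul, smul_eq_mul]
    nlinarith
  -- extreme points are finite
  set Φ : X → Finset (StrongDual ℝ X) := fun x => F.filter (fun f => f x = 1) with hΦdef
  have hinj : Set.InjOn Φ (extremePoints ℝ K) := by
    intro x₁ hx₁ x₂ hx₂ hΦeq
    by_contra hne
    set v : X := x₂ - x₁ with hv
    have hvne : v ≠ 0 := sub_ne_zero.2 (Ne.symm hne)
    have hx₁K : x₁ ∈ K := hx₁.1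
    have hx₂K : x₂ ∈ K := hx₂.1
    have hfv : ∀ f ∈ F, f x₁ = 1 → f v = 0 := by
      intro f hf h1
      have hmem : f ∈ Φ x₁ := Finset.mem_filter.2 ⟨hf, h1⟩
      rw [hΦeq] at hmem
      have h2 : f x₂ = 1 := (Finset.mem_filter.1 hmem).2
      simp [hv, map_sub, h1, h2]
    -- choose t > 0
    set tf : StrongDual ℝ X → ℝ := fun f => if f x₁ < 1 then (1 - f x₁) / (|f v| + 1) else 1 with htf
    set T : Finset ℝ := insert 1 (F.image tf) with hT
    have hTne : T.Nonempty := ⟨1, Finset.mem_insert_self _ _⟩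
    set t₀ : ℝ := T.min' hTne with ht₀
    have ht₀pos : 0 < t₀ := by
      rw [ht₀, Finset.lt_min'_iff]
      intro y hy
      rcases Finset.mem_insert.1 hy with rfl | hy
      · norm_num
      obtain ⟨f, hf, rfl⟩ := Finset.mem_image.1 hy
      by_cases h : f x₁ < 1
      · simp only [htf, if_pos h]
        apply div_pos (by linarith) (by positivity)
      · simp [htf, if_neg h]
    have hmemK : ∀ s : ℝ, |s| ≤ t₀ → x₁ + s • v ∈ K := by
      intro s hs
      refine ⟨Y.add_mem hx₁K.1 (Y.smul_mem _ (Y.sub_mem hx₂K.1 hx₁K.1)), ?_⟩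
      intro f hf
      by_cases h : f x₁ < 1
      · have htle : t₀ ≤ (1 - f x₁) / (|f v| + 1) := by
          refine Finset.min'_le _ _ ?_
          refine Finset.mem_insert_of_mem (Finset.mem_image.2 ⟨f, hf, ?_⟩)
          simp [htf, if_pos h]
        have h1 : t₀ * (|f v| + 1) ≤ 1 - f x₁ := by
          rw [← div_mul_cancel₀ (1 - f x₁) (by positivity : |f v| + (1:ℝ) ≠ 0)]
          exact mul_le_mul_of_nonneg_right htle (by positivity)
        have h2 : s * f v ≤ |s| * |f v| := by
          calc s * f v ≤ |s * f v| := le_abs_self _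
            _ = |s| * |f v| := abs_mul _ _
        have h3 : |s| * |f v| ≤ t₀ * |f v| :=
          mul_le_mul_of_nonneg_right hs (abs_nonneg _)
        simp only [map_add, map_smul, smul_eq_mul]
        nlinarith [abs_nonneg (f v)]
      · push_neg at h
        have h1 : f x₁ = 1 := le_antisymm (hx₁K.2 f hf) h
        have h2 : f v = 0 := hfv f hf h1
        simp [map_add, map_smul, h1, h2]
    have haK : x₁ - t₀ • v ∈ K := by
      have := hmemK (-t₀) (by rw [abs_neg, abs_of_pos ht₀pos])
      simpa [neg_smul, sub_eq_add_neg] using this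
    have hbK : x₁ + t₀ • v ∈ K := hmemK t₀ (by rw [abs_of_pos ht₀pos])
    have hseg : x₁ ∈ openSegment ℝ (x₁ - t₀ • v) (x₁ + t₀ • v) := by
      refine ⟨1/2, 1/2, by norm_num, by norm_num, by norm_num, ?_⟩
      module
    have hx₁' := mem_extremePoints.1 hx₁
    have := (hx₁'.2 _ haK _ hbK hseg).1
    have : t₀ • v = 0 := by
      have h := congrArg (fun w => x₁ - w) this
      simpa using h
    rcases smul_eq_zero.1 this with h | h
    · exact absurd h (ne_of_gt ht₀pos)
    · exact hvne h
  have hext_fin : (extremePoints ℝ K).Finite := by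
    have himfin : (Φ '' extremePoints ℝ K).Finite := (F.powerset : Finset (Finset (StrongDual ℝ X))).finite_toSet.subset (by
      rintro s ⟨x, _, rfl⟩
      simp only [Finset.coe_powerset, Set.mem_preimage, Set.mem_powerset_iff, Finset.mem_coe,
        Finset.coe_subset]
      exact Finset.filter_subset _ _)
    exact Set.Finite.of_finite_image himfin hinj
  refine ⟨extremePoints ℝ K, hext_fin, ?_⟩
  have hKM := closure_convexHull_extremePoints hKcomp hKconv
  have hcl : IsClosed (convexHull ℝ (extremePoints ℝ K)) :=
    (hext_fin.isCompact_convexHull (𝕜 := ℝ)).isClosed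
  calc K = closure ((convexHull ℝ) (extremePoints ℝ K)) := hKM.symm
    _ = convexHull ℝ (extremePoints ℝ K) := hcl.closure_eq


lemma seq_choice (b : ℕ → ℝ) (hbpos : ∀ n, 1 ≤ n → 0 < b n) (hble : ∀ n, 1 ≤ n → b n ≤ 1)
    (hblim : Tendsto b atTop (𝓝 1)) :
    ∃ ε γ η : ℕ → ℝ, (∀ k m, k < m → ε m < ε k) ∧ Tendsto ε atTop (𝓝 0) ∧
      (∀ k, 0 < ε k) ∧ (∀ k, 0 < γ k) ∧ (∀ k, 0 < η k) ∧ (∀ k, η k < 1) ∧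
      (∀ k, 1 + ε (k+1) < (1 - η k) * (1 + ε k)) ∧
      (∀ n, 1 ≤ n → 1 + γ n / 2 ≤ (1 - η n) * (1 + ε n) * b n) := by
  classical
  -- uniform positive lower bound for b on [1, ∞)
  obtain ⟨N, hN⟩ : ∃ N : ℕ, ∀ n ≥ N, 1/2 ≤ b n := by
    have := hblim.eventually (eventually_ge_nhds (by norm_num : (1:ℝ)/2 < 1))
    exact eventually_atTop.1 this
  set Tset : Finset ℝ := insert (1/2 : ℝ) ((Finset.Icc 1 N).image b) with hTset
  have hTne : Tset.Nonempty := ⟨1/2, Finset.mem_insert_self _ _⟩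
  set b₀ : ℝ := Tset.min' hTne with hb₀
  have hb₀pos : 0 < b₀ := by
    rw [hb₀, Finset.lt_min'_iff]
    intro y hy
    rcases Finset.mem_insert.1 hy with rfl | hy
    · norm_num
    obtain ⟨n, hn, rfl⟩ := Finset.mem_image.1 hy
    exact hbpos n (Finset.mem_Icc.1 hn).1
  have hb₀le : ∀ n, 1 ≤ n → b₀ ≤ b n := by
    intro n hn
    by_cases h : n ≤ N
    · exact Finset.min'_le _ _ (Finset.mem_insert_of_mem
        (Finset.mem_image_of_mem _ (Finset.mem_Icc.2 ⟨hn, h⟩)))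
    · push_neg at h
      calc b₀ ≤ 1/2 := Finset.min'_le _ _ (Finset.mem_insert_self _ _)
        _ ≤ b n := hN n (le_of_lt h)
  -- tail sup of (1/b m - 1)
  set A : ℕ → Set ℝ := fun n => (fun m => 1 / b m - 1) '' {m : ℕ | max n 1 ≤ m} with hA
  have hAne : ∀ n, (A n).Nonempty := fun n =>
    ⟨_, ⟨max n 1, (by simp : max n 1 ∈ {m : ℕ | max n 1 ≤ m}), rfl⟩⟩
  have hAbdd : ∀ n, BddAbove (A n) := by
    intro n
    refine ⟨1/b₀ - 1, ?_⟩
    rintro y ⟨m, hm, rfl⟩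
    have hm1 : 1 ≤ m := le_trans (le_max_right n 1) hm
    have := hb₀le m hm1
    have hbm := hbpos m hm1
    have : 1 / b m ≤ 1 / b₀ := one_div_le_one_div_of_le hb₀pos this
    linarith
  set d : ℕ → ℝ := fun n => sSup (A n) with hd
  have hd0 : ∀ n, 0 ≤ d n := by
    intro n
    have hmem : (1 / b (max n 1) - 1) ∈ A n :=
      ⟨max n 1, (by simp : max n 1 ∈ {m : ℕ | max n 1 ≤ m}), rfl⟩
    have h1 : 1 ≤ max n 1 := le_max_right n 1
    have h2 : 0 ≤ 1 / b (max n 1) - 1 := by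
      have := hble _ h1; have := hbpos _ h1
      have : 1 ≤ 1 / b (max n 1) := by
        rw [le_one_div (by norm_num) ‹0 < b (max n 1)›]; simpa
      linarith
    exact le_trans h2 (le_csSup (hAbdd n) hmem)
  have hdanti : ∀ n n', n ≤ n' → d n' ≤ d n := by
    intro n n' hnn
    refine csSup_le_csSup (hAbdd n) (hAne n') ?_
    rintro y ⟨m, hm, rfl⟩
    exact ⟨m, le_trans (max_le_max hnn le_rfl) hm, rfl⟩
  have hdlim : Tendsto d atTop (𝓝 0) := by
    rw [Metric.tendsto_atTop]
    intro δ hδ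
    have h1 : (1:ℝ)/(1+δ/2) < 1 := by
      rw [div_lt_one (by linarith)]; linarith
    obtain ⟨N₂, hN₂⟩ := eventually_atTop.1 (hblim.eventually (eventually_ge_nhds h1))
    refine ⟨N₂, fun n hn => ?_⟩
    have hdn : d n ≤ δ/2 := by
      refine csSup_le (hAne n) ?_
      rintro y ⟨m, hm, rfl⟩
      have hmN : N₂ ≤ m := le_trans hn (le_trans (le_max_left n 1) hm)
      have h2 := hN₂ m hmN
      have h3 : 0 < b m := hbpos m (le_trans (le_max_right n 1) hm)
      have h4 : 1 / b m ≤ 1 + δ/2 := by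
        rw [div_le_iff₀ h3]
        have : (1:ℝ)/(1+δ/2) * (1+δ/2) ≤ b m * (1+δ/2) :=
          mul_le_mul_of_nonneg_right h2 (by linarith)
        rw [div_mul_cancel₀ _ (by linarith : (1:ℝ)+δ/2 ≠ 0)] at this
        linarith
      linarith
    rw [Real.dist_eq, sub_zero, abs_of_nonneg (hd0 n)]
    linarith
  -- define ε
  set ε : ℕ → ℝ := fun k => d k + 1/(k+1) with hε
  have hεpos : ∀ k, 0 < ε k := fun k => by
    have := hd0 k; have : (0:ℝ) < 1/(k+1) := by positivity
    simp only [hε]; linarith [hd0 k]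
  have hεanti : ∀ k m, k < m → ε m < ε k := by
    intro k m hkm
    have h1 : d m ≤ d k := hdanti k m (le_of_lt hkm)
    have h2 : (1:ℝ)/(m+1) < 1/(k+1) := by
      apply one_div_lt_one_div_of_lt (by positivity)
      have : (k:ℝ) < m := Nat.cast_lt.2 hkm
      linarith
    simp only [hε]; linarith
  have hεlim : Tendsto ε atTop (𝓝 0) := by
    have h2 : Tendsto (fun k : ℕ => 1/((k:ℝ)+1)) atTop (𝓝 0) :=
      tendsto_one_div_add_atTop_nhds_zero_nat
    rw [hε]
    simpa using hdlim.add h2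
  set γ : ℕ → ℝ := fun n => b₀ / (n+1) with hγ
  have hγpos : ∀ n, 0 < γ n := fun n => by positivity
  have hγkey : ∀ n, 1 ≤ n → 1 + γ n ≤ (1 + ε n) * b n := by
    intro n hn
    have hdge : 1 / b n - 1 ≤ d n := by
      refine le_csSup (hAbdd n) ⟨n, ?_, rfl⟩
      simp only [Set.mem_setOf_eq]
      exact max_le le_rfl hn
    have hbn := hbpos n hn
    have h1 : (1 / b n - 1 + 1/(n+1)) * b n ≤ ε n * b n := by
      apply mul_le_mul_of_nonneg_right _ (le_of_lt hbn)
      simp only [hε]; linarith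
    have h2 : (1 / b n - 1 + 1/(n+1)) * b n = 1 - b n + b n/(n+1) := by
      field_simp
    have h3 : b₀/(n+1) ≤ b n/(n+1) := by
      gcongr
      exact hb₀le n hn
    have h4 : ε n * b n ≥ 1 - b n + b n/(n+1) := by rw [← h2]; linarith
    simp only [hγ]
    nlinarith
  -- define η
  set η : ℕ → ℝ := fun k => min ((ε k - ε (k+1)) / (2*(1+ε k))) ((γ k/2)/(1+γ k)) with hη
  have hgap2 : ∀ k, 0 < ε k - ε (k+1) := fun k => by
    have := hεanti k (k+1) (Nat.lt_succ_self k); linarith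
  have hηpos : ∀ k, 0 < η k := by
    intro k
    refine lt_min (div_pos (hgap2 k) (by have := hεpos k; linarith))
      (div_pos (by have := hγpos k; linarith) (by have := hγpos k; linarith))
  have hηlt1 : ∀ k, η k < 1 := by
    intro k
    apply lt_of_le_of_lt (min_le_left _ _)
    rw [div_lt_one (by have := hεpos k; linarith : (0:ℝ) < 2*(1+ε k))]
    have := hεpos (k+1); have := hεpos k
    linarith
  have h2key : ∀ k, 1 + ε (k+1) < (1 - η k) * (1 + ε k) := by
    intro k
    set u : ℝ := (ε k - ε (k+1)) / (2*(1+ε k)) with hu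
    have hεk := hεpos k
    have hεk1 := hεpos (k+1)
    have hne : (2*(1+ε k)) ≠ 0 := by linarith
    have hueq : u * (2*(1+ε k)) = ε k - ε (k+1) := div_mul_cancel₀ _ hne
    have hηu : η k ≤ u := min_le_left _ _
    have hgap := hgap2 k
    nlinarith
  have h3key : ∀ n, 1 ≤ n → 1 + γ n / 2 ≤ (1 - η n) * (1 + ε n) * b n := by
    intro n hn
    have hγn := hγpos n
    have hηn := hηpos n
    have hηn1 := hηlt1 n
    have hw : (1+γ n) ≠ 0 := by linarith
    have hηle : η n ≤ (γ n/2)/(1+γ n) := min_le_right _ _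
    have h5 : η n * (1+γ n) ≤ γ n/2 := by
      calc η n * (1+γ n) ≤ ((γ n/2)/(1+γ n)) * (1+γ n) :=
            mul_le_mul_of_nonneg_right hηle (by linarith)
        _ = γ n/2 := div_mul_cancel₀ _ hw
    have h6 := hγkey n hn
    have h7 : (1 - η n) * (1 + γ n) ≤ (1 - η n) * ((1 + ε n) * b n) :=
      mul_le_mul_of_nonneg_left h6 (by linarith)
    clear_value η γ ε d b₀
    nlinarith
  exact ⟨ε, γ, η, hεanti, hεlim, hεpos, hγpos, hηpos, hηlt1, h2key, h3key⟩



variable {X I : Type*} [NormedAddCommGroup X] [NormedSpace ℝ X] [CompleteSpace X]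

set_option maxHeartbeats 3000000 in
open Classical in
theorem main_thm (e : I → X) (es : I → StrongDual ℝ X)
    (hbi : ∀ i j, es i (e j) = if i = j then 1 else 0)
    (hmonot : ∀ (σ : Finset I) (z : X), ‖∑ i ∈ σ, es i z • e i‖ ≤ ‖z‖)
    (hconv : ∀ z : X,
      Tendsto (fun σ : Finset I => ∑ i ∈ σ, es i z • e i) atTop (𝓝 z))
    (S : ℕ → Set X) (b : ℕ → ℝ)
    (hS : ∀ n, S n ⊆ Metric.sphere (0 : X) 1)
    (hcover : Metric.sphere (0 : X) 1 = ⋃ (n : ℕ) (_ : 1 ≤ n), S n)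
    (hb : ∀ n, 1 ≤ n → b n = sInf ((fun z : X =>
      sSup ((fun σ : Finset I => ‖∑ i ∈ σ, es i z • e i‖) ''
        {σ : Finset I | σ.card = n})) '' S n))
    (hbpos : ∀ n, 1 ≤ n → 0 < b n)
    (hblim : Tendsto b atTop (𝓝 1)) :
    ∃ ν : Seminorm ℝ X, (∃ c C : ℝ, 0 < c ∧ ∀ x : X, c * ‖x‖ ≤ ν x ∧ ν x ≤ C * ‖x‖) ∧
      (∀ Y : Subspace ℝ X, FiniteDimensional ℝ Y →
        ∃ T : Set X, T.Finite ∧ {x : X | x ∈ Y ∧ ν x ≤ 1} = convexHull ℝ T) ∧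
      ∃ D : Set (StrongDual ℝ X),
        ((∀ f ∈ D, ∀ x : X, f x ≤ ν x) ∧ ∀ x : X, ν x = 1 → ∃ f ∈ D, f x = 1) ∧
        (∀ g : StrongDual ℝ X,
          (∀ U : Set (WeakDual ℝ X), IsOpen U → StrongDual.toWeakDual g ∈ U →
            {f : StrongDual ℝ X | f ∈ D ∧ StrongDual.toWeakDual f ∈ U}.Infinite) →
          ∀ x : X, sSup ((fun f : StrongDual ℝ X => f x) '' D) = 1 → g x < 1) := by
  classical
  -- the projections
  set P : Finset I → X →L[ℝ] X := fun σ => ∑ i ∈ σ, (es i).smulRight (e i) with hP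
  have hPapply : ∀ (σ : Finset I) (x : X), P σ x = ∑ i ∈ σ, es i x • e i := by
    intro σ x
    simp [hP, ContinuousLinearMap.sum_apply]
  have hPnorm : ∀ (σ : Finset I) (x : X), ‖P σ x‖ ≤ ‖x‖ := by
    intro σ x; rw [hPapply]; exact hmonot σ x
  have hPopnorm : ∀ σ : Finset I, ‖P σ‖ ≤ 1 := fun σ =>
    ContinuousLinearMap.opNorm_le_bound _ zero_le_one (fun x => by
      rw [one_mul]; exact hPnorm σ x)
  -- S n is nonempty and b n ≤ 1
  have hSne : ∀ n, 1 ≤ n → (S n).Nonempty := by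
    intro n hn
    rw [Set.nonempty_iff_ne_empty]
    intro h
    have := hb n hn
    rw [h] at this
    simp [Real.sInf_empty] at this
    exact absurd (this ▸ hbpos n hn) (lt_irrefl 0)
  have hble : ∀ n, 1 ≤ n → b n ≤ 1 := by
    intro n hn
    obtain ⟨z, hz⟩ := hSne n hn
    have hz1 : ‖z‖ = 1 := by
      have := hS n hz; rwa [mem_sphere_iff_norm, sub_zero] at this
    have hlb : ∀ v ∈ (fun z : X =>
        sSup ((fun σ : Finset I => ‖∑ i ∈ σ, es i z • e i‖) ''
          {σ : Finset I | σ.card = n})) '' S n, 0 ≤ v := by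
      rintro v ⟨w, hw, rfl⟩
      exact Real.sSup_nonneg (by rintro _ ⟨σ, hσ, rfl⟩; exact norm_nonneg _)
    have h1 : b n ≤ sSup ((fun σ : Finset I => ‖∑ i ∈ σ, es i z • e i‖) ''
        {σ : Finset I | σ.card = n}) := by
      rw [hb n hn]
      exact csInf_le ⟨0, hlb⟩ (Set.mem_image_of_mem _ hz)
    refine le_trans h1 (Real.sSup_le ?_ zero_le_one)
    rintro _ ⟨σ, hσ, rfl⟩
    rw [← hz1]; exact hmonot σ z
  obtain ⟨ε, γ, η, hεanti, hεlim, hεpos, hγpos, hηpos, hηlt1, h2key, h3key⟩ :=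
    seq_choice b hbpos hble hblim
  have hεle : ∀ k m, k ≤ m → ε m ≤ ε k := by
    intro k m hkm
    rcases eq_or_lt_of_le hkm with rfl | h
    · exact le_rfl
    · exact le_of_lt (hεanti k m h)
  have hgood : ∀ k, 1 < (1 - η k) * (1 + ε k) := fun k =>
    lt_trans (by linarith [hεpos (k+1)]) (h2key k)
  have hηε : ∀ k, 0 < (1 - η k) * (1 + ε k) := fun k => lt_trans one_pos (hgood k)
  -- I is nonempty
  have hI : Nonempty I := by
    by_contra h
    rw [not_nonempty_iff] at h
    obtain ⟨z, hz⟩ := hSne 1 le_rfl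
    have hz1 : ‖z‖ = 1 := by
      have := hS 1 hz; rwa [mem_sphere_iff_norm, sub_zero] at this
    have h0 : (fun σ : Finset I => ∑ i ∈ σ, es i z • e i) = fun _ => (0 : X) := by
      funext σ
      have : σ = ∅ := Finset.eq_empty_of_isEmpty σ
      simp [this]
    have := hconv z
    rw [h0, tendsto_const_nhds_iff] at this
    rw [← this] at hz1
    simp at hz1
  -- finite nets for each σ
  have hnets : ∀ σ : Finset I, ∃ G : Finset (StrongDual ℝ X), (0 : StrongDual ℝ X) ∈ G ∧
      (∀ g ∈ G, ‖g‖ ≤ 1) ∧ (∀ g ∈ G, -g ∈ G) ∧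
      ∀ y ∈ Submodule.span ℝ (e '' ↑σ), ∃ g ∈ G, (1 - η σ.card) * ‖y‖ ≤ g y :=
    fun σ => aux_net _ (FiniteDimensional.span_of_finite ℝ (σ.finite_toSet.image e))
      (hηpos σ.card)
  choose G hG0 hGle hGneg hGnorm using hnets
  have hPmem : ∀ (σ : Finset I) (x : X), P σ x ∈ Submodule.span ℝ (e '' ↑σ) := by
    intro σ x
    rw [hPapply]
    exact Submodule.sum_mem _ (fun i hi =>
      Submodule.smul_mem _ _ (Submodule.subset_span ⟨i, hi, rfl⟩))
  -- the boundary set D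
  set D : Set (StrongDual ℝ X) := ⋃ (σ : Finset I) (_ : σ.Nonempty),
    (fun g : StrongDual ℝ X => ((1 + ε σ.card) : ℝ) • (g.comp (P σ))) '' (G σ : Set (StrongDual ℝ X))
    with hD
  have hmemD : ∀ (σ : Finset I), σ.Nonempty → ∀ g ∈ G σ,
      ((1 + ε σ.card) : ℝ) • (g.comp (P σ)) ∈ D := by
    intro σ hσ g hg
    rw [hD]
    exact Set.mem_iUnion₂.2 ⟨σ, hσ, Set.mem_image_of_mem _ hg⟩
  have hDelim : ∀ f ∈ D, ∃ σ : Finset I, σ.Nonempty ∧ ∃ g ∈ G σ,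
      f = ((1 + ε σ.card) : ℝ) • (g.comp (P σ)) := by
    intro f hf
    rw [hD] at hf
    obtain ⟨σ, hσ, g, hg, rfl⟩ := Set.mem_iUnion₂.1 hf
    exact ⟨σ, hσ, g, hg, rfl⟩
  have h0D : (0 : StrongDual ℝ X) ∈ D := by
    have harb : Nonempty I := hI
    set i0 : I := Classical.arbitrary I
    have := hmemD {i0} ⟨i0, Finset.mem_singleton_self i0⟩ 0 (hG0 {i0})
    simpa using this
  have hfnorm : ∀ f ∈ D, ‖f‖ ≤ 1 + ε 1 := by
    intro f hf
    obtain ⟨σ, hσ, g, hg, rfl⟩ := hDelim f hf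
    have hc1 : 1 ≤ σ.card := Finset.card_pos.2 hσ
    have h1 : ‖g.comp (P σ)‖ ≤ 1 := by
      refine le_trans (ContinuousLinearMap.opNorm_comp_le _ _) ?_
      have := hGle σ g hg
      have := hPopnorm σ
      nlinarith [norm_nonneg (P σ), norm_nonneg g]
    rw [norm_smul, Real.norm_eq_abs, abs_of_pos (by linarith [hεpos σ.card] : (0:ℝ) < 1 + ε σ.card)]
    have := hεle 1 σ.card hc1
    nlinarith [hεpos σ.card]
  -- the norm
  set νf : X → ℝ := fun x => sSup ((fun f : StrongDual ℝ X => f x) '' D) with hνf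
  have hVne : ∀ x : X, ((fun f : StrongDual ℝ X => f x) '' D).Nonempty :=
    fun x => ⟨_, Set.mem_image_of_mem _ h0D⟩
  have hVbdd : ∀ x : X, BddAbove ((fun f : StrongDual ℝ X => f x) '' D) := by
    intro x
    refine ⟨(1 + ε 1) * ‖x‖, ?_⟩
    rintro v ⟨f, hf, rfl⟩
    calc f x ≤ |f x| := le_abs_self _
      _ = ‖f x‖ := (Real.norm_eq_abs _).symm
      _ ≤ ‖f‖ * ‖x‖ := f.le_opNorm x
      _ ≤ (1 + ε 1) * ‖x‖ := mul_le_mul_of_nonneg_right (hfnorm f hf) (norm_nonneg x)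
  have hub : ∀ f ∈ D, ∀ x : X, f x ≤ νf x :=
    fun f hf x => le_csSup (hVbdd x) (Set.mem_image_of_mem _ hf)
  have hupper : ∀ x : X, νf x ≤ (1 + ε 1) * ‖x‖ := by
    intro x
    refine csSup_le (hVne x) ?_
    rintro v ⟨f, hf, rfl⟩
    calc f x ≤ |f x| := le_abs_self _
      _ = ‖f x‖ := (Real.norm_eq_abs _).symm
      _ ≤ ‖f‖ * ‖x‖ := f.le_opNorm x
      _ ≤ (1 + ε 1) * ‖x‖ := mul_le_mul_of_nonneg_right (hfnorm f hf) (norm_nonneg x)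
  have hνnonneg : ∀ x : X, 0 ≤ νf x := by
    intro x
    have : (0:ℝ) = (fun f : StrongDual ℝ X => f x) 0 := by simp
    exact this ▸ le_csSup (hVbdd x) (Set.mem_image_of_mem _ h0D)
  have hDneg : ∀ f ∈ D, -f ∈ D := by
    intro f hf
    obtain ⟨σ, hσ, g, hg, rfl⟩ := hDelim f hf
    have : -(((1 + ε σ.card) : ℝ) • (g.comp (P σ)))
        = ((1 + ε σ.card) : ℝ) • ((-g).comp (P σ)) := by
      rw [ContinuousLinearMap.neg_comp, smul_neg]
    rw [this]
    exact hmemD σ hσ (-g) (hGneg σ g hg)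
  have hPle' : ∀ (σ : Finset I), σ.Nonempty → ∀ x : X,
      (1 - η σ.card) * ((1 + ε σ.card) * ‖P σ x‖) ≤ νf x := by
    intro σ hσ x
    obtain ⟨g, hgG, hgy⟩ := hGnorm σ (P σ x) (hPmem σ x)
    have hf := hub _ (hmemD σ hσ g hgG) x
    have happ : (((1 + ε σ.card) : ℝ) • (g.comp (P σ))) x
        = (1 + ε σ.card) * g (P σ x) := by
      simp [ContinuousLinearMap.smul_apply]
    rw [happ] at hf
    calc (1 - η σ.card) * ((1 + ε σ.card) * ‖P σ x‖)
        = (1 + ε σ.card) * ((1 - η σ.card) * ‖P σ x‖) := by ring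
      _ ≤ (1 + ε σ.card) * g (P σ x) :=
          mul_le_mul_of_nonneg_left hgy (by linarith [hεpos σ.card])
      _ ≤ νf x := hf
  have hPleν : ∀ (σ : Finset I), σ.Nonempty → ∀ x : X, ‖P σ x‖ ≤ νf x := by
    intro σ hσ x
    refine le_trans ?_ (hPle' σ hσ x)
    nlinarith [hgood σ.card, norm_nonneg (P σ x)]
  have hlower : ∀ x : X, ‖x‖ ≤ νf x := by
    intro x
    have heq : (fun σ : Finset I => ‖P σ x‖)
        = fun σ : Finset I => ‖∑ i ∈ σ, es i x • e i‖ := by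
      funext σ; rw [hPapply]
    have htend : Tendsto (fun σ : Finset I => ‖P σ x‖) atTop (𝓝 ‖x‖) := by
      rw [heq]; exact (hconv x).norm
    refine le_of_tendsto htend ?_
    filter_upwards [eventually_ge_atTop ({Classical.arbitrary I} : Finset I)] with σ hσ
    exact hPleν σ ⟨Classical.arbitrary I, Finset.le_iff_subset.1 hσ (Finset.mem_singleton_self _)⟩ x
  have hadd : ∀ x y : X, νf (x + y) ≤ νf x + νf y := by
    intro x y
    refine csSup_le (hVne _) ?_
    rintro v ⟨f, hf, rfl⟩
    simp only [map_add]
    exact add_le_add (hub f hf x) (hub f hf y)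
  have hsmul_le : ∀ (a : ℝ) (x : X), νf (a • x) ≤ ‖a‖ * νf x := by
    intro a x
    refine csSup_le (hVne _) ?_
    rintro v ⟨f, hf, rfl⟩
    simp only [map_smul, smul_eq_mul]
    rcases le_or_gt 0 a with ha | ha
    · rw [Real.norm_eq_abs, abs_of_nonneg ha]
      exact mul_le_mul_of_nonneg_left (hub f hf x) ha
    · rw [Real.norm_eq_abs, abs_of_neg ha]
      have h1 : a * f x = (-a) * ((-f) x) := by
        simp only [ContinuousLinearMap.neg_apply]; ring
      rw [h1]
      exact mul_le_mul_of_nonneg_left (hub _ (hDneg f hf) x) (by linarith)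
  have hsmul : ∀ (a : ℝ) (x : X), νf (a • x) = ‖a‖ * νf x := by
    intro a x
    rcases eq_or_ne a 0 with rfl | ha
    · simp only [zero_smul, norm_zero, zero_mul]
      refine le_antisymm ?_ ?_
      · have := hupper 0; simpa using this
      · have := hνnonneg 0; simpa using this
    · refine le_antisymm (hsmul_le a x) ?_
      have h1 : νf x ≤ ‖a⁻¹‖ * νf (a • x) := by
        have := hsmul_le a⁻¹ (a • x)
        rwa [inv_smul_smul₀ ha] at this
      have h2 : ‖a‖ * νf x ≤ ‖a‖ * (‖a⁻¹‖ * νf (a • x)) :=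
        mul_le_mul_of_nonneg_left h1 (norm_nonneg a)
      rwa [norm_inv, ← mul_assoc, mul_inv_cancel₀ (norm_ne_zero_iff.2 ha), one_mul] at h2
  -- KEY finiteness lemma
  have KEY : ∀ x : X, ∃ (θ : ℝ) (Φ : Finset (StrongDual ℝ X)), 0 < θ ∧
      (νf x = 1 → (∀ f ∈ Φ, f ∈ D) ∧ (∀ f ∈ D, 1 - θ < f x → f ∈ Φ) ∧
        ∃ f ∈ Φ, f x = 1) := by
    intro x
    by_cases hx : νf x = 1
    swap
    · exact ⟨1, ∅, one_pos, fun h => absurd h hx⟩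
    have hxle : ‖x‖ ≤ 1 := by rw [← hx]; exact hlower x
    have hxne : x ≠ 0 := by
      intro h
      rw [h] at hx
      have h1 := hupper (0 : X)
      rw [norm_zero, mul_zero, hx] at h1
      norm_num at h1
    have hxpos : 0 < ‖x‖ := norm_pos_iff.2 hxne
    set z : X := ‖x‖⁻¹ • x with hzdef
    have hz1 : ‖z‖ = 1 := by
      rw [hzdef, norm_smul, norm_inv, norm_norm, inv_mul_cancel₀ (ne_of_gt hxpos)]
    have hzsph : z ∈ Metric.sphere (0 : X) 1 := by
      rw [mem_sphere_iff_norm, sub_zero]; exact hz1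
    rw [hcover] at hzsph
    obtain ⟨n, hn1, hzS⟩ := Set.mem_iUnion₂.1 hzsph
    -- Step 1 : upper bound for ‖x‖
    have hcn : ∀ σ : Finset I, σ.card = n → ‖P σ x‖ ≤ 1 / ((1 - η n) * (1 + ε n)) := by
      intro σ hσc
      have hσpos : 0 < σ.card := by omega
      have hσne : σ.Nonempty := Finset.card_pos.1 hσpos
      have h1 := hPle' σ hσne x
      rw [hσc, hx] at h1
      rw [le_div_iff₀ (hηε n)]
      nlinarith [h1]
    have hzup : sSup ((fun σ : Finset I => ‖∑ i ∈ σ, es i z • e i‖) ''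
        {σ : Finset I | σ.card = n}) ≤ 1 / ((1 - η n) * (1 + ε n)) / ‖x‖ := by
      refine Real.sSup_le ?_ (div_nonneg (div_nonneg zero_le_one (le_of_lt (hηε n))) (norm_nonneg x))
      rintro _ ⟨σ, hσ, rfl⟩
      show ‖∑ i ∈ σ, es i z • e i‖ ≤ 1 / ((1 - η n) * (1 + ε n)) / ‖x‖
      have h1 : ∑ i ∈ σ, es i z • e i = P σ z := (hPapply σ z).symm
      rw [h1, hzdef, map_smul, norm_smul, norm_inv, norm_norm,
        div_eq_mul_inv (1 / ((1 - η n) * (1 + ε n))) ‖x‖,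
        mul_comm (1 / ((1 - η n) * (1 + ε n))) ‖x‖⁻¹]
      exact mul_le_mul_of_nonneg_left (hcn σ hσ) (by positivity)
    have hbn : b n ≤ 1 / ((1 - η n) * (1 + ε n)) / ‖x‖ := by
      refine le_trans ?_ hzup
      rw [hb n hn1]
      refine csInf_le ⟨0, ?_⟩ (Set.mem_image_of_mem _ hzS)
      rintro v ⟨w, hw, rfl⟩
      exact Real.sSup_nonneg (by rintro _ ⟨σ, hσ, rfl⟩; exact norm_nonneg _)
    have hxbound : ‖x‖ * (1 + γ n / 2) ≤ 1 := by
      have h3 := h3key n hn1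
      have h5 : b n * (((1 - η n) * (1 + ε n)) * ‖x‖) ≤ 1 := by
        rw [div_div] at hbn
        exact (le_div_iff₀ (mul_pos (hηε n) hxpos)).1 hbn
      have h6 : ‖x‖ * (1 + γ n / 2) ≤ ‖x‖ * ((1 - η n) * (1 + ε n) * b n) :=
        mul_le_mul_of_nonneg_left h3 (le_of_lt hxpos)
      nlinarith [h5, h6]
    set δ : ℝ := γ n / 2 with hδdef
    have hδpos : 0 < δ := by have := hγpos n; rw [hδdef]; linarith
    set θ₁ : ℝ := 1 - (1 + δ/4) * ‖x‖ with hθ₁def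
    have hθ₁pos : 0 < θ₁ := by
      rw [hθ₁def]
      nlinarith [hxbound, hδpos, hxpos]
    -- choose M
    obtain ⟨M₀, hM₀⟩ := eventually_atTop.1
      (hεlim.eventually (eventually_le_nhds (by positivity : (0:ℝ) < δ/4)))
    set M : ℕ := max M₀ 1 with hMdef
    have hM1 : 1 ≤ M := le_max_right _ _
    have hMε : ∀ m, M + 1 ≤ m → ε m ≤ δ/4 := fun m hm =>
      hM₀ m (le_trans (le_trans (le_max_left M₀ 1) (Nat.le_succ M)) hm)
    -- the uniform gap ρ
    have hMmem : (1 : ℕ) ∈ Finset.Icc 1 M := Finset.mem_Icc.2 ⟨le_rfl, hM1⟩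
    set ρ : ℝ := (Finset.Icc 1 M).inf' ⟨1, hMmem⟩
      (fun k => 1 - (1 + ε (k+1)) / ((1 - η k) * (1 + ε k))) with hρdef
    have hρpos : 0 < ρ := by
      rw [hρdef]
      refine (Finset.lt_inf'_iff _).2 ?_
      intro k hk
      rw [sub_pos, div_lt_one (hηε k)]
      exact h2key k
    have hρle : ρ ≤ 1 := by
      refine le_trans (Finset.inf'_le _ hMmem) ?_
      have h1 : 0 ≤ (1 + ε 2) / ((1 - η 1) * (1 + ε 1)) :=
        div_nonneg (by linarith [hεpos 2]) (le_of_lt (hηε 1))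
      linarith
    -- the tail bound ε''
    set ε'' : ℝ := min θ₁ ρ / (2 * (1 + ε 1) + 2) with hε''def
    have hden : (0:ℝ) < 2 * (1 + ε 1) + 2 := by linarith [hεpos 1]
    have hε''pos : 0 < ε'' := div_pos (lt_min hθ₁pos hρpos) hden
    have hε''ρ : (1 + ε 1) * ε'' ≤ ρ / 2 := by
      have hq : ε'' * (2 * (1 + ε 1) + 2) = min θ₁ ρ := by
        rw [hε''def]; field_simp
        exact div_self (by linarith [hεpos 1])
      have hm : min θ₁ ρ ≤ ρ := min_le_right _ _
      nlinarith [hε''pos, hεpos 1]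
    have hsummable : Summable (fun i : I => es i x • e i) := ⟨x, hconv x⟩
    obtain ⟨EE, hEE⟩ := hsummable.vanishing (Metric.ball_mem_nhds (0:X) hε''pos)
    have hEtail : ∀ t : Finset I, Disjoint t EE → ‖∑ i ∈ t, es i x • e i‖ < ε'' := by
      intro t ht
      have := hEE t ht
      rwa [mem_ball_zero_iff] at this
    set θ : ℝ := min θ₁ (ρ/2) with hθdef
    have hθpos : 0 < θ := lt_min hθ₁pos (by linarith)
    set Φ : Finset (StrongDual ℝ X) := (EE.powerset.biUnion (fun τ =>
      (G τ).image (fun g => ((1 + ε τ.card) : ℝ) • (g.comp (P τ))))).filter (· ∈ D)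
      with hΦdef
    have hnear : ∀ f ∈ D, 1 - θ < f x → f ∈ Φ := by
      intro f hfD hflt
      obtain ⟨σ, hσne, g, hgG, rfl⟩ := hDelim f hfD
      set w : ℝ := 1 + ε σ.card with hwdef
      have hwpos : 0 < w := by rw [hwdef]; linarith [hεpos σ.card]
      have happ : ((w : ℝ) • (g.comp (P σ))) x = w * g (P σ x) := by simp
      by_cases hσE : σ ⊆ EE
      · refine Finset.mem_filter.2 ⟨?_, hfD⟩
        exact Finset.mem_biUnion.2 ⟨σ, Finset.mem_powerset.2 hσE,
          Finset.mem_image_of_mem _ hgG⟩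
      · exfalso
        have hgb : g (P σ x) ≤ ‖P σ x‖ := by
          calc g (P σ x) ≤ |g (P σ x)| := le_abs_self _
            _ = ‖g (P σ x)‖ := (Real.norm_eq_abs _).symm
            _ ≤ ‖g‖ * ‖P σ x‖ := g.le_opNorm _
            _ ≤ 1 * ‖P σ x‖ :=
                mul_le_mul_of_nonneg_right (hGle σ g hgG) (norm_nonneg _)
            _ = ‖P σ x‖ := one_mul _
        have hfval : ((w : ℝ) • (g.comp (P σ))) x ≤ w * ‖P σ x‖ := by
          rw [happ]; exact mul_le_mul_of_nonneg_left hgb (le_of_lt hwpos)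
        rcases le_or_gt σ.card M with hcM | hcM
        · -- card ≤ M, σ ⊄ EE
          set τ : Finset I := σ ∩ EE with hτdef
          have hτσ : τ ⊆ σ := Finset.inter_subset_left
          have hτne_σ : τ ≠ σ := by
            intro h
            exact hσE (Finset.inter_eq_left.1 (by rw [← hτdef]; exact h))
          have hτlt : τ.card < σ.card :=
            Finset.card_lt_card (ssubset_of_subset_of_ne hτσ hτne_σ)
          have hsdiff : P σ x - P τ x = ∑ i ∈ σ \ τ, es i x • e i := by
            rw [hPapply, hPapply]
            have h := Finset.sum_sdiff (f := fun i => es i x • e i) hτσ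
            rw [← h]; abel
          have hdisj : Disjoint (σ \ τ) EE := by
            rw [Finset.disjoint_left]
            intro i hi hiEE
            have h1 := Finset.mem_sdiff.1 hi
            exact h1.2 (by rw [hτdef]; exact Finset.mem_inter.2 ⟨h1.1, hiEE⟩)
          have htail := hEtail _ hdisj
          have hPστ : ‖P σ x‖ ≤ ‖P τ x‖ + ε'' := by
            calc ‖P σ x‖ = ‖P τ x + (P σ x - P τ x)‖ := by rw [add_sub_cancel]
              _ ≤ ‖P τ x‖ + ‖P σ x - P τ x‖ := norm_add_le _ _
              _ ≤ ‖P τ x‖ + ε'' := by rw [hsdiff]; linarith [htail]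
          have hwle : w ≤ 1 + ε (τ.card + 1) := by
            rw [hwdef]
            linarith [hεle (τ.card + 1) σ.card hτlt]
          rcases Nat.eq_zero_or_pos τ.card with hk0 | hk1
          · -- τ is empty
            have hτempty : τ = ∅ := Finset.card_eq_zero.1 hk0
            have hPτ : ‖P τ x‖ = 0 := by
              rw [hτempty, hPapply]; simp
            have hfx : ((w : ℝ) • (g.comp (P σ))) x ≤ (1 + ε 1) * ε'' := by
              refine le_trans hfval ?_
              have h1 : ‖P σ x‖ ≤ ε'' := by rw [hPτ] at hPστ; linarith
              have h2 : w ≤ 1 + ε 1 := by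
                rw [hwdef]
                linarith [hεle 1 σ.card (Finset.card_pos.2 hσne)]
              nlinarith [norm_nonneg (P σ x), hε''pos]
            have hcontra : (1 + ε 1) * ε'' ≤ 1 - θ := by
              have h1 : θ ≤ ρ/2 := min_le_right _ _
              linarith [hε''ρ, hρle]
            linarith [hflt, hfx]
          · -- 1 ≤ τ.card
            have hτM : τ.card ∈ Finset.Icc 1 M := Finset.mem_Icc.2 ⟨hk1, by omega⟩
            have hρk := Finset.inf'_le
              (fun k => 1 - (1 + ε (k+1)) / ((1 - η k) * (1 + ε k))) hτM
            have hτbound : ‖P τ x‖ ≤ 1 / ((1 - η τ.card) * (1 + ε τ.card)) := by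
              have hτne : τ.Nonempty := Finset.card_pos.1 hk1
              have h1 := hPle' τ hτne x
              rw [hx] at h1
              rw [le_div_iff₀ (hηε τ.card)]
              nlinarith [h1]
            have hf2 : ((w : ℝ) • (g.comp (P σ))) x
                ≤ (1 + ε (τ.card+1)) * (1/((1 - η τ.card) * (1 + ε τ.card)))
                  + (1 + ε 1) * ε'' := by
              refine le_trans hfval ?_
              have h1 : w * ‖P σ x‖ ≤ (1 + ε (τ.card+1)) * (‖P τ x‖ + ε'') := by
                nlinarith [hPστ, hwle, hwpos, norm_nonneg (P τ x), hε''pos,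
                  norm_nonneg (P σ x), hεpos (τ.card+1)]
              have h2 : (1 + ε (τ.card+1)) * ‖P τ x‖
                  ≤ (1 + ε (τ.card+1)) * (1/((1 - η τ.card) * (1 + ε τ.card))) :=
                mul_le_mul_of_nonneg_left hτbound (by linarith [hεpos (τ.card+1)])
              have h3 : (1 + ε (τ.card+1)) * ε'' ≤ (1 + ε 1) * ε'' :=
                mul_le_mul_of_nonneg_right
                  (by linarith [hεle 1 (τ.card+1) (by omega)]) (le_of_lt hε''pos)
              nlinarith [h1, h2, h3]
            have hratio : (1 + ε (τ.card+1)) * (1/((1 - η τ.card) * (1 + ε τ.card)))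
                ≤ 1 - ρ := by
              rw [mul_one_div]
              linarith [hρk]
            have hθρ : θ ≤ ρ/2 := min_le_right _ _
            linarith [hflt, hf2, hratio, hε''ρ]
        · -- card > M
          have hεσ : ε σ.card ≤ δ/4 := hMε σ.card (by omega)
          have hfx : ((w : ℝ) • (g.comp (P σ))) x ≤ (1 + δ/4) * ‖x‖ := by
            refine le_trans hfval ?_
            have h1 : ‖P σ x‖ ≤ ‖x‖ := hPnorm σ x
            rw [hwdef]
            nlinarith [norm_nonneg (P σ x), hεpos σ.card, hxpos]
          have hθθ₁ : θ ≤ θ₁ := min_le_left _ _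
          rw [hθ₁def] at hθθ₁
          linarith [hflt, hfx]
    have hatt : ∃ f ∈ Φ, f x = 1 := by
      have h1 : 1 - θ < νf x := by rw [hx]; linarith
      rw [hνf] at h1
      obtain ⟨v, ⟨f₀, hf₀D, rfl⟩, hf₀⟩ := exists_lt_of_lt_csSup (hVne x) h1
      have hf₀Φ : f₀ ∈ Φ := hnear f₀ hf₀D hf₀
      have hΦne : Φ.Nonempty := ⟨f₀, hf₀Φ⟩
      obtain ⟨fm, hfmΦ, hfm⟩ := Finset.exists_mem_eq_sup' hΦne (fun f : StrongDual ℝ X => f x)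
      have hrle : Φ.sup' hΦne (fun f : StrongDual ℝ X => f x) ≤ 1 := by
        rw [Finset.sup'_le_iff]
        intro f hf
        have h2 := hub f ((Finset.mem_filter.1 hf).2) x
        rwa [hx] at h2
      have hrge : 1 ≤ Φ.sup' hΦne (fun f : StrongDual ℝ X => f x) := by
        by_contra hlt
        push_neg at hlt
        have hcs : νf x ≤ max (Φ.sup' hΦne (fun f : StrongDual ℝ X => f x)) (1 - θ) := by
          refine csSup_le (hVne x) ?_
          rintro v ⟨f, hf, rfl⟩
          rcases le_or_gt (f x) (1 - θ) with h | h
          · exact le_trans h (le_max_right _ _)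
          · exact le_trans (Finset.le_sup' (fun f : StrongDual ℝ X => f x) (hnear f hf h))
              (le_max_left _ _)
        rw [hx] at hcs
        rcases max_cases (Φ.sup' hΦne (fun f : StrongDual ℝ X => f x)) (1-θ) with
          ⟨hm, _⟩ | ⟨hm, _⟩ <;> rw [hm] at hcs <;> linarith
      exact ⟨fm, hfmΦ, by rw [← hfm]; linarith [hrle, hrge]⟩
    exact ⟨θ, Φ, hθpos, fun _ =>
      ⟨fun f hf => (Finset.mem_filter.1 hf).2, hnear, hatt⟩⟩

  -- assemble
  refine ⟨Seminorm.of νf hadd hsmul, ⟨1, 1 + ε 1, one_pos, fun x =>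
    ⟨by rw [one_mul]; exact hlower x, hupper x⟩⟩, ?_, D, ⟨?_, ?_⟩, ?_⟩
  · -- polyhedral
    intro Y hY
    haveI := hY
    choose θf Φf hθfpos hkeyf using KEY
    set SY : Set X := {y : X | y ∈ Y ∧ νf y = 1} with hSYdef
    have hε1 : (0:ℝ) < 1 + ε 1 := by linarith [hεpos 1]
    have hνcont : Continuous νf := by
      have hlip : ∀ a c : X, νf a - νf c ≤ (1 + ε 1) * ‖a - c‖ := by
        intro a c
        have h1 : νf a ≤ νf c + νf (a - c) := by
          have h2 := hadd c (a - c)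
          simpa using h2
        have h3 := hupper (a - c)
        linarith
      have hlw : LipschitzWith (Real.toNNReal (1 + ε 1)) νf := by
        refine LipschitzWith.of_dist_le_mul ?_
        intro a c
        rw [Real.dist_eq, Real.coe_toNNReal _ (le_of_lt hε1), dist_eq_norm, abs_sub_le_iff]
        constructor
        · exact hlip a c
        · have := hlip c a
          rwa [norm_sub_rev] at this
      exact hlw.continuous
    have hSYcl : IsClosed SY := by
      have h1 : IsClosed (Y : Set X) := Submodule.closed_of_finiteDimensional Y
      have h2 : IsClosed {y : X | νf y = 1} := isClosed_eq hνcont continuous_const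
      have h3 : SY = (Y : Set X) ∩ {y : X | νf y = 1} := rfl
      rw [h3]; exact h1.inter h2
    have hSYbdd : Bornology.IsBounded SY := by
      refine (Metric.isBounded_closedBall (x := (0:X)) (r := 1)).subset ?_
      intro y hy
      rw [Metric.mem_closedBall, dist_zero_right]
      calc ‖y‖ ≤ νf y := hlower y
        _ = 1 := hy.2
    have hSYcomp : IsCompact SY := aux_compact Y hY (fun y hy => hy.1) hSYcl hSYbdd
    have hcov : ∀ y ∈ SY, Metric.ball y (θf y / (2 * (1 + ε 1))) ∈ 𝓝 y := by
      intro y _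
      exact Metric.ball_mem_nhds y (div_pos (hθfpos y) (by linarith))
    obtain ⟨t, htSY, htcov⟩ := hSYcomp.elim_nhds_subcover _ hcov
    set F : Finset (StrongDual ℝ X) := t.biUnion (fun y => Φf y) with hFdef
    have hFD : ∀ f ∈ F, f ∈ D := by
      intro f hf
      obtain ⟨y, hyt, hyΦ⟩ := Finset.mem_biUnion.1 hf
      exact ((hkeyf y (htSY y hyt).2).1) f hyΦ
    have hKeq : {y : X | y ∈ Y ∧ νf y ≤ 1} = {y : X | y ∈ Y ∧ ∀ f ∈ F, f y ≤ 1} := by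
      ext y
      simp only [Set.mem_setOf_eq]
      constructor
      · rintro ⟨hyY, hyν⟩
        exact ⟨hyY, fun f hf => le_trans (hub f (hFD f hf) y) hyν⟩
      · rintro ⟨hyY, hyF⟩
        refine ⟨hyY, ?_⟩
        by_contra hgt
        push_neg at hgt
        set s : ℝ := νf y with hsdef
        have hspos : 0 < s := by rw [hsdef]; linarith
        set zz : X := s⁻¹ • y with hzzdef
        have hzzν : νf zz = 1 := by
          rw [hzzdef, hsmul, norm_inv, Real.norm_eq_abs, abs_of_pos hspos, ← hsdef,
            inv_mul_cancel₀ (ne_of_gt hspos)]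
        have hzzSY : zz ∈ SY := ⟨Y.smul_mem _ hyY, hzzν⟩
        obtain ⟨y₀, hy₀t, hy₀ball⟩ := Set.mem_iUnion₂.1 (htcov hzzSY)
        have hy₀SY : y₀ ∈ SY := htSY y₀ hy₀t
        obtain ⟨f, hfΦ, hfzz⟩ := (hkeyf zz hzzν).2.2
        have hfD : f ∈ D := (hkeyf zz hzzν).1 f hfΦ
        have hfnear : 1 - θf y₀ < f y₀ := by
          have hdist : ‖zz - y₀‖ < θf y₀ / (2 * (1 + ε 1)) := by
            have h4 := hy₀ball
            rwa [Metric.mem_ball, dist_eq_norm] at h4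
          have hf1 : f y₀ = f zz - f (zz - y₀) := by rw [map_sub]; ring
          have hf2 : f (zz - y₀) ≤ (1 + ε 1) * ‖zz - y₀‖ := by
            calc f (zz - y₀) ≤ |f (zz - y₀)| := le_abs_self _
              _ = ‖f (zz - y₀)‖ := (Real.norm_eq_abs _).symm
              _ ≤ ‖f‖ * ‖zz - y₀‖ := f.le_opNorm _
              _ ≤ (1 + ε 1) * ‖zz - y₀‖ :=
                  mul_le_mul_of_nonneg_right (hfnorm f hfD) (norm_nonneg _)
          have hf3 : (1 + ε 1) * ‖zz - y₀‖ < (1 + ε 1) * (θf y₀ / (2 * (1 + ε 1))) :=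
            mul_lt_mul_of_pos_left hdist hε1
          have hne : (1 + ε 1) ≠ 0 := ne_of_gt hε1
          have hf4 : (1 + ε 1) * (θf y₀ / (2 * (1 + ε 1))) = θf y₀ / 2 := by
            field_simp
          have hθ := hθfpos y₀
          rw [hf1, hfzz]
          linarith [hf2, hf3]
        have hfΦ₀ : f ∈ Φf y₀ := (hkeyf y₀ hy₀SY.2).2.1 f hfD hfnear
        have hfF : f ∈ F := Finset.mem_biUnion.2 ⟨y₀, hy₀t, hfΦ₀⟩
        have hyzz : y = s • zz := by rw [hzzdef, smul_inv_smul₀ (ne_of_gt hspos)]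
        have h5 := hyF f hfF
        rw [hyzz, map_smul, smul_eq_mul, hfzz, mul_one] at h5
        linarith
    have hbddK : Bornology.IsBounded {y : X | y ∈ Y ∧ ∀ f ∈ F, f y ≤ 1} := by
      rw [← hKeq]
      refine (Metric.isBounded_closedBall (x := (0:X)) (r := 1)).subset ?_
      intro y hy
      rw [Metric.mem_closedBall, dist_zero_right]
      exact le_trans (hlower y) hy.2
    obtain ⟨T, hTfin, hTeq⟩ := aux_polytope Y hY F hbddK
    refine ⟨T, hTfin, ?_⟩
    have hshow : {x : X | x ∈ Y ∧ (Seminorm.of νf hadd hsmul) x ≤ 1}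
        = {y : X | y ∈ Y ∧ νf y ≤ 1} := rfl
    rw [hshow, hKeq, hTeq]
  · -- boundary upper bound
    intro f hf x
    exact hub f hf x
  · -- boundary attainment
    intro x hx
    obtain ⟨θ, Φ, hθ, hkey⟩ := KEY x
    obtain ⟨hΦD, _, f, hfΦ, hfx⟩ := hkey hx
    exact ⟨f, hΦD f hfΦ, hfx⟩
  · -- property (*)
    intro g hg x hx
    by_contra hgx
    push_neg at hgx
    obtain ⟨θ, Φ, hθ, hkey⟩ := KEY x
    obtain ⟨hΦD, hnear, _⟩ := hkey hx
    have hU : IsOpen {h : WeakDual ℝ X | 1 - θ < h x} :=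
      isOpen_lt continuous_const (WeakDual.eval_continuous x)
    have hgU : StrongDual.toWeakDual g ∈ {h : WeakDual ℝ X | 1 - θ < h x} := by
      simp only [Set.mem_setOf_eq]
      show 1 - θ < g x
      linarith
    have hinf := hg _ hU hgU
    refine hinf (Φ.finite_toSet.subset ?_)
    rintro f ⟨hfD, hfU⟩
    exact hnear f hfD hfU

end AuxPoly

open Classical in
theorem stmt15 {X I : Type*} [NormedAddCommGroup X] [NormedSpace ℝ X] [CompleteSpace X]
    (e : I → X) (es : I → StrongDual ℝ X)
    (hbi : ∀ i j, es i (e j) = if i = j then 1 else 0)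
    (hmonot : ∀ (σ : Finset I) (z : X), ‖∑ i ∈ σ, es i z • e i‖ ≤ ‖z‖)
    (hconv : ∀ z : X,
      Tendsto (fun σ : Finset I => ∑ i ∈ σ, es i z • e i) atTop (𝓝 z))
    (S : ℕ → Set X) (b : ℕ → ℝ)
    (hS : ∀ n, S n ⊆ Metric.sphere (0 : X) 1)
    (hcover : Metric.sphere (0 : X) 1 = ⋃ (n : ℕ) (_ : 1 ≤ n), S n)
    (hb : ∀ n, 1 ≤ n → b n = sInf ((fun z : X =>
      sSup ((fun σ : Finset I => ‖∑ i ∈ σ, es i z • e i‖) ''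
        {σ : Finset I | σ.card = n})) '' S n))
    (hbpos : ∀ n, 1 ≤ n → 0 < b n)
    (hblim : Tendsto b atTop (𝓝 1)) :
    ∃ ν : Seminorm ℝ X, IsEquivNorm ν ∧ IsPolyhedralNorm (fun z => ν z) ∧
      ∃ D : Set (StrongDual ℝ X), IsBoundaryFor (fun z => ν z) D ∧ PropertyStar D := by
  obtain ⟨ν, h1, h2, D, h3, h4⟩ :=
    main_thm e es hbi hmonot hconv S b hS hcover hb hbpos hblim
  exact ⟨ν, h1, h2, D, h3, h4⟩

end
end

section
/- Let X be a Banach space with a monotone Schauder basis {e_n}_{n∈ℕ}: there are biorthogonal functionals {e_n^*} ⊂ X*, the partial-sum projections P_n(x) = Σ_{k≤n} e_k^*(x) e_k satisfy ‖P_n(x)‖ ≤ ‖x‖ for all x and n, and P_n(x) → x in norm for every x ∈ X. Suppose S_X = ⋃_{n=1}^∞ S_n in such a way that the numbers b_n = inf{‖P_n(x)‖ : x ∈ S_n} are strictly positive and converge to 1. Then X admits an equivalent polyhedral norm supporting a countable boundary having property (*). -/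
open NormedSpace Filter Set Topology Pointwise

noncomputable section

/-- A finite δ-norming set of functionals for a finite-dimensional subspace. -/
lemma exists_norming_finset {X : Type*} [NormedAddCommGroup X] [NormedSpace ℝ X]
    (V : Subspace ℝ X) (hV : FiniteDimensional ℝ V) {δ : ℝ} (hδ : 0 < δ) :
    ∃ A : Finset (StrongDual ℝ X), (0 : StrongDual ℝ X) ∈ A ∧ (∀ a ∈ A, ‖a‖ ≤ 1) ∧
      (∀ a ∈ A, -a ∈ A) ∧ ∀ y ∈ V, ∃ a ∈ A, (1 - δ) * ‖y‖ ≤ a y := by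
  classical
  set sph : Set X := Subtype.val '' (Metric.sphere (0 : V) 1) with hsph
  have hcomp : IsCompact sph := (isCompact_sphere 0 1).image continuous_subtype_val
  have hnorm1 : ∀ u ∈ sph, ‖u‖ = 1 := by
    rintro u ⟨v, hv, rfl⟩
    simpa [Submodule.coe_norm] using (mem_sphere_zero_iff_norm.1 hv)
  have hgex : ∀ u : X, ∃ g : StrongDual ℝ X, ‖g‖ ≤ 1 ∧ (u ∈ sph → g u = 1) := by
    intro u
    by_cases hu : u ∈ sph
    · have hne : u ≠ 0 := by
        intro h0; have := hnorm1 u hu; rw [h0] at this; simp at this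
      obtain ⟨g, hg1, hg2⟩ := exists_dual_vector ℝ u (norm_ne_zero_iff.2 hne)
      exact ⟨g, le_of_eq hg1, fun _ => by rw [hg2, hnorm1 u hu]; norm_num⟩
    · exact ⟨0, by simp, fun h => absurd h hu⟩
  choose g hg1 hg2 using hgex
  obtain ⟨t, ht_sub, ht_cover⟩ := hcomp.elim_nhds_subcover (fun u => Metric.ball u δ)
    (fun u _ => Metric.ball_mem_nhds u hδ)
  refine ⟨insert 0 (t.image g ∪ t.image (fun u => -g u)), by simp, ?_, ?_, ?_⟩
  · intro a ha
    simp only [Finset.mem_insert, Finset.mem_union, Finset.mem_image] at ha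
    rcases ha with rfl | ⟨u, _, rfl⟩ | ⟨u, _, rfl⟩
    · simp
    · exact hg1 u
    · simpa using hg1 u
  · intro a ha
    simp only [Finset.mem_insert, Finset.mem_union, Finset.mem_image] at ha ⊢
    rcases ha with rfl | ⟨u, hu, rfl⟩ | ⟨u, hu, rfl⟩
    · left; simp
    · right; right; exact ⟨u, hu, rfl⟩
    · right; left; exact ⟨u, hu, by simp⟩
  · intro y hy
    by_cases hy0 : y = 0
    · exact ⟨0, by simp, by simp [hy0]⟩
    have hyn : ‖y‖ ≠ 0 := norm_ne_zero_iff.2 hy0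
    set u : X := ‖y‖⁻¹ • y with hu
    have husph : u ∈ sph := by
      refine ⟨⟨u, V.smul_mem _ hy⟩, ?_, rfl⟩
      rw [mem_sphere_zero_iff_norm]
      simp only [Submodule.coe_norm]
      rw [hu, norm_smul, norm_inv, norm_norm, inv_mul_cancel₀ hyn]
    obtain ⟨c, hct, hcball⟩ := Set.mem_iUnion₂.1 (ht_cover husph)
    have hcs : c ∈ sph := ht_sub c hct
    refine ⟨g c, by simp [Finset.mem_union, Finset.mem_image]; right; left; exact ⟨c, hct, rfl⟩, ?_⟩
    have hgu : 1 - δ ≤ g c u := by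
      have h1 : g c u = g c c + g c (u - c) := by rw [← map_add, add_sub_cancel]
      have h2 : |g c (u - c)| ≤ ‖u - c‖ := by
        calc |g c (u - c)| ≤ ‖g c‖ * ‖u - c‖ := (g c).le_opNorm _
          _ ≤ 1 * ‖u - c‖ := by
              apply mul_le_mul_of_nonneg_right (hg1 c) (norm_nonneg _)
          _ = ‖u - c‖ := one_mul _
      have h3 : ‖u - c‖ < δ := by
        have := Metric.mem_ball.1 hcball
        rwa [dist_eq_norm] at this
      have h4 : g c c = 1 := hg2 c hcs
      nlinarith [abs_le.1 h2]
    have hyu : y = ‖y‖ • u := by rw [hu, smul_smul, mul_inv_cancel₀ hyn, one_smul]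
    have hgy : g c y = ‖y‖ * g c u := by
      conv_lhs => rw [hyu]
      rw [map_smul, smul_eq_mul]
    rw [hgy]
    nlinarith [norm_nonneg y]


lemma polytope_of_halfspaces {X : Type*} [NormedAddCommGroup X] [NormedSpace ℝ X]
    (Y : Subspace ℝ X) (hY : FiniteDimensional ℝ Y) (H : Finset (StrongDual ℝ X))
    (K : Set X) (hK : K = {x : X | x ∈ Y ∧ ∀ f ∈ H, f x ≤ 1})
    (hbdd : Bornology.IsBounded K) :
    ∃ T : Set X, T.Finite ∧ K = convexHull ℝ T := by
  classical
  have hKrepr : K = (Y : Set X) ∩ ⋂ f ∈ H, {x : X | f x ≤ 1} := by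
    rw [hK]; ext x; simp [Set.mem_iInter]
  have hconv : Convex ℝ K := by
    rw [hKrepr]
    refine (Y.convex).inter (convex_iInter fun f => convex_iInter fun _ => ?_)
    exact convex_halfSpace_le (f.toLinearMap.isLinear) 1
  have hclosed : IsClosed K := by
    rw [hKrepr]
    refine (Y.closed_of_finiteDimensional).inter
      (isClosed_iInter fun f => isClosed_iInter fun _ => ?_)
    exact isClosed_le f.continuous continuous_const
  have hKY : K ⊆ (Y : Set X) := by rw [hK]; intro x hx; exact hx.1
  have hcomp : IsCompact K := by
    have h1 : IsCompact (Subtype.val ⁻¹' K : Set Y) := by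
      have hcl : IsClosed (Subtype.val ⁻¹' K : Set Y) := hclosed.preimage continuous_subtype_val
      have hbd : Bornology.IsBounded (Subtype.val ⁻¹' K : Set Y) := by
        obtain ⟨r, hr⟩ := hbdd.subset_closedBall 0
        apply (Metric.isBounded_closedBall (x := (0:Y)) (r := r)).subset
        intro z hz
        have := hr hz
        simp only [Metric.mem_closedBall] at this ⊢
        rwa [Subtype.dist_eq]
      exact Metric.isCompact_of_isClosed_isBounded hcl hbd
    have himg : K = Subtype.val '' (Subtype.val ⁻¹' K : Set Y) := by
      rw [Set.image_preimage_eq_inter_range, Subtype.range_coe]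
      exact (Set.inter_eq_left.2 hKY).symm
    rw [himg]
    exact h1.image continuous_subtype_val
  -- an extreme point is determined by its set of active constraints
  have hkey : ∀ x ∈ K.extremePoints ℝ, ∀ y ∈ K,
      (∀ f ∈ H, f x = 1 → f y = 1) → y = x := by
    intro x hx y hy hAct
    by_contra hne
    obtain ⟨hxK, hxExt⟩ := hx
    set v : X := y - x with hv
    have hv0 : v ≠ 0 := sub_ne_zero.2 hne
    have hfx : ∀ f ∈ H, f x ≠ 1 → 0 < 1 - f x := by
      intro f hf hne1
      have hle := (hK ▸ hxK).2 f hf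
      rcases lt_or_eq_of_le hle with h | h
      · linarith
      · exact absurd h hne1
    obtain ⟨t, htpos, ht⟩ : ∃ t : ℝ, 0 < t ∧ ∀ f ∈ H, f x ≠ 1 → t * |f v| < 1 - f x := by
      by_cases hne' : (H.filter (fun f => ¬ f x = 1)).Nonempty
      · set t := ((H.filter (fun f => ¬ f x = 1)).inf' hne'
          (fun f => (1 - f x) / (|f v| + 1))) / 2 with htdef
        have htp : 0 < t := by
          rw [htdef]
          apply div_pos _ two_pos
          rw [Finset.lt_inf'_iff]
          intro f hf
          have hf1 := Finset.mem_filter.1 hf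
          exact div_pos (hfx f hf1.1 (by simpa using hf1.2)) (by positivity)
        refine ⟨t, htp, fun f hf hne1 => ?_⟩
        have hinfle := Finset.inf'_le (fun f => (1 - f x) / (|f v| + 1))
          (Finset.mem_filter.2 ⟨hf, by simpa using hne1⟩ :
            f ∈ H.filter (fun f => ¬ f x = 1))
        have hq : (1 - f x) / (|f v| + 1) * (|f v| + 1) = 1 - f x :=
          div_mul_cancel₀ _ (by positivity)
        have habs : (0:ℝ) ≤ |f v| := abs_nonneg _
        have h1fx := hfx f hf hne1
        nlinarith [htp, hinfle, hq, habs, h1fx, htdef]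
      · refine ⟨1, one_pos, fun f hf hne1 => absurd ?_ hne'⟩
        exact ⟨f, Finset.mem_filter.2 ⟨hf, by simpa using hne1⟩⟩
    have hmemK : ∀ s : ℝ, |s| ≤ t → x + s • v ∈ K := by
      intro s hs
      rw [hK]
      refine ⟨?_, ?_⟩
      · exact Y.add_mem (hKY hxK) (Y.smul_mem _ (Y.sub_mem (hKY hy) (hKY hxK)))
      · intro f hf
        have hfeval : f (x + s • v) = f x + s * f v := by
          rw [map_add, map_smul, smul_eq_mul]
        by_cases h1 : f x = 1
        · have hfy : f y = 1 := hAct f hf h1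
          have hfv : f v = 0 := by rw [hv, map_sub, hfy, h1, sub_self]
          rw [hfeval, hfv, mul_zero, add_zero, h1]
        · have h2 : s * f v ≤ t * |f v| := by
            calc s * f v ≤ |s * f v| := le_abs_self _
              _ = |s| * |f v| := abs_mul _ _
              _ ≤ t * |f v| := mul_le_mul_of_nonneg_right hs (abs_nonneg _)
          have h3 := ht f hf h1
          rw [hfeval]; linarith
    have hx1 : x + t • v ∈ K := hmemK t (by rw [abs_of_pos htpos])
    have hx2 : x + (-t) • v ∈ K := hmemK (-t) (by rw [abs_neg, abs_of_pos htpos])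
    have hseg : x ∈ openSegment ℝ (x + (-t) • v) (x + t • v) := by
      refine ⟨1/2, 1/2, by norm_num, by norm_num, by norm_num, ?_⟩
      module
    have := hxExt hx2 hx1 hseg
    have h0 : x + (-t) • v = x := this
    have : (-t) • v = 0 := by
      have := congrArg (fun z => z - x) h0
      simpa [add_sub_cancel_left] using this
    rcases smul_eq_zero.1 this with h | h
    · exact absurd (neg_eq_zero.1 h) (ne_of_gt htpos)
    · exact hv0 h
  -- extreme points are finite
  have hextfin : (K.extremePoints ℝ).Finite := by
    have hinj : Set.InjOn (fun x => H.filter (fun f => f x = 1)) (K.extremePoints ℝ) := by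
      intro x hx x' hx' heq
      simp only at heq
      refine hkey x' hx' x (extremePoints_subset hx) fun f hf hf1 => ?_
      have hmem : f ∈ H.filter (fun g => g x' = 1) := Finset.mem_filter.2 ⟨hf, hf1⟩
      rw [← heq] at hmem
      exact (Finset.mem_filter.1 hmem).2
    have himgfin : ((fun x => H.filter (fun f => f x = 1)) '' (K.extremePoints ℝ)).Finite := by
      apply Set.Finite.subset (H.powerset.finite_toSet)
      rintro s ⟨x, _, rfl⟩
      simp only [Finset.coe_powerset, Set.mem_preimage, Set.mem_powerset_iff, Finset.coe_filter]
      intro z hz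
      exact hz.1
    exact Set.Finite.of_finite_image himgfin hinj
  refine ⟨K.extremePoints ℝ, hextfin, ?_⟩
  have hKM := closure_convexHull_extremePoints hcomp hconv
  exact hKM.symm.trans (hextfin.isClosed_convexHull (𝕜 := ℝ)).closure_eq


set_option maxHeartbeats 1000000 in
open Classical in
theorem stmt16 {X : Type*} [NormedAddCommGroup X] [NormedSpace ℝ X] [CompleteSpace X]
    (e : ℕ → X) (es : ℕ → StrongDual ℝ X)
    (hbi : ∀ k l, es k (e l) = if k = l then 1 else 0)
    (hmonot : ∀ (n : ℕ) (z : X), ‖∑ k ∈ Finset.Iic n, es k z • e k‖ ≤ ‖z‖)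
    (hconv : ∀ z : X,
      Tendsto (fun n : ℕ => ∑ k ∈ Finset.Iic n, es k z • e k) atTop (𝓝 z))
    (S : ℕ → Set X) (b : ℕ → ℝ)
    (hS : ∀ n, S n ⊆ Metric.sphere (0 : X) 1)
    (hcover : Metric.sphere (0 : X) 1 = ⋃ (n : ℕ) (_ : 1 ≤ n), S n)
    (hb : ∀ n, 1 ≤ n →
      b n = sInf ((fun z : X => ‖∑ k ∈ Finset.Iic n, es k z • e k‖) '' S n))
    (hbpos : ∀ n, 1 ≤ n → 0 < b n)
    (hblim : Tendsto b atTop (𝓝 1)) :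
    ∃ ν : Seminorm ℝ X, IsEquivNorm ν ∧ IsPolyhedralNorm (fun z => ν z) ∧
      ∃ D : Set (StrongDual ℝ X), D.Countable ∧
        IsBoundaryFor (fun z => ν z) D ∧ PropertyStar D := by
  classical
  -- partial sum projections as continuous linear maps
  set Pn : ℕ → X →L[ℝ] X := fun n => ∑ k ∈ Finset.Iic n, (es k).smulRight (e k) with hPndef
  have hPapp : ∀ n z, Pn n z = ∑ k ∈ Finset.Iic n, es k z • e k := by
    intro n z
    simp [hPndef, ContinuousLinearMap.sum_apply, ContinuousLinearMap.smulRight_apply]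
  have hPle : ∀ n z, ‖Pn n z‖ ≤ ‖z‖ := fun n z => by rw [hPapp]; exact hmonot n z
  -- basic facts about S and b
  have hSne : ∀ m, 1 ≤ m → (S m).Nonempty := by
    intro m hm
    by_contra hemp
    rw [Set.not_nonempty_iff_eq_empty] at hemp
    have hbm := hb m hm
    rw [hemp, Set.image_empty, Real.sInf_empty] at hbm
    exact absurd (hbm ▸ hbpos m hm) (lt_irrefl 0)
  have hSnorm : ∀ m z, z ∈ S m → ‖z‖ = 1 := by
    intro m z hz
    exact mem_sphere_zero_iff_norm.1 (hS m hz)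
  have hbP : ∀ m, 1 ≤ m → ∀ z ∈ S m, b m ≤ ‖Pn m z‖ := by
    intro m hm z hz
    rw [hb m hm, hPapp]
    exact csInf_le ⟨0, by rintro t ⟨w, _, rfl⟩; exact norm_nonneg _⟩ ⟨z, hz, rfl⟩
  have hble1 : ∀ m, 1 ≤ m → b m ≤ 1 := by
    intro m hm
    obtain ⟨z, hz⟩ := hSne m hm
    calc b m ≤ ‖Pn m z‖ := hbP m hm z hz
      _ ≤ ‖z‖ := hPle m z
      _ = 1 := hSnorm m z hz
  -- parameters
  set δ : ℕ → ℝ := fun n => 1 / ((n : ℝ) + 2) with hδdef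
  have hδpos : ∀ n, 0 < δ n := fun n => by positivity
  have hδlt : ∀ n, δ n < 1 := by
    intro n
    rw [hδdef]
    rw [div_lt_one (by positivity)]
    have : (0:ℝ) ≤ (n:ℝ) := Nat.cast_nonneg n
    linarith
  set κ : ℕ → ℝ := fun n => 1 / ((n : ℝ) + 1) with hκdef
  have hκpos : ∀ n, 0 < κ n := fun n => by positivity
  set ε : ℕ → ℝ := fun n => (1 + κ n) / ((1 - δ n) * b n) - 1 with hεdef
  have hden : ∀ n, 1 ≤ n → 0 < (1 - δ n) * b n := by
    intro n hn
    exact mul_pos (by linarith [hδlt n]) (hbpos n hn)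
  have hεpos : ∀ n, 1 ≤ n → 0 < ε n := by
    intro n hn
    have h1 : (1 - δ n) * b n ≤ 1 := by
      have h2 := hble1 n hn
      have h3 := hbpos n hn
      have h4 := hδpos n
      nlinarith
    have h5 := hden n hn
    have : 1 < (1 + κ n) / ((1 - δ n) * b n) := by
      rw [lt_div_iff₀ h5]
      have := hκpos n
      linarith
    simp only [hεdef]
    linarith
  have hkeyεδ : ∀ n, 1 ≤ n → (1 + ε n) * ((1 - δ n) * b n) = 1 + κ n := by
    intro n hn
    have h5 := (hden n hn).ne'
    simp only [hεdef]
    rw [add_sub_cancel, div_mul_cancel₀ _ h5]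
  have hδtend : Tendsto δ atTop (𝓝 0) := by
    refine squeeze_zero (f := δ) (g := fun n : ℕ => 1 / ((n:ℝ) + 1))
      (fun n => (hδpos n).le) (fun n => ?_) tendsto_one_div_add_atTop_nhds_zero_nat
    rw [hδdef]
    apply div_le_div_of_nonneg_left one_pos.le (by positivity)
    linarith [Nat.cast_nonneg (α := ℝ) n]
  have hκtend : Tendsto κ atTop (𝓝 0) := by
    simpa [hκdef, one_div] using (tendsto_one_div_add_atTop_nhds_zero_nat :
      Tendsto (fun n : ℕ => 1 / ((n : ℝ) + 1)) atTop (𝓝 0))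
  have hεtend : Tendsto ε atTop (𝓝 0) := by
    have h1 : Tendsto (fun n => 1 + κ n) atTop (𝓝 1) := by
      simpa using tendsto_const_nhds.add hκtend
    have h2 : Tendsto (fun n => (1 - δ n) * b n) atTop (𝓝 1) := by
      have := ((tendsto_const_nhds (x := (1:ℝ))).sub hδtend).mul hblim
      simpa using this
    have h3 := (h1.div h2 one_ne_zero).sub (tendsto_const_nhds (x := (1:ℝ)))
    simpa [hεdef] using h3
  -- uniform bound on ε
  obtain ⟨E, hE0, hEb⟩ : ∃ E : ℝ, 0 ≤ E ∧ ∀ n, ε n ≤ E := by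
    obtain ⟨N, hN⟩ := eventually_atTop.1 (hεtend.eventually_lt_const one_pos)
    refine ⟨1 + ∑ k ∈ Finset.range (N + 1), |ε k|, by positivity, fun n => ?_⟩
    rcases le_or_gt N n with h | h
    · have := hN n h
      have : (0:ℝ) ≤ ∑ k ∈ Finset.range (N + 1), |ε k| :=
        Finset.sum_nonneg fun k _ => abs_nonneg _
      linarith [hN n h]
    · have h1 : |ε n| ≤ ∑ k ∈ Finset.range (N + 1), |ε k| :=
        Finset.single_le_sum (fun k _ => abs_nonneg (ε k)) (Finset.mem_range.2 (by omega))
      linarith [le_abs_self (ε n)]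
  -- finite norming sets for the ranges of the projections
  set Vn : ℕ → Subspace ℝ X := fun n => Submodule.span ℝ (e '' Set.Iic n) with hVndef
  have hVfd : ∀ n, FiniteDimensional ℝ (Vn n) := fun n =>
    FiniteDimensional.span_of_finite ℝ ((Set.finite_Iic n).image e)
  have hPmem : ∀ n x, Pn n x ∈ Vn n := by
    intro n x
    rw [hPapp]
    apply Submodule.sum_mem
    intro k hk
    apply Submodule.smul_mem
    exact Submodule.subset_span (Set.mem_image_of_mem e (Finset.mem_Iic.1 hk))
  have hAex : ∀ n, ∃ A : Finset (StrongDual ℝ X), (0 : StrongDual ℝ X) ∈ A ∧ (∀ a ∈ A, ‖a‖ ≤ 1) ∧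
      (∀ a ∈ A, -a ∈ A) ∧ ∀ y ∈ Vn n, ∃ a ∈ A, (1 - δ n) * ‖y‖ ≤ a y :=
    fun n => exists_norming_finset (Vn n) (hVfd n) (hδpos n)
  choose A hA0 hA1 hAsym hAnorm using hAex
  -- the countable boundary candidate
  set Dn : ℕ → Finset (StrongDual ℝ X) :=
    fun n => (A n).image (fun a => (1 + ε n) • (a.comp (Pn n))) with hDndef
  set D : Set (StrongDual ℝ X) := ⋃ (n : ℕ) (_ : 1 ≤ n), (Dn n : Set (StrongDual ℝ X)) with hDdef
  have hmemD : ∀ f : StrongDual ℝ X, f ∈ D ↔ ∃ n, 1 ≤ n ∧ f ∈ Dn n := by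
    intro f
    simp [hDdef, Set.mem_iUnion]
  have hDcount : D.Countable :=
    Set.countable_iUnion fun n => Set.countable_iUnion fun _ => (Dn n).countable_toSet
  have h0Dn : ∀ n, (0 : StrongDual ℝ X) ∈ Dn n := by
    intro n
    rw [hDndef]
    apply Finset.mem_image.2 ⟨0, hA0 n, ?_⟩
    simp
  have h0D : (0 : StrongDual ℝ X) ∈ D := (hmemD 0).2 ⟨1, le_refl 1, h0Dn 1⟩
  have hDsym : ∀ f ∈ D, -f ∈ D := by
    intro f hf
    obtain ⟨n, hn, hfn⟩ := (hmemD f).1 hf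
    obtain ⟨a, ha, rfl⟩ := Finset.mem_image.1 hfn
    refine (hmemD _).2 ⟨n, hn, Finset.mem_image.2 ⟨-a, hAsym n a ha, ?_⟩⟩
    rw [ContinuousLinearMap.neg_comp, smul_neg]
  -- pointwise bounds for members of D
  have hfD1 : ∀ n, 1 ≤ n → ∀ f ∈ Dn n, ∀ x, f x ≤ (1 + ε n) * ‖Pn n x‖ := by
    intro n hn f hfn x
    obtain ⟨a, ha, rfl⟩ := Finset.mem_image.1 hfn
    have h1 : a (Pn n x) ≤ ‖Pn n x‖ := by
      calc a (Pn n x) ≤ |a (Pn n x)| := le_abs_self _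
        _ ≤ ‖a‖ * ‖Pn n x‖ := a.le_opNorm _
        _ ≤ 1 * ‖Pn n x‖ := mul_le_mul_of_nonneg_right (hA1 n a ha) (norm_nonneg _)
        _ = ‖Pn n x‖ := one_mul _
    have h2 : (0:ℝ) ≤ 1 + ε n := by linarith [hεpos n hn]
    calc ((1 + ε n) • (a.comp (Pn n))) x = (1 + ε n) * a (Pn n x) := by
          simp [ContinuousLinearMap.smul_apply, smul_eq_mul]
      _ ≤ (1 + ε n) * ‖Pn n x‖ := mul_le_mul_of_nonneg_left h1 h2
  have hfD2 : ∀ f ∈ D, ∀ x, f x ≤ (1 + E) * ‖x‖ := by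
    intro f hf x
    obtain ⟨n, hn, hfn⟩ := (hmemD f).1 hf
    calc f x ≤ (1 + ε n) * ‖Pn n x‖ := hfD1 n hn f hfn x
      _ ≤ (1 + E) * ‖x‖ := by
          apply mul_le_mul (by linarith [hEb n]) (hPle n x) (norm_nonneg _) (by linarith)
  -- the new norm
  set ν0 : X → ℝ := fun x => sSup ((fun f : StrongDual ℝ X => f x) '' D) with hν0def
  have hΦne : ∀ x : X, ((fun f : StrongDual ℝ X => f x) '' D).Nonempty :=
    fun x => ⟨(0 : StrongDual ℝ X) x, ⟨0, h0D, rfl⟩⟩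
  have hΦbdd : ∀ x : X, BddAbove ((fun f : StrongDual ℝ X => f x) '' D) := by
    intro x
    exact ⟨(1 + E) * ‖x‖, by rintro t ⟨f, hf, rfl⟩; exact hfD2 f hf x⟩
  have hle_ν : ∀ f ∈ D, ∀ x, f x ≤ ν0 x :=
    fun f hf x => le_csSup (hΦbdd x) ⟨f, hf, rfl⟩
  have hν_le : ∀ x, ν0 x ≤ (1 + E) * ‖x‖ :=
    fun x => csSup_le (hΦne x) (by rintro t ⟨f, hf, rfl⟩; exact hfD2 f hf x)
  have hν_zero : ν0 0 = 0 := by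
    show sSup ((fun f : StrongDual ℝ X => f (0:X)) '' D) = 0
    have : (fun f : StrongDual ℝ X => f (0:X)) '' D = {0} := by
      apply Set.eq_singleton_iff_nonempty_unique_mem.2
      exact ⟨hΦne 0, by rintro t ⟨f, hf, rfl⟩; simp⟩
    rw [this, csSup_singleton]
  have hν_neg : ∀ x, ν0 (-x) = ν0 x := by
    have key : ∀ x, (fun f : StrongDual ℝ X => f (-x)) '' D = (fun f : StrongDual ℝ X => f x) '' D := by
      intro x
      ext t
      constructor
      · rintro ⟨f, hf, rfl⟩
        exact ⟨-f, hDsym f hf, by simp⟩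
      · rintro ⟨f, hf, rfl⟩
        exact ⟨-f, hDsym f hf, by simp⟩
    intro x
    show sSup ((fun f : StrongDual ℝ X => f (-x)) '' D) = sSup ((fun f : StrongDual ℝ X => f x) '' D)
    rw [key x]
  have hν_smul_nn : ∀ c : ℝ, 0 ≤ c → ∀ x, ν0 (c • x) = c * ν0 x := by
    intro c hc x
    have h1 : (fun f : StrongDual ℝ X => f (c • x)) '' D
        = (fun t => c * t) '' ((fun f : StrongDual ℝ X => f x) '' D) := by
      rw [Set.image_image]
      apply Set.image_congr
      intro f _
      simp [map_smul, smul_eq_mul]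
    show sSup ((fun f : StrongDual ℝ X => f (c • x)) '' D) = c * sSup ((fun f : StrongDual ℝ X => f x) '' D)
    rw [h1]
    exact (Monotone.map_csSup_of_continuousAt (by fun_prop)
      (fun a b hab => mul_le_mul_of_nonneg_left hab hc) (hΦne x) (hΦbdd x)).symm
  have hν_smul : ∀ (c : ℝ) (x : X), ν0 (c • x) = |c| * ν0 x := by
    intro c x
    rcases le_or_gt 0 c with hc | hc
    · rw [abs_of_nonneg hc]; exact hν_smul_nn c hc x
    · have h1 : c • x = (-c) • (-x) := by simp
      rw [h1, hν_smul_nn (-c) (by linarith) (-x), hν_neg, abs_of_neg hc]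
  have hν_add : ∀ x y : X, ν0 (x + y) ≤ ν0 x + ν0 y := by
    intro x y
    apply csSup_le (hΦne _)
    rintro t ⟨f, hf, rfl⟩
    calc f (x + y) = f x + f y := map_add f x y
      _ ≤ ν0 x + ν0 y := add_le_add (hle_ν f hf x) (hle_ν f hf y)
  set ν : Seminorm ℝ X :=
    { toFun := ν0
      map_zero' := hν_zero
      add_le' := hν_add
      neg' := hν_neg
      smul' := fun a x => by simpa [Real.norm_eq_abs] using hν_smul a x } with hνdef
  have hνcoe : ∀ x, ν x = ν0 x := fun x => rfl
  -- lower bound on the sphere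
  have hlow : ∀ x : X, ‖x‖ = 1 → ∃ m, 1 ≤ m ∧ 1 + κ m ≤ ν0 x := by
    intro x hx
    have hxs : x ∈ Metric.sphere (0 : X) 1 := mem_sphere_zero_iff_norm.2 hx
    rw [hcover] at hxs
    obtain ⟨m, hm, hxm⟩ := Set.mem_iUnion₂.1 hxs
    obtain ⟨a, ha, hanorm⟩ := hAnorm m (Pn m x) (hPmem m x)
    set f : StrongDual ℝ X := (1 + ε m) • (a.comp (Pn m)) with hfdef
    have hfD : f ∈ D := (hmemD f).2 ⟨m, hm, Finset.mem_image.2 ⟨a, ha, rfl⟩⟩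
    have hfx : 1 + κ m ≤ f x := by
      have h1 : f x = (1 + ε m) * a (Pn m x) := by
        rw [hfdef]; simp [ContinuousLinearMap.smul_apply, smul_eq_mul]
      have h2 : (1 - δ m) * ‖Pn m x‖ ≤ a (Pn m x) := hanorm
      have h3 : b m ≤ ‖Pn m x‖ := hbP m hm x hxm
      have h4 : 0 < 1 + ε m := by linarith [hεpos m hm]
      have h5 : 0 < 1 - δ m := by linarith [hδlt m]
      have h6 := hkeyεδ m hm
      rw [h1, ← h6]
      have h7 : (1 - δ m) * b m ≤ (1 - δ m) * ‖Pn m x‖ :=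
        mul_le_mul_of_nonneg_left h3 h5.le
      have h8 : (1 - δ m) * b m ≤ a (Pn m x) := le_trans h7 h2
      exact mul_le_mul_of_nonneg_left h8 h4.le
    exact ⟨m, hm, le_trans hfx (hle_ν f hfD x)⟩
  have hstrict : ∀ x : X, x ≠ 0 → ∃ m, 1 ≤ m ∧ (1 + κ m) * ‖x‖ ≤ ν0 x := by
    intro x hx
    have hxn : ‖x‖ ≠ 0 := norm_ne_zero_iff.2 hx
    have hxu : ‖(‖x‖⁻¹ • x)‖ = 1 := by
      rw [norm_smul, norm_inv, norm_norm, inv_mul_cancel₀ hxn]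
    obtain ⟨m, hm, hmle⟩ := hlow _ hxu
    refine ⟨m, hm, ?_⟩
    have h1 : ν0 x = ‖x‖ * ν0 (‖x‖⁻¹ • x) := by
      conv_lhs => rw [show x = ‖x‖ • (‖x‖⁻¹ • x) by rw [smul_smul, mul_inv_cancel₀ hxn, one_smul]]
      exact hν_smul_nn _ (norm_nonneg x) _
    rw [h1]
    calc (1 + κ m) * ‖x‖ = ‖x‖ * (1 + κ m) := mul_comm _ _
      _ ≤ ‖x‖ * ν0 (‖x‖⁻¹ • x) := mul_le_mul_of_nonneg_left hmle (norm_nonneg x)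
  have hnorm_le_ν : ∀ x : X, ‖x‖ ≤ ν0 x := by
    intro x
    by_cases hx : x = 0
    · rw [hx, hν_zero, norm_zero]
    · obtain ⟨m, hm, h⟩ := hstrict x hx
      nlinarith [hκpos m, norm_nonneg x]
  -- tail estimate
  have hTail : ∀ x : X, x ≠ 0 → ∃ η > (0:ℝ), ∃ N, 1 ≤ N ∧
      ∀ n, N ≤ n → ∀ f ∈ Dn n, f x ≤ ν0 x - η := by
    intro x hx
    obtain ⟨m, hm, hmle⟩ := hstrict x hx
    have hxpos : 0 < ‖x‖ := norm_pos_iff.2 hx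
    set η := ‖x‖ * κ m / 2 with hηdef
    have hηpos : 0 < η := by
      have := hκpos m
      positivity
    obtain ⟨N₀, hN₀⟩ := eventually_atTop.1 (hεtend.eventually_le_const (half_pos (hκpos m)))
    refine ⟨η, hηpos, max N₀ 1, le_max_right _ _, fun n hn f hfn => ?_⟩
    have hn1 : 1 ≤ n := le_trans (le_max_right _ _) hn
    have hnN : N₀ ≤ n := le_trans (le_max_left _ _) hn
    have h1 : f x ≤ (1 + ε n) * ‖Pn n x‖ := hfD1 n hn1 f hfn x
    have h2 : ‖Pn n x‖ ≤ ‖x‖ := hPle n x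
    have h3 : ε n ≤ κ m / 2 := hN₀ n hnN
    have h4 : 0 < 1 + ε n := by linarith [hεpos n hn1]
    have h5 : (1 + ε n) * ‖Pn n x‖ ≤ (1 + ε n) * ‖x‖ := mul_le_mul_of_nonneg_left h2 h4.le
    have h6 : (1 + ε n) * ‖x‖ ≤ (1 + κ m / 2) * ‖x‖ :=
      mul_le_mul_of_nonneg_right (by linarith) (norm_nonneg x)
    have h7 : (1 + κ m / 2) * ‖x‖ = (1 + κ m) * ‖x‖ - η := by rw [hηdef]; ring
    have h8 : (1 + κ m) * ‖x‖ - η ≤ ν0 x - η := by linarith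
    exact h1.trans (h5.trans (h6.trans (h7.le.trans h8)))
  refine ⟨ν, ?_, ?_, D, hDcount, ?_, ?_⟩
  · -- equivalent norm
    exact ⟨1, 1 + E, one_pos, fun x => ⟨by rw [one_mul, hνcoe]; exact hnorm_le_ν x, hν_le x⟩⟩
  · -- polyhedral
    intro Y hYfd
    set sphY : Set X := Subtype.val '' (Metric.sphere (0 : Y) 1) with hsphYdef
    have hsphY_comp : IsCompact sphY := (isCompact_sphere 0 1).image continuous_subtype_val
    have hsphY_norm : ∀ u ∈ sphY, ‖u‖ = 1 := by
      rintro u ⟨v, hv, rfl⟩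
      simpa [Submodule.coe_norm] using mem_sphere_zero_iff_norm.1 hv
    have hsphY_ne0 : ∀ u ∈ sphY, u ≠ 0 := by
      intro u hu h0
      have := hsphY_norm u hu
      rw [h0] at this
      simp at this
    have hTail' : ∀ u : X, ∃ η : ℝ, ∃ N : ℕ, u ≠ 0 → (0 < η ∧ 1 ≤ N ∧
        ∀ n, N ≤ n → ∀ f ∈ Dn n, f u ≤ ν0 u - η) := by
      intro u
      by_cases hu : u = 0
      · exact ⟨1, 1, fun h => absurd hu h⟩
      · obtain ⟨η, hη, N, hN1, hNtail⟩ := hTail u hu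
        exact ⟨η, N, fun _ => ⟨hη, hN1, hNtail⟩⟩
    choose η N hηN using hTail'
    set L : ℝ := 1 + E with hLdef
    have hL : 0 < L := by rw [hLdef]; linarith
    obtain ⟨t, ht_sub, ht_cover⟩ := hsphY_comp.elim_nhds_subcover
      (fun u => Metric.ball u (η u / (3 * L)))
      (fun u hu => Metric.ball_mem_nhds u (by
        have := (hηN u (hsphY_ne0 u hu)).1
        positivity))
    set N₀ : ℕ := max 2 (t.sup N) with hN₀def
    set Hd : Finset (StrongDual ℝ X) := (Finset.Ico 1 N₀).biUnion Dn with hHddef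
    have hHdD : ∀ f ∈ Hd, f ∈ D := by
      intro f hf
      obtain ⟨n, hn, hfn⟩ := Finset.mem_biUnion.1 hf
      exact (hmemD f).2 ⟨n, (Finset.mem_Ico.1 hn).1, hfn⟩
    have hHd0 : (0 : StrongDual ℝ X) ∈ Hd :=
      Finset.mem_biUnion.2 ⟨1, Finset.mem_Ico.2
        ⟨le_refl 1, lt_of_lt_of_le one_lt_two (le_max_left _ _)⟩, h0Dn 1⟩
    have hHdne : Hd.Nonempty := ⟨0, hHd0⟩
    have hfLip : ∀ f ∈ D, ∀ y u : X, f y ≤ f u + L * ‖y - u‖ := by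
      intro f hf y u
      have h1 : f (y - u) ≤ L * ‖y - u‖ := hfD2 f hf (y - u)
      have heq : f y = f u + f (y - u) := by rw [← map_add, add_sub_cancel]
      linarith
    have hνLip : ∀ y u : X, ν0 u ≤ ν0 y + L * ‖u - y‖ := by
      intro y u
      have h1 : ν0 u ≤ ν0 y + ν0 (u - y) := by
        have := hν_add y (u - y)
        rwa [add_sub_cancel] at this
      have h2 : ν0 (u - y) ≤ L * ‖u - y‖ := hν_le (u - y)
      linarith
    have hkeyY : ∀ y ∈ sphY, ∃ c : ℝ, 0 < c ∧ ∀ n, N₀ ≤ n → ∀ f ∈ Dn n, f y ≤ ν0 y - c := by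
      intro y hy
      obtain ⟨u, hut, hyball⟩ := Set.mem_iUnion₂.1 (ht_cover hy)
      have hus : u ∈ sphY := ht_sub u hut
      obtain ⟨hηu, hNu1, hNutail⟩ := hηN u (hsphY_ne0 u hus)
      refine ⟨η u / 3, by positivity, fun n hn f hfn => ?_⟩
      have hnNu : N u ≤ n := le_trans (le_trans (Finset.le_sup hut) (le_max_right 2 _)) hn
      have hn1 : 1 ≤ n := le_trans (le_trans one_le_two (le_max_left 2 (t.sup N))) hn
      have hfD' : f ∈ D := (hmemD f).2 ⟨n, hn1, hfn⟩
      have hdist : ‖y - u‖ < η u / (3 * L) := by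
        have := Metric.mem_ball.1 hyball
        rwa [dist_eq_norm] at this
      have h1 : f y ≤ f u + L * ‖y - u‖ := hfLip f hfD' y u
      have h2 : f u ≤ ν0 u - η u := hNutail n hnNu f hfn
      have h3 : ν0 u ≤ ν0 y + L * ‖u - y‖ := hνLip y u
      have h4 : ‖u - y‖ = ‖y - u‖ := norm_sub_rev u y
      rw [h4] at h3
      have h5 : L * ‖y - u‖ ≤ η u / 3 := by
        calc L * ‖y - u‖ ≤ L * (η u / (3 * L)) := mul_le_mul_of_nonneg_left hdist.le hL.le
          _ = η u / 3 := by field_simp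
      have c1 : f y ≤ ν0 u - η u + L * ‖y - u‖ := by linarith only [h1, h2]
      have c2 : ν0 u - η u + L * ‖y - u‖ ≤ ν0 y + 2 * (L * ‖y - u‖) - η u := by
        linarith only [h3]
      have c3 : ν0 y + 2 * (L * ‖y - u‖) - η u ≤ ν0 y - η u / 3 := by linarith only [h5]
      exact c1.trans (c2.trans c3)
    set M : X → ℝ := fun z => Hd.sup' hHdne (fun f => f z) with hMdef
    have hMν_sph : ∀ y ∈ sphY, ν0 y = M y := by
      intro y hy
      obtain ⟨c, hc, htail⟩ := hkeyY y hy
      have hM_le : M y ≤ ν0 y := Finset.sup'_le _ _ fun f hf => hle_ν f (hHdD f hf) y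
      have hν_le_max : ν0 y ≤ max (M y) (ν0 y - c) := by
        apply csSup_le (hΦne y)
        rintro s ⟨f, hf, rfl⟩
        obtain ⟨n, hn1, hfn⟩ := (hmemD f).1 hf
        rcases lt_or_ge n N₀ with h | h
        · exact le_max_of_le_left (Finset.le_sup' (fun f : StrongDual ℝ X => f y)
            (Finset.mem_biUnion.2 ⟨n, Finset.mem_Ico.2 ⟨hn1, h⟩, hfn⟩))
        · exact le_max_of_le_right (htail n h f hfn)
      rcases le_max_iff.1 hν_le_max with h | h
      · exact le_antisymm h hM_le
      · linarith
    have hM0 : M 0 = 0 := by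
      apply le_antisymm
      · apply Finset.sup'_le
        intro f hf
        simp
      · show (0:ℝ) ≤ Hd.sup' hHdne (fun f : StrongDual ℝ X => f (0:X))
        have := Finset.le_sup' (fun f : StrongDual ℝ X => f (0:X)) hHd0
        simpa using this
    have hMsmul : ∀ c : ℝ, 0 ≤ c → ∀ w : X, M (c • w) = c * M w := by
      intro c hc w
      have e1 : Hd.sup' hHdne (fun f : StrongDual ℝ X => f (c • w))
          = Hd.sup' hHdne (fun f : StrongDual ℝ X => c * f w) :=
        Finset.sup'_congr hHdne rfl (fun f hf => by rw [map_smul, smul_eq_mul])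
      have e2 : (fun s : ℝ => c * s) (Hd.sup' hHdne (fun f : StrongDual ℝ X => f w))
          = Hd.sup' hHdne ((fun s : ℝ => c * s) ∘ (fun f : StrongDual ℝ X => f w)) :=
        Finset.comp_sup'_eq_sup'_comp hHdne _ (fun a b' => mul_max_of_nonneg a b' hc)
      show Hd.sup' hHdne (fun f : StrongDual ℝ X => f (c • w))
          = c * Hd.sup' hHdne (fun f : StrongDual ℝ X => f w)
      rw [e1]
      rw [show (fun f : StrongDual ℝ X => c * f w) = ((fun s : ℝ => c * s) ∘ (fun f : StrongDual ℝ X => f w))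
        from rfl]
      rw [← e2]
    have hMν : ∀ z ∈ (Y : Set X), ν0 z = M z := by
      intro z hz
      by_cases hz0 : z = 0
      · rw [hz0, hν_zero, hM0]
      · have hzn : ‖z‖ ≠ 0 := norm_ne_zero_iff.2 hz0
        set y := ‖z‖⁻¹ • z with hydef
        have hysph : y ∈ sphY := by
          refine ⟨⟨y, Y.smul_mem _ hz⟩, ?_, rfl⟩
          rw [mem_sphere_zero_iff_norm]
          show ‖y‖ = 1
          rw [hydef, norm_smul, norm_inv, norm_norm, inv_mul_cancel₀ hzn]
        have hzy : z = ‖z‖ • y := by rw [hydef, smul_smul, mul_inv_cancel₀ hzn, one_smul]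
        calc ν0 z = ν0 (‖z‖ • y) := by rw [← hzy]
          _ = ‖z‖ * ν0 y := hν_smul_nn _ (norm_nonneg z) y
          _ = ‖z‖ * M y := by rw [hMν_sph y hysph]
          _ = M (‖z‖ • y) := (hMsmul _ (norm_nonneg z) y).symm
          _ = M z := by rw [← hzy]
    have hKrepr : {x : X | x ∈ Y ∧ ν x ≤ 1} = {x : X | x ∈ Y ∧ ∀ f ∈ Hd, f x ≤ 1} := by
      ext x
      simp only [Set.mem_setOf_eq]
      constructor
      · rintro ⟨hxY, hx1⟩
        refine ⟨hxY, fun f hf => ?_⟩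
        have hx1' : ν0 x ≤ 1 := hx1
        calc f x ≤ M x := Finset.le_sup' (fun f : StrongDual ℝ X => f x) hf
          _ = ν0 x := (hMν x hxY).symm
          _ ≤ 1 := hx1'
      · rintro ⟨hxY, hfall⟩
        refine ⟨hxY, ?_⟩
        show ν0 x ≤ 1
        rw [hMν x hxY]
        exact Finset.sup'_le _ _ fun f hf => hfall f hf
    have hbdd : Bornology.IsBounded {x : X | x ∈ Y ∧ ν x ≤ 1} := by
      apply (Metric.isBounded_closedBall (x := (0:X)) (r := 1)).subset
      rintro x ⟨hxY, hx1⟩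
      rw [Metric.mem_closedBall, dist_zero_right]
      exact le_trans (hnorm_le_ν x) hx1
    obtain ⟨T, hTfin, hTeq⟩ :=
      polytope_of_halfspaces Y hYfd Hd {x : X | x ∈ Y ∧ ν x ≤ 1} hKrepr hbdd
    exact ⟨T, hTfin, hTeq⟩
  · -- boundary
    constructor
    · exact fun f hf x => hle_ν f hf x
    · intro x hx1'
      have hx1 : ν0 x = 1 := hx1'
      have hx0 : x ≠ 0 := by
        intro h0
        rw [h0, hν_zero] at hx1
        norm_num at hx1
      obtain ⟨η, hη, N, hN1, hNtail⟩ := hTail x hx0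
      set Hd : Finset (StrongDual ℝ X) := (Finset.Ico 1 N).biUnion Dn with hHddef
      have hHdD : ∀ f ∈ Hd, f ∈ D := by
        intro f hf
        obtain ⟨n, hn, hfn⟩ := Finset.mem_biUnion.1 hf
        exact (hmemD f).2 ⟨n, (Finset.mem_Ico.1 hn).1, hfn⟩
      -- some element of D comes close to the sup
      obtain ⟨f₁, hf₁D, hf₁x⟩ : ∃ f ∈ D, 1 - η < f x := by
        by_contra hcon
        push_neg at hcon
        have : ν0 x ≤ 1 - η := csSup_le (hΦne x) (by rintro t ⟨f, hf, rfl⟩; exact hcon f hf)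
        rw [hx1] at this
        linarith
      have hf₁Hd : f₁ ∈ Hd := by
        obtain ⟨n, hn, hfn⟩ := (hmemD f₁).1 hf₁D
        rcases lt_or_ge n N with h | h
        · exact Finset.mem_biUnion.2 ⟨n, Finset.mem_Ico.2 ⟨hn, h⟩, hfn⟩
        · have := hNtail n h f₁ hfn
          rw [hx1] at this
          linarith
      obtain ⟨f₀, hf₀Hd, hf₀max⟩ := Hd.exists_max_image (fun f => f x) ⟨f₁, hf₁Hd⟩
      have hf₀D : f₀ ∈ D := hHdD f₀ hf₀Hd
      have hf₀le : f₀ x ≤ 1 := hx1 ▸ hle_ν f₀ hf₀D x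
      have hmax : (1:ℝ) ≤ max (f₀ x) (1 - η) := by
        rw [← hx1]
        apply csSup_le (hΦne x)
        rintro t ⟨f, hf, rfl⟩
        obtain ⟨n, hn, hfn⟩ := (hmemD f).1 hf
        rcases lt_or_ge n N with h | h
        · exact le_max_of_le_left (hf₀max f (Finset.mem_biUnion.2 ⟨n, Finset.mem_Ico.2 ⟨hn, h⟩, hfn⟩))
        · refine le_max_of_le_right ?_
          have := hNtail n h f hfn
          rw [hx1] at this
          linarith
      rcases le_max_iff.1 hmax with h | h
      · exact ⟨f₀, hf₀D, le_antisymm hf₀le h⟩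
      · linarith
  · -- property (*)
    intro g hg x hsup
    have hx1 : ν0 x = 1 := hsup
    have hx0 : x ≠ 0 := by
      intro h0
      rw [h0, hν_zero] at hx1
      norm_num at hx1
    -- the norm of x is strictly less than 1
    have hxlt : ‖x‖ < 1 := by
      obtain ⟨m, hm, hmle⟩ := hstrict x hx0
      by_contra hge
      push_neg at hge
      have h7 : 1 + κ m ≤ (1 + κ m) * ‖x‖ :=
        le_mul_of_one_le_right (by linarith [hκpos m]) hge
      have h8 : (1 + κ m) * ‖x‖ ≤ 1 := by
        have h9 := hmle
        rwa [hx1] at h9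
      linarith [hκpos m]
    -- weak-* limit points are dominated by the original norm
    have hgle : g x ≤ ‖x‖ := by
      apply le_of_forall_pos_le_add
      intro ρ hρ
      obtain ⟨N₀, hN₀⟩ := eventually_atTop.1
        (hεtend.eventually_le_const (div_pos (half_pos hρ) (by positivity : (0:ℝ) < ‖x‖ + 1)))
      set U : Set (WeakDual ℝ X) := (fun φ : WeakDual ℝ X => φ x) ⁻¹' (Set.Ioi (g x - ρ/2))
        with hUdef
      have hUopen : IsOpen U := (WeakDual.eval_continuous x).isOpen_preimage _ isOpen_Ioi
      have hgU : StrongDual.toWeakDual g ∈ U := by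
        simp only [hUdef, Set.mem_preimage, Set.mem_Ioi]
        show g x - ρ/2 < g x
        linarith
      have hinf := hg U hUopen hgU
      have hheadfin : ({f : StrongDual ℝ X | ∃ n, n < N₀ ∧ f ∈ Dn n}).Finite := by
        have : {f : StrongDual ℝ X | ∃ n, n < N₀ ∧ f ∈ Dn n}
            = ⋃ n ∈ Finset.range N₀, (Dn n : Set (StrongDual ℝ X)) := by
          ext f
          simp [Finset.mem_range]
        rw [this]
        exact Set.Finite.biUnion (Finset.range N₀).finite_toSet fun n _ => (Dn n).finite_toSet
      obtain ⟨f, hfmem, hfhead⟩ :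
          ∃ f ∈ {f : StrongDual ℝ X | f ∈ D ∧ StrongDual.toWeakDual f ∈ U},
            f ∉ {f : StrongDual ℝ X | ∃ n, n < N₀ ∧ f ∈ Dn n} := by
        obtain ⟨f, hf1, hf2⟩ := Set.not_subset.1
          (fun hsub => (hheadfin.subset hsub).not_infinite hinf)
        exact ⟨f, hf1, hf2⟩
      obtain ⟨hfD, hfU⟩ := hfmem
      obtain ⟨n, hn1, hfn⟩ := (hmemD f).1 hfD
      have hnN : N₀ ≤ n := by
        by_contra h
        exact hfhead ⟨n, by omega, hfn⟩
      have hfx : g x - ρ/2 < f x := hfU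
      have h1 : f x ≤ (1 + ε n) * ‖Pn n x‖ := hfD1 n hn1 f hfn x
      have h2 : (1 + ε n) * ‖Pn n x‖ ≤ (1 + ε n) * ‖x‖ :=
        mul_le_mul_of_nonneg_left (hPle n x) (by linarith [hεpos n hn1])
      have h3 : ε n ≤ ρ/2 / (‖x‖ + 1) := hN₀ n hnN
      have h4 : (1 + ε n) * ‖x‖ ≤ ‖x‖ + ρ/2 := by
        have h5 : ε n * ‖x‖ ≤ ρ/2 / (‖x‖ + 1) * ‖x‖ :=
          mul_le_mul_of_nonneg_right h3 (norm_nonneg x)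
        have h6 : ρ/2 / (‖x‖ + 1) * ‖x‖ ≤ ρ/2 := by
          rw [div_mul_eq_mul_div, div_le_iff₀ (by positivity)]
          nlinarith [norm_nonneg x]
        nlinarith
      have hchain : f x ≤ ‖x‖ + ρ/2 := h1.trans (h2.trans h4)
      have : g x - ρ/2 < ‖x‖ + ρ/2 := lt_of_lt_of_le hfx hchain
      linarith
    linarith

end
end

section
/- Let K be a σ-discrete compact Hausdorff space, i.e., K = ⋃_{n=0}^∞ D_n where each D_n is a discrete subset of K (every point of D_n is relatively isolated in D_n). Then, for every ε > 0, the space C(K) of continuous real-valued functions on K with the supremum norm admits an equivalent polyhedral norm |||·||| satisfying (1−ε)‖f‖_∞ ≤ |||f||| ≤ (1+ε)‖f‖_∞ for all f ∈ C(K), and (C(K), |||·|||) admits a boundary having property (*). -/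
open NormedSpace Filter Set Topology Pointwise

noncomputable section

section SpikeWeight

variable {K : Type*} [TopologicalSpace K] [T1Space K]

/-- A point of a discrete subset is not an accumulation point of it. -/
lemma not_accPt_of_discrete (S : Set K) [h : DiscreteTopology S] {z : K} (hz : z ∈ S) :
    z ∉ derivedSet S := by
  intro hacc
  rw [mem_derivedSet] at hacc
  exact hacc.ne ((discreteTopology_subtype_iff).1 h z hz)

lemma not_mem_closure_diff_of_not_accPt {S : Set K} {z : K} (h : z ∉ derivedSet S) :
    z ∉ closure (S \ {z}) := by
  rw [mem_derivedSet, accPt_principal_iff_clusterPt] at h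
  rw [mem_closure_iff_clusterPt]
  exact h

theorem exists_spike_weight (D : ℕ → Set K) (hdisc : ∀ n, DiscreteTopology (D n))
    (hcover : (Set.univ : Set K) = ⋃ n, D n) {c : ℝ} (hc : 0 < c) :
    ∃ w : K → ℝ, (∀ z, 1 ≤ w z) ∧ (∀ z, w z ≤ 1 + c) ∧
      (∀ z, ∃ U ∈ 𝓝 z, ∃ δ > 0, ∀ x ∈ U, x ≠ z → w x ≤ w z - δ) := by
  classical
  have hmem : ∀ z : K, ∃ k, z ∈ D k := by
    intro z
    have : z ∈ ⋃ k, D k := hcover ▸ Set.mem_univ z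
    exact Set.mem_iUnion.1 this
  obtain ⟨r, hrdef⟩ : ∃ r : ℝ, r = (8:ℝ)⁻¹ := ⟨_, rfl⟩
  have hr0 : (0:ℝ) < r := by norm_num [hrdef]
  have hr1 : r < 1 := by norm_num [hrdef]
  obtain ⟨n, hn⟩ : ∃ n : K → ℕ, ∀ z, n z = Nat.find (hmem z) := ⟨_, fun _ => rfl⟩
  have hzn : ∀ z, z ∈ D (n z) := by intro z; rw [hn]; exact Nat.find_spec (hmem z)
  obtain ⟨g, hgdef⟩ :
      ∃ g : K → ℕ → ℝ, ∀ z l, g z l = if z ∈ derivedSet (D l) then r ^ l else 0 :=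
    ⟨_, fun _ _ => rfl⟩
  have hg_nonneg : ∀ z l, 0 ≤ g z l := by
    intro z l
    rw [hgdef]
    split_ifs
    exacts [le_of_lt (pow_pos hr0 l), le_rfl]
  have hg_le : ∀ z l, g z l ≤ r ^ l := by
    intro z l
    rw [hgdef]
    split_ifs
    exacts [le_rfl, le_of_lt (pow_pos hr0 l)]
  have hgeom : Summable (fun l : ℕ => r ^ l) := summable_geometric_of_lt_one hr0.le hr1
  have hSg : ∀ z, Summable (g z) := fun z =>
    Summable.of_nonneg_of_le (hg_nonneg z) (hg_le z) hgeom
  obtain ⟨S, hSdef⟩ : ∃ S : K → ℝ, ∀ z, S z = ∑' l, g z l := ⟨_, fun _ => rfl⟩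
  obtain ⟨V, hVdef⟩ : ∃ V : K → ℝ, ∀ z, V z = r ^ (n z) / 2 + S z := ⟨_, fun _ => rfl⟩
  have hS_nonneg : ∀ z, 0 ≤ S z := by
    intro z; rw [hSdef]; exact tsum_nonneg (hg_nonneg z)
  have hS_le : ∀ z, S z ≤ (8:ℝ)/7 := by
    intro z
    rw [hSdef]
    calc ∑' l, g z l ≤ ∑' l, r ^ l := Summable.tsum_le_tsum (hg_le z) (hSg z) hgeom
    _ = (1 - r)⁻¹ := tsum_geometric_of_lt_one hr0.le hr1
    _ = (8:ℝ)/7 := by norm_num [hrdef]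
  have hV_nonneg : ∀ z, 0 ≤ V z := by
    intro z
    rw [hVdef]
    have h1 := le_of_lt (pow_pos hr0 (n z))
    have h2 := hS_nonneg z
    linarith
  have hV_le : ∀ z, V z ≤ 2 := by
    intro z
    rw [hVdef]
    have h1 : r ^ (n z) ≤ 1 := pow_le_one₀ hr0.le hr1.le
    have h2 := hS_le z
    linarith
  -- the spike property for V
  have hspikeV : ∀ z : K, ∃ U ∈ 𝓝 z, ∀ x ∈ U, x ≠ z → V x ≤ V z - r ^ (n z) / 16 := by
    intro z
    have hWl : ∀ l : ℕ, ∃ W ∈ 𝓝 z,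
        z ∉ derivedSet (D l) → ∀ x ∈ W, x ≠ z → x ∉ D l ∧ x ∉ derivedSet (D l) := by
      intro l
      by_cases hzl : z ∈ derivedSet (D l)
      · exact ⟨Set.univ, Filter.univ_mem, fun h => absurd hzl h⟩
      · refine ⟨(derivedSet (D l))ᶜ ∩ (closure (D l \ {z}))ᶜ, ?_, ?_⟩
        · refine Filter.inter_mem ?_ ?_
          · exact (isClosed_derivedSet (D l)).isOpen_compl.mem_nhds hzl
          · exact isClosed_closure.isOpen_compl.mem_nhds
              (not_mem_closure_diff_of_not_accPt hzl)
        · intro _ x hx hxz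
          exact ⟨fun hxl => hx.2 (subset_closure ⟨hxl, hxz⟩), hx.1⟩
    choose W hWnhds hWprop using hWl
    refine ⟨⋂ l ∈ Finset.range (n z + 1), W l, ?_, ?_⟩
    · exact (Filter.biInter_finset_mem _).2 fun l _ => hWnhds l
    · intro x hxU hxz
      have hxW : ∀ l, l ≤ n z → x ∈ W l := by
        intro l hl
        exact Set.mem_iInter₂.1 hxU l (Finset.mem_range.2 (Nat.lt_succ_of_le hl))
      have KEY1 : ∀ l, l ≤ n z → x ∈ D l → z ∈ derivedSet (D l) := by
        intro l hlN hxl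
        by_contra hcon
        exact (hWprop l hcon x (hxW l hlN) hxz).1 hxl
      have KEY2 : ∀ l, l ≤ n z → x ∈ derivedSet (D l) → z ∈ derivedSet (D l) := by
        intro l hlN hxl
        by_contra hcon
        exact (hWprop l hcon x (hxW l hlN) hxz).2 hxl
      have hmx : x ∉ derivedSet (D (n x)) :=
        not_accPt_of_discrete (D (n x)) (hzn x)
      have hdecomp : S x = (∑ l ∈ Finset.range (n z + 1), g x l)
          + ∑' l, g x (l + (n z + 1)) := by
        rw [hSdef]
        exact (Summable.sum_add_tsum_nat_add (n z + 1) (hSg x)).symm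
      have htailsummable : Summable (fun l : ℕ => g x (l + (n z + 1))) :=
        (summable_nat_add_iff (n z + 1)).2 (hSg x)
      have hgeo2 : Summable (fun l : ℕ => r ^ (l + (n z + 1))) :=
        (summable_nat_add_iff (n z + 1)).2 hgeom
      have htail : ∑' l, g x (l + (n z + 1)) ≤ r ^ (n z) / 7 := by
        have h2 : ∑' l : ℕ, r ^ (l + (n z + 1)) = (1-r)⁻¹ * r ^ (n z + 1) := by
          calc ∑' l : ℕ, r ^ (l + (n z + 1)) = ∑' l : ℕ, r ^ l * r ^ (n z + 1) := by
                congr 1; funext l; rw [pow_add]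
          _ = (∑' l : ℕ, r ^ l) * r ^ (n z + 1) := tsum_mul_right
          _ = (1-r)⁻¹ * r ^ (n z + 1) := by rw [tsum_geometric_of_lt_one hr0.le hr1]
        have h3 : (1-r)⁻¹ * r ^ (n z + 1) = r ^ (n z) / 7 := by
          rw [pow_succ, hrdef]
          norm_num
          ring
        calc ∑' l, g x (l + (n z + 1)) ≤ ∑' l : ℕ, r ^ (l + (n z + 1)) :=
              Summable.tsum_le_tsum (fun l => hg_le x (l + (n z + 1))) htailsummable hgeo2
        _ = (1-r)⁻¹ * r ^ (n z + 1) := h2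
        _ = r ^ (n z) / 7 := h3
      have hfront_le : ∀ l ∈ Finset.range (n z + 1), g x l ≤ g z l := by
        intro l hl
        have hlN : l ≤ n z := Nat.lt_succ_iff.1 (Finset.mem_range.1 hl)
        by_cases hxl : x ∈ derivedSet (D l)
        · have hzl := KEY2 l hlN hxl
          rw [hgdef, hgdef, if_pos hxl, if_pos hzl]
        · rw [hgdef, if_neg hxl]
          exact hg_nonneg z l
      have hSzLB : ∑ l ∈ Finset.range (n z + 1), g z l ≤ S z := by
        rw [hSdef]
        exact Summable.sum_le_tsum _ (fun l _ => hg_nonneg z l) (hSg z)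
      have hrNpos : (0:ℝ) < r ^ (n z) := pow_pos hr0 (n z)
      rw [hVdef, hVdef]
      by_cases hcase : n x ≤ n z
      · -- low membership index: cancellation
        have hmLz : z ∈ derivedSet (D (n x)) := KEY1 (n x) hcase (hzn x)
        have hmmem : n x ∈ Finset.range (n z + 1) := Finset.mem_range.2 (Nat.lt_succ_of_le hcase)
        have hsum_x : ∑ l ∈ Finset.range (n z + 1), g x l
            ≤ (∑ l ∈ Finset.range (n z + 1), g z l) - r ^ (n x) := by
          have e1 : g x (n x) + ∑ l ∈ (Finset.range (n z + 1)).erase (n x), g x l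
              = ∑ l ∈ Finset.range (n z + 1), g x l := Finset.add_sum_erase _ _ hmmem
          have e2 : g z (n x) + ∑ l ∈ (Finset.range (n z + 1)).erase (n x), g z l
              = ∑ l ∈ Finset.range (n z + 1), g z l := Finset.add_sum_erase _ _ hmmem
          have e3 : g x (n x) = 0 := by rw [hgdef, if_neg hmx]
          have e4 : g z (n x) = r ^ (n x) := by rw [hgdef, if_pos hmLz]
          have e5 : ∑ l ∈ (Finset.range (n z + 1)).erase (n x), g x l
              ≤ ∑ l ∈ (Finset.range (n z + 1)).erase (n x), g z l :=
            Finset.sum_le_sum fun l hl => hfront_le l (Finset.mem_of_mem_erase hl)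
          linarith
        have hrm : r ^ (n z) ≤ r ^ (n x) := pow_le_pow_of_le_one hr0.le hr1.le hcase
        linarith
      · push_neg at hcase
        have hrm : r ^ (n x) ≤ r ^ (n z + 1) := pow_le_pow_of_le_one hr0.le hr1.le hcase
        have hre : r ^ (n z + 1) = r ^ (n z) * 8⁻¹ := by rw [pow_succ, hrdef]
        have hsum_x : ∑ l ∈ Finset.range (n z + 1), g x l
            ≤ ∑ l ∈ Finset.range (n z + 1), g z l :=
          Finset.sum_le_sum hfront_le
        nlinarith [hrNpos]
  -- assemble w
  refine ⟨fun z => 1 + (c/2) * V z, ?_, ?_, ?_⟩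
  · intro z
    have := hV_nonneg z
    nlinarith
  · intro z
    have := hV_le z
    nlinarith
  · intro z
    obtain ⟨U, hU, hprop⟩ := hspikeV z
    refine ⟨U, hU, (c/2) * (r ^ (n z) / 16), by positivity, ?_⟩
    intro x hx hxz
    have := hprop x hx hxz
    nlinarith

end SpikeWeight



section NormDev

variable {K : Type*} [TopologicalSpace K] [CompactSpace K] [Nonempty K]

/-- The weighted sup norm. -/
def nuF (w : K → ℝ) (f : C(K, ℝ)) : ℝ := sSup (Set.range fun x => w x * |f x|)

variable {w : K → ℝ} {B : ℝ}

lemma nuF_bddAbove (hw0 : ∀ z, 0 ≤ w z) (hwB : ∀ z, w z ≤ B) (f : C(K, ℝ)) :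
    BddAbove (Set.range fun x => w x * |f x|) := by
  refine ⟨B * ‖f‖, ?_⟩
  rintro y ⟨x, rfl⟩
  have h1 : |f x| ≤ ‖f‖ := by
    rw [← Real.norm_eq_abs]
    exact f.norm_coe_le_norm x
  exact mul_le_mul (hwB x) h1 (abs_nonneg _) ((hw0 x).trans (hwB x))

lemma le_nuF (hw0 : ∀ z, 0 ≤ w z) (hwB : ∀ z, w z ≤ B) (f : C(K, ℝ)) (x : K) :
    w x * |f x| ≤ nuF w f :=
  le_csSup (nuF_bddAbove hw0 hwB f) ⟨x, rfl⟩

lemma nuF_le {a : ℝ} (f : C(K, ℝ)) (h : ∀ x, w x * |f x| ≤ a) : nuF w f ≤ a :=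
  csSup_le (Set.range_nonempty _) (by rintro y ⟨x, rfl⟩; exact h x)

lemma nuF_nonneg (hw0 : ∀ z, 0 ≤ w z) (hwB : ∀ z, w z ≤ B) (f : C(K, ℝ)) :
    0 ≤ nuF w f := by
  have x := Classical.arbitrary K
  exact le_trans (mul_nonneg (hw0 x) (abs_nonneg _)) (le_nuF hw0 hwB f x)

lemma norm_le_nuF (hw1 : ∀ z, 1 ≤ w z) (hwB : ∀ z, w z ≤ B) (f : C(K, ℝ)) :
    ‖f‖ ≤ nuF w f := by
  have hw0 : ∀ z, 0 ≤ w z := fun z => zero_le_one.trans (hw1 z)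
  refine (ContinuousMap.norm_le f (nuF_nonneg hw0 hwB f)).2 fun x => ?_
  calc ‖f x‖ = 1 * |f x| := by rw [one_mul, Real.norm_eq_abs]
  _ ≤ w x * |f x| := mul_le_mul_of_nonneg_right (hw1 x) (abs_nonneg _)
  _ ≤ nuF w f := le_nuF hw0 hwB f x

lemma nuF_le_norm (hw0 : ∀ z, 0 ≤ w z) (hwB : ∀ z, w z ≤ B) (hB : 0 ≤ B) (f : C(K, ℝ)) :
    nuF w f ≤ B * ‖f‖ := by
  refine nuF_le f fun x => ?_
  have h1 : |f x| ≤ ‖f‖ := by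
    rw [← Real.norm_eq_abs]; exact f.norm_coe_le_norm x
  exact mul_le_mul (hwB x) h1 (abs_nonneg _) hB

/-- The weighted sup norm as a seminorm. -/
def nuSeminorm (w : K → ℝ) (hw1 : ∀ z, 1 ≤ w z) (hwB : ∀ z, w z ≤ B) :
    Seminorm ℝ C(K, ℝ) := by
  have hw0 : ∀ z, 0 ≤ w z := fun z => zero_le_one.trans (hw1 z)
  refine Seminorm.of (nuF w) ?_ ?_
  · intro f g
    refine nuF_le _ fun x => ?_
    have h1 : |(f + g) x| ≤ |f x| + |g x| := by
      simp only [ContinuousMap.add_apply]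
      exact abs_add_le _ _
    calc w x * |(f + g) x| ≤ w x * (|f x| + |g x|) :=
          mul_le_mul_of_nonneg_left h1 (hw0 x)
    _ = w x * |f x| + w x * |g x| := by ring
    _ ≤ nuF w f + nuF w g := add_le_add (le_nuF hw0 hwB f x) (le_nuF hw0 hwB g x)
  · -- smul
    have smul_le : ∀ (a : ℝ) (f : C(K, ℝ)), nuF w (a • f) ≤ |a| * nuF w f := by
      intro a f
      refine nuF_le _ fun x => ?_
      have : (a • f) x = a * f x := rfl
      rw [this, abs_mul]
      calc w x * (|a| * |f x|) = |a| * (w x * |f x|) := by ring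
      _ ≤ |a| * nuF w f :=
          mul_le_mul_of_nonneg_left (le_nuF hw0 hwB f x) (abs_nonneg a)
    intro a f
    rcases eq_or_ne a 0 with rfl | ha
    · have h0 : (0 : ℝ) • f = (0 : C(K, ℝ)) := zero_smul _ _
      rw [h0]
      have : (fun x : K => w x * |(0 : C(K, ℝ)) x|) = fun _ => 0 := by
        funext x
        simp
      rw [show nuF w (0 : C(K, ℝ)) = 0 by
        rw [nuF, this, Set.range_const, csSup_singleton]]
      simp [Real.norm_eq_abs]
    · refine le_antisymm ?_ ?_
      · rw [Real.norm_eq_abs]; exact smul_le a f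
      · have h2 := smul_le a⁻¹ (a • f)
        rw [inv_smul_smul₀ ha] at h2
        rw [Real.norm_eq_abs]
        have h3 : |a| * nuF w f ≤ |a| * (|a⁻¹| * nuF w (a • f)) :=
          mul_le_mul_of_nonneg_left h2 (abs_nonneg a)
        rw [abs_inv] at h3
        have ha' : |a| ≠ 0 := abs_ne_zero.2 ha
        calc |a| * nuF w f ≤ |a| * (|a|⁻¹ * nuF w (a • f)) := h3
        _ = nuF w (a • f) := by field_simp
@[simp] lemma nuSeminorm_apply (hw1 : ∀ z, 1 ≤ w z) (hwB : ∀ z, w z ≤ B) (f : C(K, ℝ)) :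
    nuSeminorm w hw1 hwB f = nuF w f := rfl

/-- Lemma A: near-maximizer sets are finite. -/
lemma finite_near_max [T2Space K]
    (hw1 : ∀ z, 1 ≤ w z)
    (hspike : ∀ z, ∃ U ∈ 𝓝 z, ∃ δ > 0, ∀ x ∈ U, x ≠ z → w x ≤ w z - δ)
    (f : C(K, ℝ)) {s : ℝ} (hs : 0 < s) (hb : ∀ x, w x * |f x| ≤ s) :
    ∃ η > 0, {x : K | s - η < w x * |f x|}.Finite := by
  by_contra hcon
  push_neg at hcon
  obtain ⟨T, hTdef⟩ : ∃ T : ℕ → Set K, ∀ k, T k = {x : K | s - 1/(k+1) < w x * |f x|} :=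
    ⟨_, fun _ => rfl⟩
  have hTinf : ∀ k, (T k).Infinite := by
    intro k
    rw [hTdef]
    exact hcon (1/(k+1)) (by positivity)
  have hTanti : Antitone T := by
    refine antitone_nat_of_succ_le fun k => ?_
    rw [hTdef, hTdef]
    intro x hx
    simp only [Set.mem_setOf_eq] at hx ⊢
    push_cast at hx
    have h1 : 1/((k:ℝ)+1+1) ≤ 1/((k:ℝ)+1) := by
      apply one_div_le_one_div_of_le
      · positivity
      · linarith
    linarith
  have hDanti : Antitone fun k => derivedSet (T k) := fun a b hab =>
    derivedSet_mono _ _ (hTanti hab)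
  have hZ : (⋂ k, derivedSet (T k)).Nonempty := by
    refine IsCompact.nonempty_iInter_of_directed_nonempty_isCompact_isClosed _
      (hDanti.directed_ge) (fun k => ?_) (fun k => (isClosed_derivedSet _).isCompact)
      (fun k => isClosed_derivedSet _)
    obtain ⟨x, hx⟩ := (hTinf k).exists_accPt_principal
    exact ⟨x, hx⟩
  obtain ⟨z, hz⟩ := hZ
  have hzT : ∀ k, AccPt z (𝓟 (T k)) := by
    intro k
    have := Set.mem_iInter.1 hz k
    exact this
  obtain ⟨U, hU, δ, hδ, hUprop⟩ := hspike z
  -- w z - δ ≥ 1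
  have h1δ : 1 ≤ w z - δ := by
    obtain ⟨y, ⟨hyU, _⟩, hyz⟩ := (accPt_iff_nhds (x := z) (C := T 0)).1 (hzT 0) U hU
    exact (hw1 y).trans (hUprop y hyU hyz)
  have hkey : ∀ θ : ℝ, 0 < θ → s ≤ (w z - δ) * (|f z| + θ) := by
    intro θ hθ
    have hV : U ∩ f ⁻¹' (Metric.ball (f z) θ) ∈ 𝓝 z :=
      Filter.inter_mem hU (f.continuous.continuousAt.preimage_mem_nhds
        (Metric.ball_mem_nhds _ hθ))
    have hstep : ∀ k : ℕ, s - 1/(k+1) ≤ (w z - δ) * (|f z| + θ) := by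
      intro k
      obtain ⟨y, ⟨⟨hyU, hyball⟩, hyT⟩, hyz⟩ :=
        (accPt_iff_nhds (x := z) (C := T k)).1 (hzT k) _ hV
      have hwy : w y ≤ w z - δ := hUprop y hyU hyz
      have hfy : |f y| ≤ |f z| + θ := by
        have h2 : |f y - f z| < θ := by
          have := Metric.mem_ball.1 hyball
          rwa [Real.dist_eq] at this
        calc |f y| = |f z + (f y - f z)| := by ring_nf
        _ ≤ |f z| + |f y - f z| := abs_add_le _ _
        _ ≤ |f z| + θ := by linarith
      have hyT' : s - 1/(k+1) < w y * |f y| := by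
        have := hyT
        rw [hTdef] at this
        exact this
      calc s - 1/(k+1) ≤ w y * |f y| := le_of_lt hyT'
      _ ≤ (w z - δ) * (|f z| + θ) :=
          mul_le_mul hwy hfy (abs_nonneg _) (by linarith)
    refine le_of_forall_pos_le_add fun e he => ?_
    obtain ⟨k, hk⟩ := exists_nat_one_div_lt he
    linarith [hstep k, hk]
  have hmain : s ≤ (w z - δ) * |f z| := by
    refine le_of_forall_pos_le_add fun e he => ?_
    have hpos : 0 < w z - δ := by linarith
    have := hkey (e / (w z - δ)) (by positivity)
    have heq : (w z - δ) * (|f z| + e / (w z - δ)) = (w z - δ) * |f z| + e := by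
      field_simp
    rw [heq] at this
    linarith
  have hfz : 0 < |f z| := by
    rcases (abs_nonneg (f z)).lt_or_eq with h | h
    · exact h
    · exfalso
      rw [← h] at hmain
      simp at hmain
      linarith
  have : s < w z * |f z| := by nlinarith
  linarith [hb z]

/-- Attainment of the weighted sup. -/
lemma nuF_attained [T2Space K] (hw1 : ∀ z, 1 ≤ w z) (hwB : ∀ z, w z ≤ B)
    (hspike : ∀ z, ∃ U ∈ 𝓝 z, ∃ δ > 0, ∀ x ∈ U, x ≠ z → w x ≤ w z - δ)
    (f : C(K, ℝ)) (hν : nuF w f = 1) : ∃ x, w x * |f x| = 1 := by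
  classical
  have hw0 : ∀ z, 0 ≤ w z := fun z => zero_le_one.trans (hw1 z)
  have hb : ∀ x, w x * |f x| ≤ 1 := fun x => hν ▸ le_nuF hw0 hwB f x
  obtain ⟨η, hη, hfin⟩ := finite_near_max hw1 hspike f one_pos hb
  obtain ⟨y, ⟨x, rfl⟩, hy⟩ :=
    exists_lt_of_lt_csSup (Set.range_nonempty _)
      (show 1 - η < nuF w f by rw [hν]; linarith)
  have hxT : x ∈ hfin.toFinset := by
    rw [Set.Finite.mem_toFinset]
    exact hy
  obtain ⟨x₀, hx₀F, hmax⟩ :=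
    hfin.toFinset.exists_max_image (fun y => w y * |f y|) ⟨x, hxT⟩
  refine ⟨x₀, le_antisymm (hb x₀) ?_⟩
  by_contra hlt
  push_neg at hlt
  have hband : ∀ y, w y * |f y| ≤ max (w x₀ * |f x₀|) (1 - η) := by
    intro y
    by_cases hy' : 1 - η < w y * |f y|
    · refine le_trans (hmax y ?_) (le_max_left _ _)
      rw [Set.Finite.mem_toFinset]
      exact hy'
    · exact le_trans (not_lt.1 hy') (le_max_right _ _)
  have h2 := nuF_le f hband
  rw [hν] at h2
  have h3 : max (w x₀ * |f x₀|) (1 - η) < 1 := max_lt hlt (by linarith)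
  linarith

end NormDev

section BSet

variable {K : Type*} [TopologicalSpace K] [CompactSpace K] [Nonempty K]
variable (w : K → ℝ)

/-- evaluation functional -/
def evalD (x : K) : StrongDual ℝ C(K, ℝ) := ContinuousMap.evalCLM ℝ x

@[simp] lemma evalD_apply (x : K) (f : C(K, ℝ)) : evalD (K := K) x f = f x := rfl

/-- The boundary set. -/
def bSet : Set (StrongDual ℝ C(K, ℝ)) :=
  {b | ∃ x : K, b = w x • evalD x ∨ b = -(w x • evalD x)}

variable {w} {B : ℝ}

lemma bSet_apply_le (hw0 : ∀ z, 0 ≤ w z) (hwB : ∀ z, w z ≤ B)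
    {b : StrongDual ℝ C(K, ℝ)} (hb : b ∈ bSet w) (f : C(K, ℝ)) : b f ≤ nuF w f := by
  have hle : ∀ x : K, w x * |f x| ≤ nuF w f := by
    intro x
    refine le_csSup ⟨B * ‖f‖, ?_⟩ ⟨x, rfl⟩
    rintro y ⟨x', rfl⟩
    have h1 : |f x'| ≤ ‖f‖ := by
      rw [← Real.norm_eq_abs]; exact f.norm_coe_le_norm x'
    exact mul_le_mul (hwB x') h1 (abs_nonneg _) ((hw0 x').trans (hwB x'))
  obtain ⟨x, hx | hx⟩ := hb
  · rw [hx]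
    have : (w x • evalD x) f = w x * f x := by simp
    rw [this]
    calc w x * f x ≤ w x * |f x| :=
          mul_le_mul_of_nonneg_left (le_abs_self _) (hw0 x)
    _ ≤ nuF w f := hle x
  · rw [hx]
    have hneg : (-(w x • evalD x)) f = -(w x * f x) := by simp
    rw [hneg]
    have h2 : w x * (-(f x)) ≤ w x * |f x| :=
      mul_le_mul_of_nonneg_left (neg_le_abs _) (hw0 x)
    have h3 := hle x
    nlinarith [h2]

lemma bSet_norm_le (hw0 : ∀ z, 0 ≤ w z) (hwB : ∀ z, w z ≤ B)
    {b : StrongDual ℝ C(K, ℝ)} (hb : b ∈ bSet w) : ‖b‖ ≤ B := by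
  have heval : ∀ x : K, ‖evalD (K := K) x‖ ≤ 1 := by
    intro x
    refine ContinuousLinearMap.opNorm_le_bound _ zero_le_one fun f => ?_
    rw [one_mul]
    exact f.norm_coe_le_norm x
  obtain ⟨x, hx | hx⟩ := hb
  · rw [hx]
    refine (ContinuousLinearMap.opNorm_smul_le _ _).trans ?_
    rw [Real.norm_eq_abs, abs_of_nonneg (hw0 x)]
    calc w x * ‖evalD (K := K) x‖ ≤ w x * 1 :=
          mul_le_mul_of_nonneg_left (heval x) (hw0 x)
    _ ≤ B := by rw [mul_one]; exact hwB x
  · rw [hx]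
    have hn : ‖-(w x • evalD x)‖ = ‖w x • evalD x‖ := by exact norm_neg (w x • evalD x)
    rw [hn]
    refine (ContinuousLinearMap.opNorm_smul_le _ _).trans ?_
    rw [Real.norm_eq_abs, abs_of_nonneg (hw0 x)]
    calc w x * ‖evalD (K := K) x‖ ≤ w x * 1 :=
          mul_le_mul_of_nonneg_left (heval x) (hw0 x)
    _ ≤ B := by rw [mul_one]; exact hwB x

lemma sSup_image_bSet (hw0 : ∀ z, 0 ≤ w z) (hwB : ∀ z, w z ≤ B) (f : C(K, ℝ)) :
    sSup ((fun b : StrongDual ℝ C(K, ℝ) => b f) '' bSet w) = nuF w f := by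
  have himagebdd : BddAbove ((fun b : StrongDual ℝ C(K, ℝ) => b f) '' bSet w) := by
    refine ⟨nuF w f, ?_⟩
    rintro y ⟨b, hb, rfl⟩
    exact bSet_apply_le hw0 hwB hb f
  have hx0 : ∃ x : K, True := ⟨Classical.arbitrary K, trivial⟩
  obtain ⟨x0, -⟩ := hx0
  refine le_antisymm ?_ ?_
  · refine csSup_le ⟨_, ⟨w x0 • evalD x0, ⟨x0, Or.inl rfl⟩, rfl⟩⟩ ?_
    rintro y ⟨b, hb, rfl⟩
    exact bSet_apply_le hw0 hwB hb f
  · refine csSup_le (Set.range_nonempty _) ?_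
    rintro y ⟨x, rfl⟩
    show w x * |f x| ≤ _
    rcases le_or_gt 0 (f x) with hfx | hfx
    · have heq : w x * |f x| = (fun b : StrongDual ℝ C(K, ℝ) => b f) (w x • evalD x) := by
        simp [abs_of_nonneg hfx]
      rw [heq]
      exact le_csSup himagebdd ⟨_, ⟨x, Or.inl rfl⟩, rfl⟩
    · have heq : w x * |f x| = (fun b : StrongDual ℝ C(K, ℝ) => b f) (-(w x • evalD x)) := by
        show w x * |f x| = -(w x • evalD x) f
        simp only [ContinuousLinearMap.coe_smul', Pi.smul_apply, evalD_apply, smul_eq_mul]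
        rw [abs_of_neg hfx]
        ring
      rw [heq]
      exact le_csSup himagebdd ⟨_, ⟨x, Or.inr rfl⟩, rfl⟩

lemma bSet_boundary [T2Space K] (hw1 : ∀ z, 1 ≤ w z) (hwB : ∀ z, w z ≤ B)
    (hattain : ∀ f : C(K, ℝ), nuF w f = 1 → ∃ x, w x * |f x| = 1) :
    IsBoundaryFor (fun f => nuF w f) (bSet w) := by
  have hw0 : ∀ z, 0 ≤ w z := fun z => zero_le_one.trans (hw1 z)
  constructor
  · intro b hb f
    exact bSet_apply_le hw0 hwB hb f
  · intro f hf
    obtain ⟨x, hx⟩ := hattain f hf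
    rcases le_or_gt 0 (f x) with hfx | hfx
    · refine ⟨w x • evalD x, ⟨x, Or.inl rfl⟩, ?_⟩
      have : (w x • evalD x) f = w x * f x := by simp
      rw [this, ← abs_of_nonneg hfx]
      exact hx
    · refine ⟨-(w x • evalD x), ⟨x, Or.inr rfl⟩, ?_⟩
      have hneg : (-(w x • evalD x)) f = -(w x * f x) := by simp
      rw [hneg, show -(w x * f x) = w x * (-(f x)) by ring, ← abs_of_neg hfx]
      exact hx

lemma bSet_propertyStar [T2Space K] (hw1 : ∀ z, 1 ≤ w z) (hwB : ∀ z, w z ≤ B)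
    (hspike : ∀ z, ∃ U ∈ 𝓝 z, ∃ δ > 0, ∀ x ∈ U, x ≠ z → w x ≤ w z - δ)
    (hfin : ∀ (f : C(K, ℝ)), (∀ x, w x * |f x| ≤ 1) →
      ∃ η > 0, {x : K | 1 - η < w x * |f x|}.Finite) :
    PropertyStar (bSet w) := by
  classical
  have hw0 : ∀ z, 0 ≤ w z := fun z => zero_le_one.trans (hw1 z)
  intro g hg f hsup
  have hν : nuF w f = 1 := by rw [← sSup_image_bSet hw0 hwB f]; exact hsup
  by_contra hge
  push_neg at hge
  have hb : ∀ x, w x * |f x| ≤ 1 := by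
    intro x
    rw [← hν]
    refine le_csSup ⟨B * ‖f‖, ?_⟩ ⟨x, rfl⟩
    rintro y ⟨x', rfl⟩
    have h1 : |f x'| ≤ ‖f‖ := by
      rw [← Real.norm_eq_abs]; exact f.norm_coe_le_norm x'
    exact mul_le_mul (hwB x') h1 (abs_nonneg _) ((hw0 x').trans (hwB x'))
  obtain ⟨η, hη, hTfin⟩ := hfin f hb
  set U : Set (WeakDual ℝ C(K, ℝ)) :=
    (fun φ : WeakDual ℝ C(K, ℝ) => φ f) ⁻¹' (Set.Ioi (1 - η)) with hU
  have hUopen : IsOpen U := isOpen_Ioi.preimage (WeakDual.eval_continuous f)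
  have hgU : StrongDual.toWeakDual g ∈ U := by
    simp only [hU, Set.mem_preimage, Set.mem_Ioi]
    show (1:ℝ) - η < g f
    linarith
  have hinfset := hg U hUopen hgU
  set F : Set (StrongDual ℝ C(K, ℝ)) :=
    ((fun x : K => w x • evalD x) '' {x : K | 1 - η < w x * |f x|}) ∪
    ((fun x : K => -(w x • evalD x)) '' {x : K | 1 - η < w x * |f x|}) with hF
  have hFfin : F.Finite := (hTfin.image _).union (hTfin.image _)
  obtain ⟨b, hbmem⟩ := (hinfset.diff hFfin).nonempty
  obtain ⟨⟨hbB, hbU⟩, hbF⟩ := hbmem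
  obtain ⟨x, hx | hx⟩ := hbB
  · have hxT : x ∉ {x : K | 1 - η < w x * |f x|} := by
      intro hxT
      exact hbF (Set.mem_union_left _ ⟨x, hxT, hx.symm⟩)
    have hval : w x * |f x| ≤ 1 - η := not_lt.1 hxT
    have hbf : b f ≤ 1 - η := by
      rw [hx]
      have : (w x • evalD x) f = w x * f x := by simp
      rw [this]
      calc w x * f x ≤ w x * |f x| :=
            mul_le_mul_of_nonneg_left (le_abs_self _) (hw0 x)
      _ ≤ 1 - η := hval
    have : (1:ℝ) - η < b f := hbU
    linarith
  · have hxT : x ∉ {x : K | 1 - η < w x * |f x|} := by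
      intro hxT
      exact hbF (Set.mem_union_right _ ⟨x, hxT, hx.symm⟩)
    have hval : w x * |f x| ≤ 1 - η := not_lt.1 hxT
    have hbf : b f ≤ 1 - η := by
      rw [hx]
      have hneg : (-(w x • evalD x)) f = -(w x * f x) := by simp
      rw [hneg]
      have h2 : w x * (-(f x)) ≤ w x * |f x| :=
        mul_le_mul_of_nonneg_left (neg_le_abs _) (hw0 x)
      nlinarith [h2]
    have : (1:ℝ) - η < b f := hbU
    linarith

end BSet

section Helpers

lemma exists_pos_forall_le {α : Type*} {S : Set α} (hS : S.Finite) (g : α → ℝ)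
    (hpos : ∀ a ∈ S, 0 < g a) : ∃ t > 0, ∀ a ∈ S, t ≤ g a := by
  classical
  rcases S.eq_empty_or_nonempty with rfl | hne
  · exact ⟨1, one_pos, by simp⟩
  · obtain ⟨a₀, ha₀⟩ := hne
    have hfne : hS.toFinset.Nonempty := ⟨a₀, hS.mem_toFinset.2 ha₀⟩
    obtain ⟨a₁, ha₁, hmin⟩ := hS.toFinset.exists_min_image g hfne
    exact ⟨g a₁, hpos a₁ (hS.mem_toFinset.1 ha₁),
      fun a ha => hmin a (hS.mem_toFinset.2 ha)⟩

lemma isCompact_of_subset_fd {X : Type*} [NormedAddCommGroup X] [NormedSpace ℝ X]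
    (Y : Subspace ℝ X) [FiniteDimensional ℝ Y] {C : Set X} (hCY : C ⊆ (Y : Set X))
    (hcl : IsClosed C) (hbdd : Bornology.IsBounded C) : IsCompact C := by
  have h1 : IsCompact (((↑) : Y → X) ⁻¹' C) := by
    refine Metric.isCompact_of_isClosed_isBounded (hcl.preimage continuous_subtype_val) ?_
    rw [Metric.isBounded_iff] at hbdd ⊢
    obtain ⟨r, hr⟩ := hbdd
    refine ⟨r, fun x hx y hy => ?_⟩
    rw [Subtype.dist_eq]
    exact hr hx hy
  have h2 : C = ((↑) : Y → X) '' (((↑) : Y → X) ⁻¹' C) := by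
    rw [Set.image_preimage_eq_inter_range, Subtype.range_coe]
    exact (Set.inter_eq_left.2 hCY).symm
  rw [h2]
  exact h1.image continuous_subtype_val

end Helpers


section Polyhedral

variable {K : Type*} [TopologicalSpace K] [CompactSpace K] [Nonempty K]
variable {w : K → ℝ} {Bc : ℝ}

lemma nuF_smul (hw1 : ∀ z, 1 ≤ w z) (hwB : ∀ z, w z ≤ Bc) (a : ℝ) (f : C(K, ℝ)) :
    nuF w (a • f) = |a| * nuF w f := by
  have := map_smul_eq_mul (nuSeminorm w hw1 hwB) a f
  simpa [Real.norm_eq_abs] using this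

lemma nuF_continuous (hw1 : ∀ z, 1 ≤ w z) (hwB : ∀ z, w z ≤ Bc) :
    Continuous (nuF w) := by
  have hw0 : ∀ z, 0 ≤ w z := fun z => zero_le_one.trans (hw1 z)
  have hB0 : (0:ℝ) ≤ Bc :=
    zero_le_one.trans ((hw1 (Classical.arbitrary K)).trans (hwB _))
  have key : ∀ f g : C(K, ℝ), nuF w f - nuF w g ≤ Bc * ‖f - g‖ := by
    intro f g
    have h1 : nuSeminorm w hw1 hwB (f - g + g)
        ≤ nuSeminorm w hw1 hwB (f - g) + nuSeminorm w hw1 hwB g :=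
      map_add_le_add _ _ _
    rw [sub_add_cancel] at h1
    rw [nuSeminorm_apply, nuSeminorm_apply, nuSeminorm_apply] at h1
    have h2 : nuF w (f - g) ≤ Bc * ‖f - g‖ := nuF_le_norm hw0 hwB hB0 _
    linarith
  refine (LipschitzWith.of_dist_le_mul (K := Real.toNNReal Bc) ?_).continuous
  intro f g
  rw [Real.dist_eq, dist_eq_norm, Real.coe_toNNReal _ hB0, abs_sub_le_iff]
  refine ⟨key f g, ?_⟩
  have := key g f
  rwa [norm_sub_rev] at this

lemma EB_finite [T2Space K] (hw1 : ∀ z, 1 ≤ w z) (hwB : ∀ z, w z ≤ Bc)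
    (hstar : PropertyStar (bSet w))
    (Y : Subspace ℝ C(K, ℝ)) (hY : FiniteDimensional ℝ Y) :
    {b : StrongDual ℝ C(K, ℝ) |
      b ∈ bSet w ∧ ∃ y : C(K, ℝ), y ∈ Y ∧ nuF w y = 1 ∧ b y = 1}.Finite := by
  classical
  have hw0 : ∀ z, 0 ≤ w z := fun z => zero_le_one.trans (hw1 z)
  by_contra hinf'
  have hinf : {b : StrongDual ℝ C(K, ℝ) |
      b ∈ bSet w ∧ ∃ y : C(K, ℝ), y ∈ Y ∧ nuF w y = 1 ∧ b y = 1}.Infinite := hinf'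
  set u := hinf.natEmbedding with hu_def
  have hu : ∀ k : ℕ, (u k : StrongDual ℝ C(K, ℝ)) ∈ bSet w ∧
      ∃ y : C(K, ℝ), y ∈ Y ∧ nuF w y = 1 ∧ (u k : StrongDual ℝ C(K, ℝ)) y = 1 :=
    fun k => (u k).2
  have hbB : ∀ k, (u k : StrongDual ℝ C(K, ℝ)) ∈ bSet w := fun k => (hu k).1
  choose y hyY hyν hby using fun k => (hu k).2
  -- the ν-sphere of Y is compact
  have hSYclosed : IsClosed {v : C(K, ℝ) | v ∈ Y ∧ nuF w v = 1} := by
    have : {v : C(K, ℝ) | v ∈ Y ∧ nuF w v = 1}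
        = (Y : Set C(K, ℝ)) ∩ (nuF w) ⁻¹' {1} := by
      ext v; simp [Set.mem_inter_iff]
    rw [this]
    exact (Submodule.closed_of_finiteDimensional Y).inter
      (isClosed_singleton.preimage (nuF_continuous hw1 hwB))
  have hSYbdd : Bornology.IsBounded {v : C(K, ℝ) | v ∈ Y ∧ nuF w v = 1} := by
    refine Metric.isBounded_closedBall (x := (0 : C(K, ℝ))) (r := 1) |>.subset ?_
    rintro v ⟨-, hv⟩
    rw [Metric.mem_closedBall, dist_zero_right]
    exact le_trans (norm_le_nuF hw1 hwB v) (le_of_eq hv)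
  have hSYcomp : IsCompact {v : C(K, ℝ) | v ∈ Y ∧ nuF w v = 1} :=
    isCompact_of_subset_fd Y (fun v hv => hv.1) hSYclosed hSYbdd
  have hySY : ∀ k, y k ∈ {v : C(K, ℝ) | v ∈ Y ∧ nuF w v = 1} :=
    fun k => ⟨hyY k, hyν k⟩
  obtain ⟨ylim, hylim, φ, hφ, hφtend⟩ := hSYcomp.tendsto_subseq hySY
  set b' : ℕ → StrongDual ℝ C(K, ℝ) := fun k => (u (φ k) : StrongDual ℝ C(K, ℝ)) with hb'def
  have hb'B : ∀ k, b' k ∈ bSet w := fun k => hbB (φ k)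
  have hb'norm : ∀ k, ‖b' k‖ ≤ Bc := fun k => bSet_norm_le hw0 hwB (hb'B k)
  have hb'inj : Function.Injective b' := by
    intro a b hab
    have h1 : u (φ a) = u (φ b) := Subtype.coe_injective hab
    exact hφ.injective (u.injective h1)
  -- Banach-Alaoglu
  have hPcomp : IsCompact
      (WeakDual.toStrongDual ⁻¹' Metric.closedBall (0 : StrongDual ℝ C(K, ℝ)) Bc) :=
    WeakDual.isCompact_closedBall 0 Bc
  set v : ℕ → WeakDual ℝ C(K, ℝ) := fun k => StrongDual.toWeakDual (b' k) with hvdef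
  have hvP : ∀ k, v k ∈
      WeakDual.toStrongDual ⁻¹' Metric.closedBall (0 : StrongDual ℝ C(K, ℝ)) Bc := by
    intro k
    have : WeakDual.toStrongDual (v k) = b' k := rfl
    rw [Set.mem_preimage, this]
    exact (mem_closedBall_zero_iff (E := StrongDual ℝ C(K, ℝ))).2 (hb'norm k)
  have hvle : Filter.map v Filter.atTop
      ≤ 𝓟 (WeakDual.toStrongDual ⁻¹' Metric.closedBall (0 : StrongDual ℝ C(K, ℝ)) Bc) :=
    Filter.le_principal_iff.2 (Filter.mem_map.2 (Filter.Eventually.of_forall hvP))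
  obtain ⟨ψ, -, hψcl⟩ := hPcomp hvle
  set g : StrongDual ℝ C(K, ℝ) := WeakDual.toStrongDual ψ with hgdef
  have htwd : StrongDual.toWeakDual g = ψ := rfl
  -- g is a weak* limit point of bSet w
  have hglim : IsWeakStarLimitPoint (bSet w) g := by
    intro U hUopen hgU
    have hψU : U ∈ 𝓝 ψ := hUopen.mem_nhds (htwd ▸ hgU)
    have hfreq : ∃ᶠ k in Filter.atTop, v k ∈ U :=
      (mapClusterPt_iff_frequently.1 (show MapClusterPt ψ Filter.atTop v from hψcl)) U hψU
    have hkinf : {k : ℕ | v k ∈ U}.Infinite :=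
      Nat.frequently_atTop_iff_infinite.1 hfreq
    have himg : (b' '' {k : ℕ | v k ∈ U}).Infinite := hkinf.image hb'inj.injOn
    refine himg.mono ?_
    rintro b ⟨k, hk, rfl⟩
    exact ⟨hb'B k, hk⟩
  -- g ylim = 1
  have hgy : g ylim = 1 := by
    have hbound : ∀ k, |b' k ylim - 1| ≤ Bc * ‖ylim - y (φ k)‖ := by
      intro k
      have h1 : b' k ylim - 1 = b' k (ylim - y (φ k)) := by
        rw [map_sub, hby (φ k)]
      rw [h1, ← Real.norm_eq_abs]
      calc ‖b' k (ylim - y (φ k))‖ ≤ ‖b' k‖ * ‖ylim - y (φ k)‖ := (b' k).le_opNorm _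
      _ ≤ Bc * ‖ylim - y (φ k)‖ := mul_le_mul_of_nonneg_right (hb'norm k) (norm_nonneg _)
    have htend0 : Filter.Tendsto (fun k => ‖ylim - y (φ k)‖) Filter.atTop (𝓝 0) := by
      have h2 := hφtend
      rw [tendsto_iff_norm_sub_tendsto_zero] at h2
      have h3 : (fun k => ‖ylim - y (φ k)‖) = fun k => ‖y (φ k) - ylim‖ := by
        funext k; rw [norm_sub_rev]
      rw [h3]
      exact h2
    have htendB : Filter.Tendsto (fun k => Bc * ‖ylim - y (φ k)‖) Filter.atTop (𝓝 0) := by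
      simpa using htend0.const_mul Bc
    have htend : Filter.Tendsto (fun k => b' k ylim) Filter.atTop (𝓝 1) := by
      rw [tendsto_iff_norm_sub_tendsto_zero]
      refine squeeze_zero (fun k => norm_nonneg _) (fun k => ?_) htendB
      rw [Real.norm_eq_abs]
      exact hbound k
    have hclose : ∀ ε : ℝ, 0 < ε → |g ylim - 1| < ε := by
      intro ε hε
      have hball : (fun χ : WeakDual ℝ C(K, ℝ) => χ ylim) ⁻¹'
          Metric.ball (g ylim) (ε/2) ∈ 𝓝 ψ := by
        refine (WeakDual.eval_continuous ylim).continuousAt.preimage_mem_nhds ?_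
        have : ψ ylim = g ylim := rfl
        rw [this]
        exact Metric.ball_mem_nhds _ (by positivity)
      have hfreq : ∃ᶠ k in Filter.atTop, v k ∈ (fun χ : WeakDual ℝ C(K, ℝ) => χ ylim) ⁻¹'
          Metric.ball (g ylim) (ε/2) :=
        (mapClusterPt_iff_frequently.1 (show MapClusterPt ψ Filter.atTop v from hψcl)) _ hball
      have hev : ∀ᶠ k in Filter.atTop, |b' k ylim - 1| < ε/2 := by
        have hevm := htend.eventually_mem
          (Metric.ball_mem_nhds (1:ℝ) (show (0:ℝ) < ε/2 by positivity))
        refine hevm.mono fun k hk => ?_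
        rw [Metric.mem_ball, Real.dist_eq] at hk
        exact hk
      obtain ⟨k, hk1, hk2⟩ := (hfreq.and_eventually hev).exists
      rw [Set.mem_preimage, Metric.mem_ball, Real.dist_eq] at hk1
      have hvk : v k ylim = b' k ylim := rfl
      rw [hvk] at hk1
      calc |g ylim - 1| ≤ |g ylim - b' k ylim| + |b' k ylim - 1| := abs_sub_le _ _ _
      _ < ε/2 + ε/2 := add_lt_add (by rwa [abs_sub_comm]) hk2
      _ = ε := by ring
    rcases lt_or_ge 0 (|g ylim - 1|) with h | h
    · exact absurd (hclose _ h) (lt_irrefl _)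
    · have : |g ylim - 1| = 0 := le_antisymm h (abs_nonneg _)
      have := abs_eq_zero.1 this
      linarith [sub_eq_zero.1 this]
  -- contradiction with property (*)
  have hsup : sSup ((fun b : StrongDual ℝ C(K, ℝ) => b ylim) '' bSet w) = 1 := by
    rw [sSup_image_bSet hw0 hwB ylim]
    exact hylim.2
  have := hstar g hglim ylim hsup
  rw [hgy] at this
  exact lt_irrefl _ this

end Polyhedral


section PolyhedralMain

variable {K : Type*} [TopologicalSpace K] [CompactSpace K] [Nonempty K]
variable {w : K → ℝ} {Bc : ℝ}

lemma nuF_polyhedral_section [T2Space K] (hw1 : ∀ z, 1 ≤ w z) (hwB : ∀ z, w z ≤ Bc)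
    (hstar : PropertyStar (bSet w))
    (hbdry : IsBoundaryFor (fun f => nuF w f) (bSet w))
    (Y : Subspace ℝ C(K, ℝ)) (hY : FiniteDimensional ℝ Y) :
    ∃ T : Set C(K, ℝ), T.Finite ∧
      {f : C(K, ℝ) | f ∈ Y ∧ nuF w f ≤ 1} = convexHull ℝ T := by
  classical
  have hw0 : ∀ z, 0 ≤ w z := fun z => zero_le_one.trans (hw1 z)
  have hEBfin := EB_finite hw1 hwB hstar Y hY
  obtain ⟨EB, hEBdef⟩ : ∃ EB : Set (StrongDual ℝ C(K, ℝ)),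
      EB = {b : StrongDual ℝ C(K, ℝ) |
        b ∈ bSet w ∧ ∃ y : C(K, ℝ), y ∈ Y ∧ nuF w y = 1 ∧ b y = 1} := ⟨_, rfl⟩
  rw [← hEBdef] at hEBfin
  obtain ⟨C, hCdef⟩ : ∃ C : Set C(K, ℝ), C = {f : C(K, ℝ) | f ∈ Y ∧ nuF w f ≤ 1} :=
    ⟨_, rfl⟩
  have hCeq : C = {f : C(K, ℝ) | f ∈ Y ∧ ∀ b ∈ EB, b f ≤ 1} := by
    rw [hCdef]
    ext f
    constructor
    · rintro ⟨hfY, hfν⟩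
      refine ⟨hfY, fun b hb => ?_⟩
      rw [hEBdef] at hb
      exact le_trans (hbdry.1 b hb.1 f) hfν
    · rintro ⟨hfY, hfb⟩
      refine ⟨hfY, ?_⟩
      by_contra hgt
      push_neg at hgt
      have hν0 : (0:ℝ) < nuF w f := lt_trans one_pos hgt
      have hz : nuF w ((nuF w f)⁻¹ • f) = 1 := by
        rw [nuF_smul hw1 hwB, abs_of_pos (inv_pos.2 hν0), inv_mul_cancel₀ (ne_of_gt hν0)]
      have hzY : (nuF w f)⁻¹ • f ∈ Y := Y.smul_mem _ hfY
      obtain ⟨b, hbB, hbz⟩ := hbdry.2 _ hz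
      have hbEB : b ∈ EB := by
        rw [hEBdef]
        exact ⟨hbB, _, hzY, hz, hbz⟩
      have hf : f = (nuF w f) • ((nuF w f)⁻¹ • f) := by
        rw [smul_smul, mul_inv_cancel₀ (ne_of_gt hν0), one_smul]
      have hbf : b f = nuF w f := by
        conv_lhs => rw [hf]
        rw [map_smul, smul_eq_mul, hbz, mul_one]
      have h2 := hfb b hbEB
      rw [hbf] at h2
      linarith
  have hCsubY : C ⊆ (Y : Set C(K, ℝ)) := by
    rw [hCdef]; exact fun f hf => hf.1
  have hCclosed : IsClosed C := by
    have h1 : C = (Y : Set C(K, ℝ)) ∩ (nuF w) ⁻¹' (Set.Iic 1) := by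
      rw [hCdef]; ext f; simp [Set.mem_inter_iff]
    rw [h1]
    exact (Submodule.closed_of_finiteDimensional Y).inter
      (isClosed_Iic.preimage (nuF_continuous hw1 hwB))
  have hCbdd : Bornology.IsBounded C := by
    refine Metric.isBounded_closedBall (x := (0 : C(K, ℝ))) (r := 1) |>.subset ?_
    intro f hf
    rw [hCdef] at hf
    rw [Metric.mem_closedBall, dist_zero_right]
    exact le_trans (norm_le_nuF hw1 hwB f) hf.2
  have hCcomp : IsCompact C := isCompact_of_subset_fd Y hCsubY hCclosed hCbdd
  have hCconv : Convex ℝ C := by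
    rw [hCeq]
    have h1 : {f : C(K, ℝ) | f ∈ Y ∧ ∀ b ∈ EB, b f ≤ 1}
        = (Y : Set C(K, ℝ)) ∩ ⋂ b ∈ EB, {f : C(K, ℝ) | b f ≤ 1} := by
      ext f
      simp [Set.mem_inter_iff, Set.mem_iInter]
    rw [h1]
    refine (Submodule.convex Y).inter ?_
    exact convex_iInter₂ fun b _ => convex_halfSpace_le ⟨map_add b, map_smul b⟩ 1
  -- extreme points
  obtain ⟨A, hAdef⟩ : ∃ A : C(K, ℝ) → Set (StrongDual ℝ C(K, ℝ)),
      ∀ e, A e = {b : StrongDual ℝ C(K, ℝ) | b ∈ EB ∧ b e = 1} := ⟨_, fun _ => rfl⟩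
  have hInj : Set.InjOn A (C.extremePoints ℝ) := by
    intro e1 he1 e2 he2 hA12
    by_contra hne
    have he1C : e1 ∈ C := extremePoints_subset he1
    have he2C : e2 ∈ C := extremePoints_subset he2
    have he1Y : e1 ∈ Y := hCsubY he1C
    have he2Y : e2 ∈ Y := hCsubY he2C
    have he1b : ∀ b ∈ EB, b e1 ≤ 1 := (hCeq ▸ he1C).2
    have hd : e1 - e2 ≠ 0 := sub_ne_zero.2 hne
    have hSpos : ∀ b ∈ {b : StrongDual ℝ C(K, ℝ) | b ∈ EB ∧ b e1 ≠ 1},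
        0 < (1 - b e1) / (|b (e1 - e2)| + 1) := by
      rintro b ⟨hbEB, hbne⟩
      have h1 : b e1 < 1 := lt_of_le_of_ne (he1b b hbEB) hbne
      have h2 : (0:ℝ) < |b (e1 - e2)| + 1 := by positivity
      exact div_pos (by linarith) h2
    obtain ⟨t, ht, htle⟩ := exists_pos_forall_le
      (hEBfin.subset fun b (hb : b ∈ EB ∧ b e1 ≠ 1) => hb.1)
      (fun b => (1 - b e1) / (|b (e1 - e2)| + 1)) hSpos
    have key : ∀ s : ℝ, |s| ≤ t → e1 + s • (e1 - e2) ∈ C := by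
      intro s hs
      rw [hCeq]
      constructor
      · exact Y.add_mem he1Y (Y.smul_mem _ (Y.sub_mem he1Y he2Y))
      · intro b hb
        rw [map_add, map_smul, smul_eq_mul]
        by_cases hb1 : b e1 = 1
        · have hbA1 : b ∈ A e1 := by rw [hAdef]; exact ⟨hb, hb1⟩
          have hbA2 : b ∈ A e2 := hA12 ▸ hbA1
          have hb2 : b e2 = 1 := by
            rw [hAdef] at hbA2
            exact hbA2.2
          have hbd : b (e1 - e2) = 0 := by rw [map_sub, hb1, hb2, sub_self]
          rw [hbd, mul_zero, add_zero, hb1]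
        · have hbS : b ∈ {b : StrongDual ℝ C(K, ℝ) | b ∈ EB ∧ b e1 ≠ 1} := ⟨hb, hb1⟩
          have h3 := htle b hbS
          have h4 : s * b (e1 - e2) ≤ t * |b (e1 - e2)| := by
            calc s * b (e1 - e2) ≤ |s * b (e1 - e2)| := le_abs_self _
            _ = |s| * |b (e1 - e2)| := abs_mul _ _
            _ ≤ t * |b (e1 - e2)| := mul_le_mul_of_nonneg_right hs (abs_nonneg _)
          have h5 : t * (|b (e1 - e2)| + 1) ≤ 1 - b e1 :=
            (le_div_iff₀ (by positivity)).1 h3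
          nlinarith [abs_nonneg (b (e1 - e2))]
    have hp := key t (by rw [abs_of_pos ht])
    have hq := key (-t) (by rw [abs_neg, abs_of_pos ht])
    have hseg : e1 ∈ openSegment ℝ (e1 + t • (e1 - e2)) (e1 + (-t) • (e1 - e2)) := by
      refine ⟨1/2, 1/2, by norm_num, by norm_num, by norm_num, ?_⟩
      module
    have hext := ((mem_extremePoints).1 he1).2 _ hp _ hq hseg
    have h6 : e1 + t • (e1 - e2) = e1 := hext.1
    have h7 : t • (e1 - e2) = 0 := by
      have h9 := h6
      rwa [add_eq_left] at h9
    rcases smul_eq_zero.1 h7 with h | h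
    · exact absurd h (ne_of_gt ht)
    · exact hd h
  have himgfin : (A '' (C.extremePoints ℝ)).Finite := by
    refine Set.Finite.subset hEBfin.finite_subsets ?_
    rintro S ⟨e, -, rfl⟩
    rw [hAdef]
    exact fun b hb => hb.1
  have hEXTfin : (C.extremePoints ℝ).Finite := Set.Finite.of_finite_image himgfin hInj
  have hKM : closure (convexHull ℝ (C.extremePoints ℝ)) = C :=
    closure_convexHull_extremePoints hCcomp hCconv
  refine ⟨C.extremePoints ℝ, hEXTfin, ?_⟩
  have h8 : convexHull ℝ (C.extremePoints ℝ) = C := by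
    rw [← (hEXTfin.isClosed_convexHull (𝕜 := ℝ)).closure_eq]
    exact hKM
  rw [← hCdef]
  exact h8.symm

end PolyhedralMain

theorem stmt17 {K : Type*} [TopologicalSpace K] [CompactSpace K] [T2Space K]
    (D : ℕ → Set K) (hdisc : ∀ n, DiscreteTopology (D n))
    (hcover : (Set.univ : Set K) = ⋃ n, D n)
    (ε : ℝ) (hε : 0 < ε) :
    ∃ ν : Seminorm ℝ C(K, ℝ),
      (∀ f : C(K, ℝ), (1 - ε) * ‖f‖ ≤ ν f ∧ ν f ≤ (1 + ε) * ‖f‖) ∧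
      IsPolyhedralNorm (fun f => ν f) ∧
      ∃ B : Set (StrongDual ℝ C(K, ℝ)), IsBoundaryFor (fun f => ν f) B ∧ PropertyStar B := by
  classical
  rcases isEmpty_or_nonempty K with hK | hK
  · -- the degenerate case of an empty space
    haveI : Subsingleton C(K, ℝ) :=
      ⟨fun f g => ContinuousMap.ext fun x => (hK.elim x)⟩
    refine ⟨0, fun f => ?_, ?_, ∅, ⟨fun b hb => absurd hb (Set.notMem_empty b),
      fun x hx => ?_⟩, ?_⟩
    · have hf0 : f = 0 := Subsingleton.elim f 0
      subst hf0
      simp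
    · intro Y hY
      refine ⟨{0}, Set.finite_singleton _, ?_⟩
      rw [convexHull_singleton]
      ext x
      have hx0 : x = 0 := Subsingleton.elim x 0
      subst hx0
      simp [Y.zero_mem]
    · simp only [Seminorm.zero_apply] at hx
      norm_num at hx
    · intro g hg x hsup
      have h := hg Set.univ isOpen_univ (Set.mem_univ _)
      refine absurd h ?_
      rw [Set.not_infinite]
      exact Set.Finite.subset Set.finite_empty (fun f hf => hf.1)
  · -- the main case
    obtain ⟨w, hw1, hwB, hspike⟩ := exists_spike_weight D hdisc hcover hε
    have hw0 : ∀ z, 0 ≤ w z := fun z => zero_le_one.trans (hw1 z)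
    have hbdry : IsBoundaryFor (fun f => nuF w f) (bSet w) :=
      bSet_boundary hw1 hwB (fun f hf => nuF_attained hw1 hwB hspike f hf)
    have hstar : PropertyStar (bSet w) :=
      bSet_propertyStar hw1 hwB hspike
        (fun f hb => finite_near_max hw1 hspike f one_pos hb)
    refine ⟨nuSeminorm w hw1 hwB, fun f => ⟨?_, ?_⟩, fun Y hY => ?_, bSet w, ?_, ?_⟩
    · rw [nuSeminorm_apply]
      calc (1 - ε) * ‖f‖ ≤ 1 * ‖f‖ :=
            mul_le_mul_of_nonneg_right (by linarith) (norm_nonneg f)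
      _ = ‖f‖ := one_mul _
      _ ≤ nuF w f := norm_le_nuF hw1 hwB f
    · rw [nuSeminorm_apply]
      exact nuF_le_norm hw0 hwB (by linarith) f
    · exact nuF_polyhedral_section hw1 hwB hstar hbdry Y hY
    · exact hbdry
    · exact hstar

end
end

section
/- Let K be a compact Hausdorff space and suppose C(K) (with the canonical supremum norm) admits a boundary that is covered by E = ⋃_{n=0}^∞ E_n, where each E_n ⊂ C(K)* is w*-LRC, and E is w*-K_σ (a countable union of weak-*-compact sets). Then K is σ-discrete, i.e., K is a countable union of subsets each of which is discrete in its relative topology. -/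
open NormedSpace Filter Set Topology Pointwise

noncomputable section

section Aux

set_option linter.unusedSectionVars false

variable {K : Type*} [TopologicalSpace K] [CompactSpace K] [T2Space K]

noncomputable def evalδ (x : K) : StrongDual ℝ C(K, ℝ) := ContinuousMap.evalCLM ℝ x

@[simp] lemma evalδ_apply (x : K) (f : C(K,ℝ)) : evalδ x f = f x := rfl

lemma eval_le_norm (x : K) (f : C(K,ℝ)) : f x ≤ ‖f‖ :=
  le_trans (le_abs_self _) (by simpa using f.norm_coe_le_norm x)

-- support lemma
lemma lemS (μ : StrongDual ℝ C(K,ℝ)) (hμ : ∀ g : C(K,ℝ), μ g ≤ ‖g‖)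
    (u : C(K,ℝ)) (hu01 : ∀ y, u y ∈ Icc (0:ℝ) 1) (hμu : μ u = 1)
    (w : C(K,ℝ)) (c : ℝ) (hc : 0 ≤ c) (hw : ∀ y, |w y| ≤ c * (1 - u y)) :
    μ w = 0 := by
  have key : ∀ s : ℝ, |s| = 1 → μ (c • u + s • w) ≤ c := by
    intro s hs
    refine (hμ _).trans ?_
    rw [ContinuousMap.norm_le _ hc]
    intro y
    have h1 := (hu01 y).1; have h2 := (hu01 y).2
    have : |c * u y + s * w y| ≤ c * u y + |w y| := by
      calc |c * u y + s * w y| ≤ |c * u y| + |s * w y| := abs_add_le _ _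
        _ = c * u y + |w y| := by
            rw [abs_mul, abs_mul, hs, one_mul, abs_of_nonneg hc, abs_of_nonneg h1]
    simpa using this.trans (by nlinarith [hw y])
  have h1 := key 1 (by norm_num)
  have h2 := key (-1) (by norm_num)
  simp only [map_add, map_smul, smul_eq_mul, hμu, mul_one, one_mul, neg_one_mul] at h1 h2
  linarith

lemma abs_le_of_dual (μ : StrongDual ℝ C(K,ℝ)) (hμ : ∀ g : C(K,ℝ), μ g ≤ ‖g‖) (g : C(K,ℝ)) :
    |μ g| ≤ ‖g‖ := by
  rcases abs_cases (μ g) with ⟨h, _⟩ | ⟨h, _⟩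
  · rw [h]; exact hμ g
  · rw [h]; simpa using hμ (-g)

lemma mu_one (μ : StrongDual ℝ C(K,ℝ)) (hμ : ∀ g : C(K,ℝ), μ g ≤ ‖g‖)
    (u : C(K,ℝ)) (hu01 : ∀ y, u y ∈ Icc (0:ℝ) 1) (hμu : μ u = 1) :
    μ (1 : C(K,ℝ)) = 1 := by
  have := lemS μ hμ u hu01 hμu (1 - u) 1 zero_le_one (fun y => by
    have := (hu01 y).1; have := (hu01 y).2
    simp only [ContinuousMap.sub_apply, ContinuousMap.one_apply]
    rw [abs_of_nonneg (by linarith)]; linarith)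
  rw [map_sub] at this
  linarith

/-- A structure of "peak data": `μ` peaks at `x` within `V`. -/
def Peak (μ : StrongDual ℝ C(K,ℝ)) (x : K) (V : Set K) : Prop :=
  ∃ u : C(K,ℝ), u x = 1 ∧ (∀ y, u y ∈ Icc (0:ℝ) 1) ∧ (∀ y ∉ V, u y = 0) ∧ μ u = 1

lemma est (μ : StrongDual ℝ C(K,ℝ)) (hμ : ∀ g : C(K,ℝ), μ g ≤ ‖g‖)
    (x : K) (V : Set K) (hpk : Peak μ x V) (f : C(K,ℝ)) (ε : ℝ) (hε : 0 < ε)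
    (hV : ∀ y ∈ V, |f y - f x| ≤ ε) : |μ f - f x| ≤ ε := by
  obtain ⟨u, hux, hu01, huV, hμu⟩ := hpk
  set h : C(K,ℝ) := ⟨fun y => max (min (f y - f x) ε) (-ε), by fun_prop⟩ with hh
  have hhy : ∀ y, |h y| ≤ ε := by
    intro y
    rw [abs_le]
    constructor
    · exact le_max_right _ _
    · exact max_le (min_le_right _ _) (by linarith)
  set w : C(K,ℝ) := f - (f x) • (1 : C(K,ℝ)) - h with hw
  have hwy : ∀ y, |w y| ≤ (‖f‖ + |f x| + ε) * (1 - u y) := by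
    intro y
    by_cases hy : y ∈ V
    · have h1 : |f y - f x| ≤ ε := hV y hy
      have h2 : h y = f y - f x := by
        simp only [hh, ContinuousMap.coe_mk]
        rw [min_eq_left (abs_le.1 h1).2, max_eq_left (abs_le.1 h1).1]
      have : w y = 0 := by
        simp only [hw, ContinuousMap.sub_apply, ContinuousMap.smul_apply,
          ContinuousMap.one_apply, smul_eq_mul, h2]
        ring
      rw [this, abs_zero]
      have := (hu01 y).2
      have hnn : (0:ℝ) ≤ ‖f‖ + |f x| + ε := by positivity
      nlinarith
    · have h0 : u y = 0 := huV y hy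
      rw [h0]
      have : |w y| ≤ |f y - f x| + |h y| := by
        have : w y = (f y - f x) - h y := by
          simp only [hw, ContinuousMap.sub_apply, ContinuousMap.smul_apply,
            ContinuousMap.one_apply, smul_eq_mul]
          ring
        rw [this]; exact abs_sub _ _
      have h3 : |f y - f x| ≤ ‖f‖ + |f x| := by
        calc |f y - f x| ≤ |f y| + |f x| := abs_sub _ _
          _ ≤ ‖f‖ + |f x| := by
              have := f.norm_coe_le_norm y
              simp only [Real.norm_eq_abs] at this
              linarith
      have := hhy y
      linarith [this, h3, ‹|w y| ≤ |f y - f x| + |h y|›]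
  have hw0 : μ w = 0 := lemS μ hμ u hu01 hμu w _ (by positivity) hwy
  have hone : μ (1 : C(K,ℝ)) = 1 := mu_one μ hμ u hu01 hμu
  have hdec : μ f = f x + μ h := by
    have : μ w = μ f - f x * μ 1 - μ h := by
      simp [hw, map_sub, map_smul, smul_eq_mul]
    rw [hw0, hone] at this
    linarith
  have hμh : |μ h| ≤ ε := by
    refine (abs_le_of_dual μ hμ h).trans ?_
    rw [ContinuousMap.norm_le _ hε.le]
    intro y; simpa using hhy y
  rw [hdec]
  simpa using hμh

lemma exists_good_compact (B : Set (StrongDual ℝ C(K,ℝ)))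
    (hBle : ∀ μ ∈ B, ∀ g : C(K,ℝ), μ g ≤ ‖g‖)
    (hBbd : ∀ f : C(K,ℝ), ‖f‖ = 1 → ∃ μ ∈ B, μ f = 1)
    (C : ℕ → Set (WeakDual ℝ C(K,ℝ)))
    (hBC : ∀ μ ∈ B, ∃ m, StrongDual.toWeakDual μ ∈ C m)
    (x : K) :
    ∃ m, ∀ V : Set K, IsOpen V → x ∈ V →
      ∃ μ ∈ B, StrongDual.toWeakDual μ ∈ C m ∧ Peak μ x V := by
  by_contra hcon
  push_neg at hcon
  choose V hVopen hVx hVbad using hcon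
  -- Urysohn functions
  have hyp : ∀ m : ℕ, ∃ u : C(K,ℝ), Set.EqOn u 0 (V m)ᶜ ∧ Set.EqOn u 1 {x} ∧
      ∀ y, u y ∈ Icc (0:ℝ) 1 := by
    intro m
    exact exists_continuous_zero_one_of_isClosed (hVopen m).isClosed_compl
      isClosed_singleton (by
        rw [Set.disjoint_left]
        intro a ha hx
        rw [Set.mem_singleton_iff] at hx
        exact ha (hx ▸ hVx m))
  choose u hu0 hu1 hu01 using hyp
  -- the series
  have hsumgeo : Summable (fun m : ℕ => ((1:ℝ)/2)^(m+1)) := by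
    apply Summable.comp_injective (summable_geometric_of_lt_one (by norm_num) (by norm_num))
      (add_left_injective 1)
  have hbound : ∀ m y, ‖((1:ℝ)/2)^(m+1) * u m y‖ ≤ ((1:ℝ)/2)^(m+1) := by
    intro m y
    rw [Real.norm_eq_abs, abs_mul, abs_of_nonneg (by positivity),
      abs_of_nonneg (hu01 m y).1]
    nlinarith [(hu01 m y).2, pow_pos (by norm_num : (0:ℝ) < 1/2) (m+1)]
  have hcont : Continuous (fun y => ∑' m, ((1:ℝ)/2)^(m+1) * u m y) := by
    apply continuous_tsum (fun m => by fun_prop) hsumgeo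
    intro m y; exact hbound m y
  set g : C(K,ℝ) := ⟨_, hcont⟩ with hg
  have hsummy : ∀ y, Summable (fun m => ((1:ℝ)/2)^(m+1) * u m y) := by
    intro y
    exact Summable.of_norm_bounded hsumgeo (fun m => hbound m y)
  have hgeosum : ∑' m : ℕ, ((1:ℝ)/2)^(m+1) = 1 := by
    have : ∀ m : ℕ, ((1:ℝ)/2)^(m+1) = 1/2/2^m := by
      intro m; rw [pow_succ, div_pow, one_pow]; ring
    rw [tsum_congr this, tsum_geometric_two' 1]
  have hgx : g x = 1 := by
    simp only [hg, ContinuousMap.coe_mk]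
    have : ∀ m, ((1:ℝ)/2)^(m+1) * u m x = ((1:ℝ)/2)^(m+1) := by
      intro m; rw [hu1 m (Set.mem_singleton x), Pi.one_apply, mul_one]
    rw [tsum_congr this, hgeosum]
  have hg01 : ∀ y, g y ∈ Icc (0:ℝ) 1 := by
    intro y
    constructor
    · exact tsum_nonneg (fun m => mul_nonneg (by positivity) (hu01 m y).1)
    · rw [← hgeosum]
      apply Summable.tsum_le_tsum _ (hsummy y) hsumgeo
      intro m
      nlinarith [(hu01 m y).2, (hu01 m y).1, pow_pos (by norm_num : (0:ℝ) < 1/2) (m+1)]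
  have hgnorm : ‖g‖ = 1 := by
    apply le_antisymm
    · rw [ContinuousMap.norm_le _ zero_le_one]
      intro y
      rw [Real.norm_eq_abs, abs_of_nonneg (hg01 y).1]
      exact (hg01 y).2
    · rw [← hgx]; exact eval_le_norm x g
  obtain ⟨μ, hμB, hμg⟩ := hBbd g hgnorm
  obtain ⟨m₀, hμC⟩ := hBC μ hμB
  -- key inequality : g y ≤ 1 - (1/2)^(m₀+1) (1 - u m₀ y)
  have hkey : ∀ y, (1 : ℝ) - u m₀ y ≤ 2^(m₀+1) * (1 - g y) := by
    intro y
    have hsplit : g y = ((1:ℝ)/2)^(m₀+1) * u m₀ y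
        + ∑' m, if m = m₀ then 0 else ((1:ℝ)/2)^(m+1) * u m y :=
      (hsummy y).tsum_eq_add_tsum_ite m₀
    have hsplit2 : ∑' m : ℕ, ((1:ℝ)/2)^(m+1) = ((1:ℝ)/2)^(m₀+1)
        + ∑' m, if m = m₀ then 0 else ((1:ℝ)/2)^(m+1) :=
      hsumgeo.tsum_eq_add_tsum_ite m₀
    have hle : (∑' m, if m = m₀ then 0 else ((1:ℝ)/2)^(m+1) * u m y)
        ≤ ∑' m, if m = m₀ then 0 else ((1:ℝ)/2)^(m+1) := by
      apply Summable.tsum_le_tsum _ ((hsummy y).indicator {m | m ≠ m₀} |>.congr (by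
        intro m
        by_cases h : m = m₀ <;> simp [Set.indicator, h]))
        (hsumgeo.indicator {m | m ≠ m₀} |>.congr (by
        intro m
        by_cases h : m = m₀ <;> simp [Set.indicator, h]))
      intro m
      by_cases h : m = m₀
      · simp [h]
      · simp only [if_neg h]
        nlinarith [(hu01 m y).2, (hu01 m y).1, pow_pos (by norm_num : (0:ℝ) < 1/2) (m+1)]
    have hpow : ((1:ℝ)/2)^(m₀+1) * 2^(m₀+1) = 1 := by
      rw [div_pow, one_pow, div_mul_eq_mul_div, one_mul, div_self (by positivity)]
    nlinarith [hsplit, hsplit2, hle, hgeosum, (hu01 m₀ y).1, (hu01 m₀ y).2,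
      pow_pos (by norm_num : (0:ℝ) < 1/2) (m₀+1), pow_pos (by norm_num : (0:ℝ) < 2) (m₀+1)]
  -- μ (u m₀) = 1
  have hw0 : μ ((1 : C(K,ℝ)) - u m₀) = 0 := by
    apply lemS μ (hBle μ hμB) g hg01 hμg _ (2^(m₀+1)) (by positivity)
    intro y
    simp only [ContinuousMap.sub_apply, ContinuousMap.one_apply]
    rw [abs_of_nonneg (by linarith [(hu01 m₀ y).2])]
    exact hkey y
  have hone : μ (1 : C(K,ℝ)) = 1 := mu_one μ (hBle μ hμB) g hg01 hμg
  have hum : μ (u m₀) = 1 := by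
    rw [map_sub, hone] at hw0; linarith
  exact hVbad m₀ μ hμB hμC ⟨u m₀, hu1 m₀ (Set.mem_singleton x), hu01 m₀,
    (fun y hy => hu0 m₀ (by simpa using hy)), hum⟩

def ONhd (x : K) := {V : Set K // IsOpen V ∧ x ∈ V}

instance (x : K) : SemilatticeSup (ONhd x) where
  le V W := W.1 ⊆ V.1
  le_refl V := subset_rfl
  le_trans a b c h1 h2 := Set.Subset.trans h2 h1
  le_antisymm a b h1 h2 := Subtype.ext (subset_antisymm h2 h1)
  sup V W := ⟨V.1 ∩ W.1, V.2.1.inter W.2.1, ⟨V.2.2, W.2.2⟩⟩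
  le_sup_left V W := inter_subset_left
  le_sup_right V W := inter_subset_right
  sup_le a b c h1 h2 := subset_inter h1 h2

instance (x : K) : Nonempty (ONhd x) := ⟨⟨univ, isOpen_univ, mem_univ x⟩⟩

lemma ONhd.le_iff {x : K} {a b : ONhd x} : a ≤ b ↔ b.1 ⊆ a.1 := Iff.rfl

lemma delta_mem_of_peaks (x : K) (B : Set (StrongDual ℝ C(K,ℝ)))
    (hBle : ∀ μ ∈ B, ∀ g : C(K,ℝ), μ g ≤ ‖g‖)
    (C : Set (WeakDual ℝ C(K,ℝ))) (hC : IsCompact C)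
    (h : ∀ V : Set K, IsOpen V → x ∈ V →
      ∃ μ ∈ B, StrongDual.toWeakDual μ ∈ C ∧ Peak μ x V) :
    StrongDual.toWeakDual (evalδ x) ∈ C := by
  choose μ hμB hμC hpk using fun V : ONhd x => h V.1 V.2.1 V.2.2
  have htend : Tendsto (fun V : ONhd x => StrongDual.toWeakDual (μ V)) atTop
      (𝓝 (StrongDual.toWeakDual (evalδ x))) := by
    rw [tendsto_iff_forall_eval_tendsto_topDualPairing]
    intro f
    have heq : ∀ ν : StrongDual ℝ C(K,ℝ),
        topDualPairing ℝ C(K,ℝ) (StrongDual.toWeakDual ν) f = ν f := fun _ => rfl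
    simp only [heq, evalδ_apply]
    rw [Metric.tendsto_atTop]
    intro ε hε
    refine ⟨⟨{y | |f y - f x| < ε/2}, ?_, by simp; positivity⟩, ?_⟩
    · have : Continuous fun y => |f y - f x| := by fun_prop
      exact isOpen_lt this continuous_const
    · intro V hV
      have hsub : V.1 ⊆ {y | |f y - f x| < ε/2} := ONhd.le_iff.1 hV
      have := est (μ V) (hBle _ (hμB V)) x V.1 (hpk V) f (ε/2) (by positivity)
        (fun y hy => (hsub hy).le)
      rw [Real.dist_eq]
      linarith
  exact hC.isClosed.mem_of_tendsto htend (Eventually.of_forall hμC)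

lemma delta_sep {y z : K} (h : y ≠ z) : 2 ≤ ‖evalδ y - evalδ z‖ := by
  obtain ⟨f, hf0, hf1, hf01⟩ := exists_continuous_zero_one_of_isClosed
    (isClosed_singleton (x := z)) (isClosed_singleton (x := y))
    (by simp [Set.disjoint_singleton, h.symm])
  set g : C(K,ℝ) := (2:ℝ) • f - 1 with hg
  have hgnorm : ‖g‖ ≤ 1 := by
    rw [ContinuousMap.norm_le _ zero_le_one]
    intro w
    have := (hf01 w).1; have := (hf01 w).2
    simp only [hg, ContinuousMap.sub_apply, ContinuousMap.smul_apply,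
      ContinuousMap.one_apply, smul_eq_mul, Real.norm_eq_abs]
    rw [abs_le]; constructor <;> linarith
  have hval : (evalδ y - evalδ z) g = 2 := by
    have h1 : f y = 1 := hf1 (Set.mem_singleton y)
    have h2 : f z = 0 := hf0 (Set.mem_singleton z)
    simp [hg, ContinuousMap.sub_apply, h1, h2]
  calc (2:ℝ) = (evalδ y - evalδ z) g := hval.symm
    _ ≤ ‖(evalδ y - evalδ z) g‖ := le_abs_self _
    _ ≤ ‖evalδ y - evalδ z‖ * ‖g‖ := ContinuousLinearMap.le_opNorm _ _
    _ ≤ ‖evalδ y - evalδ z‖ * 1 := by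
        apply mul_le_mul_of_nonneg_left hgnorm (by positivity)
    _ = ‖evalδ y - evalδ z‖ := mul_one _

lemma finite_of_separated {α : Type*} [MetricSpace α] {P S : Set α}
    (hP : IsCompact P) (hSP : S ⊆ P)
    (hsep : ∀ a ∈ S, ∀ b ∈ S, a ≠ b → 2 ≤ dist a b) : S.Finite := by
  obtain ⟨t, htf, hcov⟩ := Metric.totallyBounded_iff.1 hP.totallyBounded 1 zero_lt_one
  have : S ⊆ ⋃ y ∈ t, S ∩ Metric.ball y 1 := by
    intro a ha
    obtain ⟨y, hy, hay⟩ := by simpa using hcov (hSP ha)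
    exact Set.mem_biUnion hy ⟨ha, hay⟩
  refine Set.Finite.subset (Set.Finite.biUnion htf (fun y _ => ?_)) this
  apply Set.Subsingleton.finite
  intro a ha b hb
  by_contra hne
  have := hsep a ha.1 b hb.1 hne
  have h1 : dist a y < 1 := by simpa [Metric.mem_ball] using ha.2
  have h2 : dist b y < 1 := by simpa [Metric.mem_ball] using hb.2
  have := dist_triangle a y b
  rw [dist_comm y b] at this
  linarith

lemma discrete_of_locally_finite {D : Set K}
    (h : ∀ x ∈ D, ∃ W : Set K, IsOpen W ∧ x ∈ W ∧ (D ∩ W).Finite) :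
    DiscreteTopology D := by
  rw [discreteTopology_iff_isOpen_singleton]
  rintro ⟨x, hx⟩
  obtain ⟨W, hWopen, hxW, hfin⟩ := h x hx
  have hclosed : IsClosed ((D ∩ W) \ {x}) := (hfin.subset diff_subset).isClosed
  set W' : Set K := W \ ((D ∩ W) \ {x}) with hW'
  have hW'open : IsOpen W' := hWopen.sdiff hclosed
  have : {(⟨x, hx⟩ : D)} = Subtype.val ⁻¹' W' := by
    ext ⟨b, hb⟩
    simp only [Set.mem_singleton_iff, Set.mem_preimage, Subtype.mk_eq_mk]
    constructor
    · rintro rfl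
      exact ⟨hxW, fun hmem => hmem.2 rfl⟩
    · rintro ⟨hbW, hbne⟩
      by_contra hne
      exact hbne ⟨⟨hb, hbW⟩, hne⟩
  rw [this]
  exact hW'open.preimage continuous_subtype_val

lemma continuous_delta_weak : Continuous (fun y : K => StrongDual.toWeakDual (evalδ y)) := by
  apply WeakBilin.continuous_of_continuous_eval
  intro f
  exact f.continuous

end Aux

theorem stmt18 {K : Type*} [TopologicalSpace K] [CompactSpace K] [T2Space K]
    (B : Set (StrongDual ℝ C(K, ℝ)))
    (hB : IsBoundaryFor (fun f : C(K, ℝ) => ‖f‖) B)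
    (E : ℕ → Set (StrongDual ℝ C(K, ℝ))) (hE : ∀ n, IsWeakStarLRC (E n))
    (hcov : B ⊆ ⋃ n, E n)
    (hKσ : IsWeakStarSigmaCompact (⋃ n, E n)) :
    ∃ D : ℕ → Set K, (Set.univ : Set K) = ⋃ n, D n ∧ ∀ n, DiscreteTopology (D n) := by
  obtain ⟨C, hCcomp, hCeq⟩ := hKσ
  have hBle : ∀ μ ∈ B, ∀ g : C(K,ℝ), μ g ≤ ‖g‖ := hB.1
  have hBC : ∀ μ ∈ B, ∃ m, StrongDual.toWeakDual μ ∈ C m := by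
    intro μ hμ
    have : StrongDual.toWeakDual μ ∈ (fun f : StrongDual ℝ C(K,ℝ) => StrongDual.toWeakDual f) '' (⋃ n, E n) :=
      ⟨μ, hcov hμ, rfl⟩
    rw [hCeq] at this
    exact mem_iUnion.1 this
  have hmain : ∀ x : K, ∃ n, evalδ x ∈ E n := by
    intro x
    obtain ⟨m, hm⟩ := exists_good_compact B hBle hB.2 C hBC x
    have hδ : StrongDual.toWeakDual (evalδ x) ∈ C m :=
      delta_mem_of_peaks x B hBle (C m) (hCcomp m) hm
    have hmem : StrongDual.toWeakDual (evalδ x) ∈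
        (fun f : StrongDual ℝ C(K,ℝ) => StrongDual.toWeakDual f) '' (⋃ n, E n) := by
      rw [hCeq]; exact mem_iUnion.2 ⟨m, hδ⟩
    obtain ⟨ν, hν, hνe⟩ := hmem
    have hν2 : ν = evalδ x := (StrongDual.toWeakDual_inj ν (evalδ x)).1 hνe
    exact mem_iUnion.1 (hν2 ▸ hν)
  refine ⟨fun n => {x | evalδ x ∈ E n}, ?_, ?_⟩
  · ext x
    simp only [mem_univ, true_iff, mem_iUnion]
    exact hmain x
  · intro n
    apply discrete_of_locally_finite
    intro x hx
    obtain ⟨U, hUopen, hUx, hUcomp⟩ := hE n (evalδ x) hx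
    refine ⟨(fun y : K => StrongDual.toWeakDual (evalδ y)) ⁻¹' U,
      hUopen.preimage continuous_delta_weak, hUx, ?_⟩
    set S := {x : K | evalδ x ∈ E n} ∩ (fun y : K => StrongDual.toWeakDual (evalδ y)) ⁻¹' U with hS
    have himfin : (evalδ '' S).Finite := by
      apply finite_of_separated hUcomp
      · rintro a ⟨y, hy, rfl⟩
        exact subset_closure ⟨hy.1, hy.2⟩
      · rintro a ⟨y, _, rfl⟩ b ⟨z, _, rfl⟩ hne
        have hyz : y ≠ z := by rintro rfl; exact hne rfl
        rw [dist_eq_norm]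
        exact delta_sep hyz
    apply Set.Finite.of_finite_image himfin
    intro y hy z hz hyz
    by_contra hne
    have := delta_sep (y := y) (z := z) hne
    rw [hyz] at this
    simp at this
    rw [ContinuousLinearMap.opNorm_zero] at this
    linarith

end
end
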